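/- arXiv:2303.14821 — 6 statements merged into one kernel-verified Lean document; each statement's English description precedes it below -/
import Mathlib

section
/- Let n ≥ 1 and consider the quiver 1 → 3 ← 2 with dimension vector (n₁, n₂, n₃) = (n, n, n). A weight σ = (σ₁, σ₂, σ₃) ∈ ℤ³ admits a nonzero semi-invariant polynomial if and only if σ₁ ≥ 0, σ₂ ≥ 0, and σ₁ + σ₂ + σ₃ = 0. -/
/-- Variables: entries of the matrix pair `(A, B)` with `A : n₃ × n₁` and `B : n₃ × n₂`. -/
abbrev TriVars (n₁ n₂ n₃ : ℕ) := (Fin n₃ × Fin n₁) ⊕ (Fin n₃ × Fin n₂)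

/-- Evaluate a polynomial in the matrix entries at `(A, B)`. -/
noncomputable def triEval {n₁ n₂ n₃ : ℕ} (f : MvPolynomial (TriVars n₁ n₂ n₃) ℂ)
    (A : Matrix (Fin n₃) (Fin n₁) ℂ) (B : Matrix (Fin n₃) (Fin n₂) ℂ) : ℂ :=
  MvPolynomial.eval (Sum.elim (fun p => A p.1 p.2) (fun p => B p.1 p.2)) f

/-- `f` is a semi-invariant of weight `(σ₁, σ₂, σ₃)` for the quiver `1 → 3 ← 2`. -/
def IsTriSemiInvariant {n₁ n₂ n₃ : ℕ} (σ₁ σ₂ σ₃ : ℤ)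
    (f : MvPolynomial (TriVars n₁ n₂ n₃) ℂ) : Prop :=
  ∀ (g₁ : (Matrix (Fin n₁) (Fin n₁) ℂ)ˣ) (g₂ : (Matrix (Fin n₂) (Fin n₂) ℂ)ˣ)
    (g₃ : (Matrix (Fin n₃) (Fin n₃) ℂ)ˣ)
    (A : Matrix (Fin n₃) (Fin n₁) ℂ) (B : Matrix (Fin n₃) (Fin n₂) ℂ),
    triEval f ((g₃ : Matrix (Fin n₃) (Fin n₃) ℂ) * A * (g₁⁻¹ : Matrix (Fin n₁) (Fin n₁) ℂ))
              ((g₃ : Matrix (Fin n₃) (Fin n₃) ℂ) * B * (g₂⁻¹ : Matrix (Fin n₂) (Fin n₂) ℂ))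
      = (g₁ : Matrix (Fin n₁) (Fin n₁) ℂ).det ^ (-σ₁)
        * (g₂ : Matrix (Fin n₂) (Fin n₂) ℂ).det ^ (-σ₂)
        * (g₃ : Matrix (Fin n₃) (Fin n₃) ℂ).det ^ (-σ₃)
        * triEval f A B

open MvPolynomial Matrix

section Aux

/-- The scalar matrix unit `t • 1`. -/
noncomputable def scU (n : ℕ) (t : ℂˣ) : (Matrix (Fin n) (Fin n) ℂ)ˣ :=
  Units.map (Matrix.scalar (Fin n)).toMonoidHom t

lemma scU_coe (n : ℕ) (t : ℂˣ) :
    ((scU n t : (Matrix (Fin n) (Fin n) ℂ)ˣ) : Matrix (Fin n) (Fin n) ℂ) = (t : ℂ) • 1 := by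
  simp [scU, Matrix.scalar, smul_eq_diagonal_mul]

lemma scU_inv (n : ℕ) (t : ℂˣ) : (scU n t)⁻¹ = scU n t⁻¹ := by
  simp [scU]

lemma scU_det (n : ℕ) (t : ℂˣ) :
    ((scU n t : (Matrix (Fin n) (Fin n) ℂ)ˣ) : Matrix (Fin n) (Fin n) ℂ).det = (t : ℂ) ^ n := by
  rw [scU_coe, Matrix.det_smul, Matrix.det_one]
  simp

/-- If a polynomial agrees with `s ^ k * c` for all nonzero `s` and `c ≠ 0`, then `k ≥ 0`. -/
lemma nonneg_exponent_of_poly (c : ℂ) (hc : c ≠ 0) (k : ℤ) (P : Polynomial ℂ)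
    (h : ∀ s : ℂ, s ≠ 0 → Polynomial.eval s P = s ^ k * c) : 0 ≤ k := by
  by_contra hk
  push_neg at hk
  set m : ℕ := k.natAbs with hm
  have hkm : k = -(m : ℤ) := by omega
  have hm0 : m ≠ 0 := by omega
  set Q : Polynomial ℂ := Polynomial.X ^ m * P - Polynomial.C c with hQ
  have hroot : ∀ s : ℂ, s ≠ 0 → Polynomial.IsRoot Q s := by
    intro s hs
    have := h s hs
    simp only [Polynomial.IsRoot, hQ, Polynomial.eval_sub, Polynomial.eval_mul,
      Polynomial.eval_pow, Polynomial.eval_X, Polynomial.eval_C, this, hkm]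
    rw [_root_.zpow_neg, zpow_natCast]
    field_simp
    ring
  have hQ0 : Q = 0 := by
    apply Polynomial.eq_zero_of_infinite_isRoot
    apply Set.Infinite.mono (s := {x : ℂ | x ≠ 0})
    · intro x hx; exact hroot x hx
    · exact (Set.finite_singleton (0:ℂ)).infinite_compl
  have := congrArg (Polynomial.eval 0) hQ0
  simp [hQ, zero_pow hm0] at this
  exact hc this

/-- The determinant of the `A`-matrix of variables, as a polynomial. -/
noncomputable def detPolyA (n : ℕ) : MvPolynomial (TriVars n n n) ℂ :=
  (Matrix.of fun i j => (X (Sum.inl (i, j)) : MvPolynomial (TriVars n n n) ℂ)).det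

/-- The determinant of the `B`-matrix of variables, as a polynomial. -/
noncomputable def detPolyB (n : ℕ) : MvPolynomial (TriVars n n n) ℂ :=
  (Matrix.of fun i j => (X (Sum.inr (i, j)) : MvPolynomial (TriVars n n n) ℂ)).det

lemma triEval_detPolyA (n : ℕ) (A B : Matrix (Fin n) (Fin n) ℂ) :
    triEval (detPolyA n) A B = A.det := by
  rw [triEval, detPolyA, RingHom.map_det]
  congr 1
  ext i j
  simp

lemma triEval_detPolyB (n : ℕ) (A B : Matrix (Fin n) (Fin n) ℂ) :
    triEval (detPolyB n) A B = B.det := by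
  rw [triEval, detPolyB, RingHom.map_det]
  congr 1
  ext i j
  simp

lemma triEval_mul {n : ℕ} (f g : MvPolynomial (TriVars n n n) ℂ)
    (A B : Matrix (Fin n) (Fin n) ℂ) :
    triEval (f * g) A B = triEval f A B * triEval g A B := by
  simp [triEval]

lemma triEval_pow {n : ℕ} (f : MvPolynomial (TriVars n n n) ℂ) (k : ℕ)
    (A B : Matrix (Fin n) (Fin n) ℂ) :
    triEval (f ^ k) A B = triEval f A B ^ k := by
  simp [triEval]

/-- Specializing the `A`-variables along a line gives a one-variable polynomial. -/
lemma polyA_eval {n : ℕ} (f : MvPolynomial (TriVars n n n) ℂ)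
    (A B : Matrix (Fin n) (Fin n) ℂ) (s : ℂ) :
    Polynomial.eval s (MvPolynomial.aeval (Sum.elim
        (fun p : Fin n × Fin n => Polynomial.C (A p.1 p.2) * Polynomial.X)
        (fun p : Fin n × Fin n => Polynomial.C (B p.1 p.2))) f)
      = triEval f (s • A) B := by
  rw [triEval, MvPolynomial.aeval_def, ← Polynomial.coe_evalRingHom,
    MvPolynomial.eval₂_comp_left, MvPolynomial.eval]
  congr 1
  · ext a; simp
  · funext v; rcases v with ⟨i, j⟩ | ⟨i, j⟩ <;>
      simp only [Function.comp_apply, Sum.elim_inl, Sum.elim_inr, Polynomial.coe_evalRingHom,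
        Polynomial.eval_mul, Polynomial.eval_C, Polynomial.eval_X, Matrix.smul_apply,
        smul_eq_mul, mul_comm]

/-- Specializing the `B`-variables along a line gives a one-variable polynomial. -/
lemma polyB_eval {n : ℕ} (f : MvPolynomial (TriVars n n n) ℂ)
    (A B : Matrix (Fin n) (Fin n) ℂ) (s : ℂ) :
    Polynomial.eval s (MvPolynomial.aeval (Sum.elim
        (fun p : Fin n × Fin n => Polynomial.C (A p.1 p.2))
        (fun p : Fin n × Fin n => Polynomial.C (B p.1 p.2) * Polynomial.X)) f)
      = triEval f A (s • B) := by
  rw [triEval, MvPolynomial.aeval_def, ← Polynomial.coe_evalRingHom,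
    MvPolynomial.eval₂_comp_left, MvPolynomial.eval]
  congr 1
  · ext a; simp
  · funext v; rcases v with ⟨i, j⟩ | ⟨i, j⟩ <;>
      simp only [Function.comp_apply, Sum.elim_inl, Sum.elim_inr, Polynomial.coe_evalRingHom,
        Polynomial.eval_mul, Polynomial.eval_C, Polynomial.eval_X, Matrix.smul_apply,
        smul_eq_mul, mul_comm]

end Aux

/-- for the quiver `1 → 3 ← 2` with dimension vector `(n, n, n)`, a weight
`(σ₁, σ₂, σ₃)` admits a nonzero semi-invariant iff `σ₁ ≥ 0`, `σ₂ ≥ 0`, `σ₁ + σ₂ + σ₃ = 0`. -/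
theorem tri_semiinvariant_iff_nnn (n : ℕ) (hn : 1 ≤ n) (σ₁ σ₂ σ₃ : ℤ) :
    (∃ f : MvPolynomial (TriVars n n n) ℂ, f ≠ 0 ∧ IsTriSemiInvariant σ₁ σ₂ σ₃ f)
      ↔ (0 ≤ σ₁ ∧ 0 ≤ σ₂ ∧ σ₁ + σ₂ + σ₃ = 0) := by
  constructor
  · rintro ⟨f, hf, hsi⟩
    -- find a point where f is nonzero
    have hx : ∃ x : TriVars n n n → ℂ, MvPolynomial.eval x f ≠ 0 := by
      by_contra hcon
      push_neg at hcon
      exact hf (MvPolynomial.funext fun x => by simp [hcon x])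
    obtain ⟨x, hx⟩ := hx
    set A : Matrix (Fin n) (Fin n) ℂ := Matrix.of fun i j => x (Sum.inl (i, j)) with hA
    set B : Matrix (Fin n) (Fin n) ℂ := Matrix.of fun i j => x (Sum.inr (i, j)) with hB
    have hfn : (Sum.elim (fun p : Fin n × Fin n => A p.1 p.2)
        (fun p : Fin n × Fin n => B p.1 p.2)) = x := by
      funext v
      rcases v with ⟨i, j⟩ | ⟨i, j⟩ <;> rfl
    have hAB : triEval f A B = MvPolynomial.eval x f := by rw [triEval, hfn]
    set c : ℂ := triEval f A B with hc
    have hc0 : c ≠ 0 := by rw [hAB]; exact hx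
    -- scaling A
    have hscaleA : ∀ s : ℂ, s ≠ 0 → triEval f (s • A) B = s ^ ((n : ℤ) * σ₁) * c := by
      intro s hs
      have key := hsi (scU n (Units.mk0 s hs))⁻¹ 1 1 A B
      simp only [← Matrix.coe_units_inv, inv_inv, inv_one, Units.val_one, Matrix.one_mul,
        Matrix.mul_one, Matrix.det_one, _root_.one_zpow, one_mul, mul_one] at key
      rw [scU_coe, scU_inv, scU_det, Matrix.mul_smul, Matrix.mul_one] at key
      simp only [Units.val_inv_eq_inv_val, Units.val_mk0] at key
      rw [key]
      congr 1
      rw [← zpow_natCast (s⁻¹), ← _root_.zpow_mul, _root_.inv_zpow']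
      congr 1
      ring
    -- scaling B
    have hscaleB : ∀ s : ℂ, s ≠ 0 → triEval f A (s • B) = s ^ ((n : ℤ) * σ₂) * c := by
      intro s hs
      have key := hsi 1 (scU n (Units.mk0 s hs))⁻¹ 1 A B
      simp only [← Matrix.coe_units_inv, inv_inv, inv_one, Units.val_one, Matrix.one_mul,
        Matrix.mul_one, Matrix.det_one, _root_.one_zpow, one_mul, mul_one] at key
      rw [scU_coe, scU_inv, scU_det, Matrix.mul_smul, Matrix.mul_one] at key
      simp only [Units.val_inv_eq_inv_val, Units.val_mk0] at key
      rw [key]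
      congr 1
      rw [← zpow_natCast (s⁻¹), ← _root_.zpow_mul, _root_.inv_zpow']
      congr 1
      ring
    have h1 : 0 ≤ (n : ℤ) * σ₁ := by
      apply nonneg_exponent_of_poly c hc0 _ (MvPolynomial.aeval (Sum.elim
        (fun p : Fin n × Fin n => Polynomial.C (A p.1 p.2) * Polynomial.X)
        (fun p : Fin n × Fin n => Polynomial.C (B p.1 p.2))) f)
      intro s hs
      rw [polyA_eval]
      exact hscaleA s hs
    have h2 : 0 ≤ (n : ℤ) * σ₂ := by
      apply nonneg_exponent_of_poly c hc0 _ (MvPolynomial.aeval (Sum.elim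
        (fun p : Fin n × Fin n => Polynomial.C (A p.1 p.2))
        (fun p : Fin n × Fin n => Polynomial.C (B p.1 p.2) * Polynomial.X)) f)
      intro s hs
      rw [polyB_eval]
      exact hscaleB s hs
    have hnpos : (0 : ℤ) < n := by exact_mod_cast hn
    have hσ₁ : 0 ≤ σ₁ := le_of_mul_le_mul_left (by simpa using h1) hnpos
    have hσ₂ : 0 ≤ σ₂ := le_of_mul_le_mul_left (by simpa using h2) hnpos
    -- sum is zero
    have h2ne : (2 : ℂ) ≠ 0 := by norm_num
    have key := hsi (scU n (Units.mk0 2 h2ne)) (scU n (Units.mk0 2 h2ne))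
      (scU n (Units.mk0 2 h2ne)) A B
    simp only [← Matrix.coe_units_inv] at key
    rw [scU_inv] at key
    simp only [scU_coe, Units.val_inv_eq_inv_val, Units.val_mk0, Matrix.smul_mul,
      Matrix.mul_smul, Matrix.mul_one, Matrix.one_mul, smul_smul, Matrix.det_smul,
      Matrix.det_one, Fintype.card_fin, mul_one] at key
    simp only [inv_mul_cancel₀ h2ne, one_smul] at key
    -- key : c = (2^n)^(-σ₁) * (2^n)^(-σ₂) * (2^n)^(-σ₃) * c  (roughly)
    have hw : ((2 : ℂ) ^ n) ≠ 0 := pow_ne_zero _ h2ne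
    have hprod : ((2:ℂ) ^ n) ^ (-σ₁) * ((2:ℂ) ^ n) ^ (-σ₂) * ((2:ℂ) ^ n) ^ (-σ₃) = 1 := by
      have hkey : ((2:ℂ) ^ n) ^ (-σ₁) * ((2:ℂ) ^ n) ^ (-σ₂) * ((2:ℂ) ^ n) ^ (-σ₃) * c
          = 1 * c := by rw [one_mul, ← key, hc]
      exact mul_right_cancel₀ hc0 hkey
    rw [← zpow_add₀ hw, ← zpow_add₀ hw] at hprod
    have habs : ((2 : ℝ) ^ n) ^ (-σ₁ + -σ₂ + -σ₃) = 1 := by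
      have := congrArg (fun z : ℂ => ‖z‖) hprod
      simpa [map_zpow₀, map_pow, norm_zpow, norm_pow] using this
    have hn1 : (1:ℝ) < 2 ^ n := by
      calc (1:ℝ) < 2 := by norm_num
      _ ≤ 2 ^ n := by
        calc (2:ℝ) = 2 ^ 1 := (pow_one 2).symm
        _ ≤ 2 ^ n := pow_le_pow_right₀ (by norm_num) hn
    have hsum : -σ₁ + -σ₂ + -σ₃ = 0 := by
      have := zpow_right_injective₀ (by positivity : (0:ℝ) < 2 ^ n) (ne_of_gt hn1)
      have h0 : ((2:ℝ) ^ n) ^ (-σ₁ + -σ₂ + -σ₃) = ((2:ℝ) ^ n) ^ (0:ℤ) := by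
        rw [habs, zpow_zero]
      exact this h0
    exact ⟨hσ₁, hσ₂, by omega⟩
  · rintro ⟨hσ₁, hσ₂, hsum⟩
    set a : ℕ := σ₁.toNat with ha
    set b : ℕ := σ₂.toNat with hb
    have haσ : (a : ℤ) = σ₁ := Int.toNat_of_nonneg hσ₁
    have hbσ : (b : ℤ) = σ₂ := Int.toNat_of_nonneg hσ₂
    refine ⟨detPolyA n ^ a * detPolyB n ^ b, ?_, ?_⟩
    · intro hzero
      have : triEval (detPolyA n ^ a * detPolyB n ^ b) 1 1 = 0 := by
        rw [hzero]; simp [triEval]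
      rw [triEval_mul, triEval_pow, triEval_pow, triEval_detPolyA, triEval_detPolyB] at this
      simp at this
    · intro g₁ g₂ g₃ A B
      rw [triEval_mul, triEval_pow, triEval_pow, triEval_detPolyA, triEval_detPolyB,
        triEval_mul, triEval_pow, triEval_pow, triEval_detPolyA, triEval_detPolyB]
      set d₁ : ℂ := (g₁ : Matrix (Fin n) (Fin n) ℂ).det with hd₁
      set d₂ : ℂ := (g₂ : Matrix (Fin n) (Fin n) ℂ).det with hd₂
      set d₃ : ℂ := (g₃ : Matrix (Fin n) (Fin n) ℂ).det with hd₃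
      have hd₁0 : d₁ ≠ 0 := (Matrix.isUnit_iff_isUnit_det _).mp g₁.isUnit |>.ne_zero
      have hd₂0 : d₂ ≠ 0 := (Matrix.isUnit_iff_isUnit_det _).mp g₂.isUnit |>.ne_zero
      have hi₁ : ((g₁⁻¹ : Matrix (Fin n) (Fin n) ℂ)).det = d₁⁻¹ := by
        rw [Matrix.det_nonsing_inv, Ring.inverse_eq_inv']
      have hi₂ : ((g₂⁻¹ : Matrix (Fin n) (Fin n) ℂ)).det = d₂⁻¹ := by
        rw [Matrix.det_nonsing_inv, Ring.inverse_eq_inv']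
      rw [Matrix.det_mul, Matrix.det_mul, Matrix.det_mul, Matrix.det_mul, hi₁, hi₂]
      have hσ₁' : -σ₁ = -(a : ℤ) := by omega
      have hσ₂' : -σ₂ = -(b : ℤ) := by omega
      have hσ₃' : -σ₃ = ((a + b : ℕ) : ℤ) := by push_cast; omega
      rw [hσ₁', hσ₂', hσ₃', _root_.zpow_neg, _root_.zpow_neg, zpow_natCast, zpow_natCast,
        zpow_natCast, ← inv_pow, ← inv_pow, pow_add]
      ring
end

section
/- Let n, m ≥ 1 with m ≠ n, and consider the quiver 1 → 3 ← 2 with dimension vector (n₁, n₂, n₃) = (n, m, n). A weight σ = (σ₁, σ₂, σ₃) ∈ ℤ³ admits a nonzero semi-invariant polynomial if and only if σ₁ ≥ 0, σ₂ = 0, and σ₁ + σ₃ = 0. -/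
/-! ### Auxiliary material -/

open Matrix MvPolynomial

noncomputable section TriAux

def triScalarUnit (k : ℕ) (c : ℂ) (hc : c ≠ 0) : (Matrix (Fin k) (Fin k) ℂ)ˣ where
  val := c • 1
  inv := c⁻¹ • 1
  val_inv := by rw [Matrix.smul_mul, Matrix.one_mul, smul_smul, mul_inv_cancel₀ hc, one_smul]
  inv_val := by rw [Matrix.smul_mul, Matrix.one_mul, smul_smul, inv_mul_cancel₀ hc, one_smul]

lemma triVecMulVec_mul_vecMulVec {k : ℕ} (u v u' v' : Fin k → ℂ) :
    vecMulVec v u * vecMulVec v' u' = (u ⬝ᵥ v') • vecMulVec v u' := by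
  ext i j
  simp only [Matrix.mul_apply, vecMulVec_apply, Matrix.smul_apply, smul_eq_mul, dotProduct,
    Finset.sum_mul]
  exact Finset.sum_congr rfl fun x _ => by ring

lemma tri_one_add_smul_mul {k : ℕ} (a b : ℂ) (M : Matrix (Fin k) (Fin k) ℂ)
    (hM : M * M = M) (hab : a + b + a * b = 0) : (1 + a • M) * (1 + b • M) = 1 := by
  have h : (1 + a • M) * (1 + b • M) = 1 + (b + a + a * b) • M := by
    simp only [add_mul, mul_add, Matrix.one_mul, Matrix.mul_one, Matrix.mul_smul,
      Matrix.smul_mul, smul_smul, hM, add_smul, mul_comm b a]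
    abel
  rw [h]
  have h2 : b + a + a * b = 0 := by linear_combination hab
  rw [h2, zero_smul, add_zero]

def triRankOneUnit {k : ℕ} (u v : Fin k → ℂ) (huv : u ⬝ᵥ v = 1) (t : ℂ) (ht : t ≠ 0) :
    (Matrix (Fin k) (Fin k) ℂ)ˣ where
  val := 1 + (t - 1) • vecMulVec v u
  inv := 1 + (t⁻¹ - 1) • vecMulVec v u
  val_inv := by
    apply tri_one_add_smul_mul
    · rw [triVecMulVec_mul_vecMulVec, huv, one_smul]
    · field_simp
      ring
  inv_val := by
    apply tri_one_add_smul_mul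
    · rw [triVecMulVec_mul_vecMulVec, huv, one_smul]
    · field_simp
      ring

lemma triRankOneUnit_det {k : ℕ} (u v : Fin k → ℂ) (huv : u ⬝ᵥ v = 1) (t : ℂ) (ht : t ≠ 0) :
    ((triRankOneUnit u v huv t ht : (Matrix (Fin k) (Fin k) ℂ)ˣ) :
      Matrix (Fin k) (Fin k) ℂ).det = t := by
  show (1 + (t - 1) • vecMulVec v u).det = t
  have h1 : (t - 1) • vecMulVec v u = vecMulVec ((t - 1) • v) u := by
    ext i j; simp [vecMulVec_apply, mul_assoc]
  rw [h1, vecMulVec_eq Unit, det_one_add_replicateCol_mul_replicateRow, dotProduct_smul, huv]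
  simp

lemma tri_exists_kernel {k l : ℕ} (hkl : k < l) (B : Matrix (Fin k) (Fin l) ℂ) :
    ∃ v : Fin l → ℂ, v ≠ 0 ∧ B.mulVec v = 0 := by
  have hni : ¬ Function.Injective (Matrix.mulVecLin B) := by
    intro h
    have := LinearMap.finrank_le_finrank_of_injective h
    simp [Module.finrank_pi] at this
    omega
  rw [injective_iff_map_eq_zero'] at hni
  push_neg at hni
  obtain ⟨v, hv⟩ := hni
  rcases hv with ⟨h1, h2⟩ | ⟨h1, h2⟩
  · exact ⟨v, h2, h1⟩
  · exact absurd (by rw [h2, map_zero]) h1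

lemma tri_dual_vec {k : ℕ} (v : Fin k → ℂ) (hv : v ≠ 0) :
    ∃ u : Fin k → ℂ, u ⬝ᵥ v = 1 := by
  obtain ⟨i, hi⟩ := Function.ne_iff.mp hv
  refine ⟨fun j => if j = i then (v i)⁻¹ else 0, ?_⟩
  simp only [dotProduct, ite_mul, zero_mul, Finset.sum_ite_eq', Finset.mem_univ, if_true]
  exact inv_mul_cancel₀ (by simpa using hi)

lemma tri_dual_vec' {k : ℕ} (u : Fin k → ℂ) (hu : u ≠ 0) :
    ∃ v : Fin k → ℂ, u ⬝ᵥ v = 1 := by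
  obtain ⟨w, hw⟩ := tri_dual_vec u hu
  exact ⟨w, by rwa [dotProduct_comm]⟩

lemma tri_mul_vecMulVec_eq_zero {k l : ℕ} (B : Matrix (Fin k) (Fin l) ℂ)
    (v : Fin l → ℂ) (u : Fin l → ℂ) (hv : B.mulVec v = 0) :
    B * vecMulVec v u = 0 := by
  ext i j
  have := congrFun hv i
  simp only [Matrix.mulVec, dotProduct, Pi.zero_apply] at this
  simp only [Matrix.mul_apply, vecMulVec_apply, Matrix.zero_apply, ← mul_assoc,
    ← Finset.sum_mul, this, zero_mul]

lemma tri_vecMulVec_mul_eq_zero {k l : ℕ} (B : Matrix (Fin k) (Fin l) ℂ)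
    (v : Fin k → ℂ) (u : Fin k → ℂ) (hu : Matrix.vecMul u B = 0) :
    vecMulVec v u * B = 0 := by
  ext i j
  have := congrFun hu j
  simp only [Matrix.vecMul, dotProduct, Pi.zero_apply] at this
  simp only [Matrix.mul_apply, vecMulVec_apply, Matrix.zero_apply, mul_assoc,
    ← Finset.mul_sum, this, mul_zero]

lemma tri_zpow_all_eq_one {k : ℤ} (h : ∀ c : ℂ, c ≠ 0 → c ^ k = 1) : k = 0 := by
  have h2 := h 2 two_ne_zero
  have habs : ‖(2:ℂ) ^ k‖ = 1 := by rw [h2]; simp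
  rw [norm_zpow] at habs
  simp only [Complex.norm_two] at habs
  exact zpow_right_injective₀ (a := (2:ℝ)) (by norm_num) (by norm_num)
    (a₁ := k) (a₂ := 0) (by simpa using habs)

lemma triEval_exists_ne_zero {n₁ n₂ n₃ : ℕ} (f : MvPolynomial (TriVars n₁ n₂ n₃) ℂ)
    (hf : f ≠ 0) : ∃ A B, triEval f A B ≠ 0 := by
  by_contra h
  push_neg at h
  apply hf
  apply MvPolynomial.funext
  intro x
  have := h (fun i j => x (Sum.inl (i, j))) (fun i j => x (Sum.inr (i, j)))
  simp only [triEval] at this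
  rw [map_zero, show x = (Sum.elim (fun p : Fin n₃ × Fin n₁ => x (Sum.inl (p.1, p.2)))
    (fun p : Fin n₃ × Fin n₂ => x (Sum.inr (p.1, p.2)))) from by
      funext w; rcases w with p | p <;> rfl]
  exact this

lemma tri_exp_nonneg {n₁ n₂ n₃ : ℕ} (f : MvPolynomial (TriVars n₁ n₂ n₃) ℂ)
    (A₀ : Matrix (Fin n₃) (Fin n₁) ℂ) (B₀ : Matrix (Fin n₃) (Fin n₂) ℂ)
    (h0 : triEval f A₀ B₀ ≠ 0) (d : ℤ)
    (h : ∀ c : ℂ, c ≠ 0 → triEval f (c • A₀) B₀ = c ^ d * triEval f A₀ B₀) : 0 ≤ d := by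
  by_contra hd
  push_neg at hd
  set g : TriVars n₁ n₂ n₃ → Polynomial ℂ :=
    Sum.elim (fun p => Polynomial.C (A₀ p.1 p.2) * Polynomial.X)
      (fun p => Polynomial.C (B₀ p.1 p.2)) with hg
  set P : Polynomial ℂ := MvPolynomial.eval₂ Polynomial.C g f with hPdef
  have hP : ∀ c : ℂ, Polynomial.eval c P = triEval f (c • A₀) B₀ := by
    intro c
    have h1 : Polynomial.eval c P =
        (Polynomial.evalRingHom c) (MvPolynomial.eval₂ Polynomial.C g f) := rfl
    rw [h1, MvPolynomial.eval₂_comp_left]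
    have h2 : (Polynomial.evalRingHom c).comp Polynomial.C = RingHom.id ℂ := by
      ext a; simp
    have h3 : (⇑(Polynomial.evalRingHom c) ∘ g) =
        Sum.elim (fun p : Fin n₃ × Fin n₁ => (c • A₀) p.1 p.2)
          (fun p : Fin n₃ × Fin n₂ => B₀ p.1 p.2) := by
      funext w
      rcases w with p | p <;>
        simp only [Function.comp_apply, hg, Sum.elim_inl, Sum.elim_inr, Matrix.smul_apply,
          smul_eq_mul, Polynomial.coe_evalRingHom, Polynomial.eval_mul, Polynomial.eval_C,
          Polynomial.eval_X, mul_comm]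
    rw [h2, h3, triEval]
    rfl
  set f₀ : ℂ := triEval f A₀ B₀ with hf₀
  set Q : Polynomial ℂ := Polynomial.X ^ d.natAbs * P - Polynomial.C f₀ with hQ
  have hQroot : ∀ c : ℂ, c ≠ 0 → Polynomial.eval c Q = 0 := by
    intro c hc
    have hd' : (d.natAbs : ℤ) = -d := Int.ofNat_natAbs_of_nonpos hd.le
    simp only [hQ, Polynomial.eval_sub, Polynomial.eval_mul, Polynomial.eval_pow,
      Polynomial.eval_X, Polynomial.eval_C, hP, h c hc]
    rw [← zpow_natCast c d.natAbs, hd', ← mul_assoc, ← zpow_add₀ hc, neg_add_cancel,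
      zpow_zero, one_mul, sub_self]
  have hQ0 : Q = 0 := by
    apply Polynomial.eq_zero_of_infinite_isRoot
    exact ((Set.finite_singleton (0:ℂ)).infinite_compl).mono fun x hx => hQroot x hx
  have hev : Polynomial.eval 0 Q = -f₀ := by
    simp [hQ, zero_pow (Int.natAbs_ne_zero.mpr hd.ne)]
  rw [hQ0] at hev
  simp only [Polynomial.eval_zero] at hev
  exact h0 (neg_eq_zero.mp hev.symm)

def triDetX (n m : ℕ) : MvPolynomial (TriVars n m n) ℂ :=
  (Matrix.of fun i j : Fin n => (MvPolynomial.X (Sum.inl (i, j)) :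
    MvPolynomial (TriVars n m n) ℂ)).det

lemma triEval_triDetX {n m : ℕ} (A : Matrix (Fin n) (Fin n) ℂ)
    (B : Matrix (Fin n) (Fin m) ℂ) : triEval (triDetX n m) A B = A.det := by
  rw [triEval, triDetX, RingHom.map_det]
  congr 1
  ext i j
  simp

section Scaling

variable {n₁ n₂ n₃ : ℕ} {σ₁ σ₂ σ₃ : ℤ} {f : MvPolynomial (TriVars n₁ n₂ n₃) ℂ}

lemma tri_scale_A (hf : IsTriSemiInvariant σ₁ σ₂ σ₃ f) (c : ℂ) (hc : c ≠ 0)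
    (A : Matrix (Fin n₃) (Fin n₁) ℂ) (B : Matrix (Fin n₃) (Fin n₂) ℂ) :
    triEval f (c • A) B = c ^ ((n₁ : ℤ) * σ₁) * triEval f A B := by
  have h := hf ((triScalarUnit n₁ c hc)⁻¹) 1 1 A B
  have hco : ((c⁻¹ • 1 : Matrix (Fin n₁) (Fin n₁) ℂ))⁻¹ = c • 1 :=
    Matrix.inv_eq_right_inv (by
      rw [Matrix.smul_mul, Matrix.one_mul, smul_smul, inv_mul_cancel₀ hc, one_smul])
  have hco2 : (((triScalarUnit n₁ c hc)⁻¹ : (Matrix (Fin n₁) (Fin n₁) ℂ)ˣ) :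
      Matrix (Fin n₁) (Fin n₁) ℂ) = c⁻¹ • 1 := rfl
  rw [hco2, hco] at h
  simp only [Units.val_one, inv_one, Matrix.one_mul, Matrix.mul_one, Matrix.det_one,
    _root_.one_zpow, mul_one, one_mul] at h
  rw [Matrix.mul_smul, Matrix.mul_one] at h
  rw [h, Matrix.det_smul, Matrix.det_one, Fintype.card_fin, mul_one, inv_pow,
    _root_.inv_zpow', neg_neg, ← zpow_natCast, ← _root_.zpow_mul]

lemma tri_scale_B (hf : IsTriSemiInvariant σ₁ σ₂ σ₃ f) (c : ℂ) (hc : c ≠ 0)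
    (A : Matrix (Fin n₃) (Fin n₁) ℂ) (B : Matrix (Fin n₃) (Fin n₂) ℂ) :
    triEval f A (c • B) = c ^ ((n₂ : ℤ) * σ₂) * triEval f A B := by
  have h := hf 1 ((triScalarUnit n₂ c hc)⁻¹) 1 A B
  have hco : ((c⁻¹ • 1 : Matrix (Fin n₂) (Fin n₂) ℂ))⁻¹ = c • 1 :=
    Matrix.inv_eq_right_inv (by
      rw [Matrix.smul_mul, Matrix.one_mul, smul_smul, inv_mul_cancel₀ hc, one_smul])
  have hco2 : (((triScalarUnit n₂ c hc)⁻¹ : (Matrix (Fin n₂) (Fin n₂) ℂ)ˣ) :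
      Matrix (Fin n₂) (Fin n₂) ℂ) = c⁻¹ • 1 := rfl
  rw [hco2, hco] at h
  simp only [Units.val_one, inv_one, Matrix.one_mul, Matrix.mul_one, Matrix.det_one,
    _root_.one_zpow, mul_one, one_mul] at h
  rw [Matrix.mul_smul, Matrix.mul_one] at h
  rw [h, Matrix.det_smul, Matrix.det_one, Fintype.card_fin, mul_one, inv_pow,
    _root_.inv_zpow', neg_neg, ← zpow_natCast, ← _root_.zpow_mul]

lemma tri_scale_AB (hf : IsTriSemiInvariant σ₁ σ₂ σ₃ f) (c : ℂ) (hc : c ≠ 0)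
    (A : Matrix (Fin n₃) (Fin n₁) ℂ) (B : Matrix (Fin n₃) (Fin n₂) ℂ) :
    triEval f (c • A) (c • B) = c ^ (-((n₃ : ℤ) * σ₃)) * triEval f A B := by
  have h := hf 1 1 (triScalarUnit n₃ c hc) A B
  have hco : ((triScalarUnit n₃ c hc : (Matrix (Fin n₃) (Fin n₃) ℂ)ˣ) :
      Matrix (Fin n₃) (Fin n₃) ℂ) = c • 1 := rfl
  rw [hco] at h
  simp only [Units.val_one, inv_one, Matrix.one_mul, Matrix.mul_one, Matrix.det_one,
    _root_.one_zpow, mul_one, one_mul] at h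
  rw [Matrix.smul_mul, Matrix.one_mul, Matrix.smul_mul, Matrix.one_mul] at h
  rw [h, Matrix.det_smul, Matrix.det_one, Fintype.card_fin, mul_one, ← zpow_natCast,
    ← _root_.zpow_mul, mul_neg]

end Scaling

end TriAux

/-- for the quiver `1 → 3 ← 2` with dimension vector `(n, m, n)` where `m ≠ n`,
a weight `(σ₁, σ₂, σ₃)` admits a nonzero semi-invariant iff `σ₁ ≥ 0`, `σ₂ = 0`, `σ₁ + σ₃ = 0`. -/
theorem tri_semiinvariant_iff_nmn (n m : ℕ) (hn : 1 ≤ n) (hm : 1 ≤ m) (hnm : m ≠ n)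
    (σ₁ σ₂ σ₃ : ℤ) :
    (∃ f : MvPolynomial (TriVars n m n) ℂ, f ≠ 0 ∧ IsTriSemiInvariant σ₁ σ₂ σ₃ f)
      ↔ (0 ≤ σ₁ ∧ σ₂ = 0 ∧ σ₁ + σ₃ = 0) := by
  have hn' : (0:ℤ) < (n:ℤ) := by exact_mod_cast hn
  have hm' : (0:ℤ) < (m:ℤ) := by exact_mod_cast hm
  constructor
  · rintro ⟨f, hf0, hf⟩
    -- a point where f and det A are both nonzero
    have hD : triDetX n m ≠ 0 := by
      intro h0
      have h1 : triEval (triDetX n m) (1 : Matrix (Fin n) (Fin n) ℂ) 0 = 1 := by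
        rw [triEval_triDetX, Matrix.det_one]
      rw [h0] at h1
      simp [triEval] at h1
    obtain ⟨A₀, B₀, hAB⟩ := triEval_exists_ne_zero (f * triDetX n m) (mul_ne_zero hf0 hD)
    have hmul : triEval (f * triDetX n m) A₀ B₀
        = triEval f A₀ B₀ * triEval (triDetX n m) A₀ B₀ := map_mul _ _ _
    rw [hmul, triEval_triDetX] at hAB
    have hf₀ : triEval f A₀ B₀ ≠ 0 := fun h => hAB (by rw [h, zero_mul])
    have hdetA : A₀.det ≠ 0 := fun h => hAB (by rw [h, mul_zero])
    -- σ₁ ≥ 0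
    have hs1 : 0 ≤ (n:ℤ) * σ₁ :=
      tri_exp_nonneg f A₀ B₀ hf₀ _ (fun c hc => tri_scale_A hf c hc A₀ B₀)
    have hσ1 : 0 ≤ σ₁ := nonneg_of_mul_nonneg_right hs1 hn'
    -- sum relation
    have hsum : (n:ℤ) * σ₁ + (m:ℤ) * σ₂ + (n:ℤ) * σ₃ = 0 := by
      apply tri_zpow_all_eq_one
      intro c hc
      have e2 := tri_scale_AB hf c hc A₀ B₀
      rw [tri_scale_A hf c hc A₀ (c • B₀), tri_scale_B hf c hc A₀ B₀, ← mul_assoc] at e2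
      have e3 : c ^ ((n:ℤ) * σ₁) * c ^ ((m:ℤ) * σ₂) = c ^ (-((n:ℤ) * σ₃)) :=
        mul_right_cancel₀ hf₀ e2
      calc c ^ ((n:ℤ) * σ₁ + (m:ℤ) * σ₂ + (n:ℤ) * σ₃)
          = c ^ ((n:ℤ) * σ₁) * c ^ ((m:ℤ) * σ₂) * c ^ ((n:ℤ) * σ₃) := by
            rw [← zpow_add₀ hc, ← zpow_add₀ hc]
        _ = c ^ (-((n:ℤ) * σ₃)) * c ^ ((n:ℤ) * σ₃) := by rw [e3]
        _ = 1 := by rw [← zpow_add₀ hc, neg_add_cancel, zpow_zero]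
    rcases lt_or_gt_of_ne hnm with hlt | hgt
    · -- m < n : conjugation trick gives σ₁ + σ₃ = 0
      obtain ⟨u, hu0, huB⟩ := tri_exists_kernel hlt B₀ᵀ
      have huB' : Matrix.vecMul u B₀ = 0 := by
        rw [← Matrix.mulVec_transpose]; exact huB
      obtain ⟨v, huv⟩ := tri_dual_vec' u hu0
      obtain ⟨UA, hUA⟩ := (Matrix.isUnit_iff_isUnit_det A₀).mpr (isUnit_iff_ne_zero.mpr hdetA)
      have h13 : σ₁ + σ₃ = 0 := by
        have key : ∀ t : ℂ, t ≠ 0 → t ^ (-(σ₁ + σ₃)) = 1 := by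
          intro t ht
          set g₃ := triRankOneUnit u v huv t ht with hg₃
          set g₁ : (Matrix (Fin n) (Fin n) ℂ)ˣ := UA⁻¹ * g₃ * UA with hg₁
          have hdg3 : (g₃ : Matrix (Fin n) (Fin n) ℂ).det = t := triRankOneUnit_det u v huv t ht
          have hA : (g₃ : Matrix (Fin n) (Fin n) ℂ) * A₀
              * ((g₁ : Matrix (Fin n) (Fin n) ℂ))⁻¹ = A₀ := by
            rw [← Matrix.coe_units_inv]
            have e : g₁⁻¹ = UA⁻¹ * g₃⁻¹ * UA := by rw [hg₁]; group
            rw [e, ← hUA]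
            have e2 : g₃ * UA * (UA⁻¹ * g₃⁻¹ * UA) = UA := by group
            calc (g₃ : Matrix (Fin n) (Fin n) ℂ) * ↑UA * ↑(UA⁻¹ * g₃⁻¹ * UA)
                = ↑(g₃ * UA * (UA⁻¹ * g₃⁻¹ * UA)) := by simp [Units.val_mul, Matrix.mul_assoc]
              _ = ↑UA := by rw [e2]
          have hB : (g₃ : Matrix (Fin n) (Fin n) ℂ) * B₀ = B₀ := by
            show (1 + (t - 1) • vecMulVec v u) * B₀ = B₀
            rw [Matrix.add_mul, Matrix.one_mul, Matrix.smul_mul,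
              tri_vecMulVec_mul_eq_zero B₀ v u huB', smul_zero, add_zero]
          have hdg1 : (g₁ : Matrix (Fin n) (Fin n) ℂ).det = t := by
            have h1 : ((UA⁻¹ : (Matrix (Fin n) (Fin n) ℂ)ˣ) : Matrix (Fin n) (Fin n) ℂ).det
                * ((UA : (Matrix (Fin n) (Fin n) ℂ)ˣ) : Matrix (Fin n) (Fin n) ℂ).det = 1 := by
              rw [← Matrix.det_mul, ← Units.val_mul, inv_mul_cancel, Units.val_one,
                Matrix.det_one]
            rw [hg₁]
            simp only [Units.val_mul, Matrix.det_mul]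
            calc ((UA⁻¹ : (Matrix (Fin n) (Fin n) ℂ)ˣ) : Matrix (Fin n) (Fin n) ℂ).det
                  * (g₃ : Matrix (Fin n) (Fin n) ℂ).det
                  * ((UA : (Matrix (Fin n) (Fin n) ℂ)ˣ) : Matrix (Fin n) (Fin n) ℂ).det
                = (g₃ : Matrix (Fin n) (Fin n) ℂ).det
                  * (((UA⁻¹ : (Matrix (Fin n) (Fin n) ℂ)ˣ) : Matrix (Fin n) (Fin n) ℂ).det
                  * ((UA : (Matrix (Fin n) (Fin n) ℂ)ˣ) : Matrix (Fin n) (Fin n) ℂ).det) := by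
                  ring
              _ = t := by rw [h1, mul_one, hdg3]
          have h := hf g₁ 1 g₃ A₀ B₀
          simp only [Units.val_one, inv_one, Matrix.mul_one, Matrix.det_one,
            _root_.one_zpow, mul_one, one_mul] at h
          rw [hA, hB, hdg1, hdg3] at h
          rw [neg_add, zpow_add₀ ht]
          apply mul_right_cancel₀ hf₀
          rw [one_mul]
          linear_combination -h
        have := tri_zpow_all_eq_one key
        omega
      refine ⟨hσ1, ?_, h13⟩
      have hmz : (m:ℤ) * σ₂ = 0 := by linear_combination hsum - (n:ℤ) * h13
      rcases mul_eq_zero.mp hmz with h | h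
      · omega
      · exact h
    · -- n < m : right kernel trick gives σ₂ = 0
      obtain ⟨v, hv0, hvB⟩ := tri_exists_kernel hgt B₀
      obtain ⟨u, huv⟩ := tri_dual_vec v hv0
      have hσ2 : σ₂ = 0 := by
        have key : ∀ t : ℂ, t ≠ 0 → t ^ (-σ₂) = 1 := by
          intro t ht
          set g₂ := triRankOneUnit u v huv t ht with hg₂
          have hdg2 : (g₂ : Matrix (Fin m) (Fin m) ℂ).det = t := triRankOneUnit_det u v huv t ht
          have hBinv : ((g₂ : Matrix (Fin m) (Fin m) ℂ))⁻¹
              = 1 + (t⁻¹ - 1) • vecMulVec v u := Matrix.inv_eq_right_inv g₂.val_inv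
          have hB : B₀ * ((g₂ : Matrix (Fin m) (Fin m) ℂ))⁻¹ = B₀ := by
            rw [hBinv, Matrix.mul_add, Matrix.mul_one, Matrix.mul_smul,
              tri_mul_vecMulVec_eq_zero B₀ v u hvB, smul_zero, add_zero]
          have h := hf 1 g₂ 1 A₀ B₀
          simp only [Units.val_one, inv_one, Matrix.mul_one, Matrix.one_mul,
            Matrix.det_one, _root_.one_zpow, mul_one, one_mul] at h
          rw [hB, hdg2] at h
          apply mul_right_cancel₀ hf₀
          rw [one_mul]
          linear_combination -h
        exact neg_eq_zero.mp (tri_zpow_all_eq_one key)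
      refine ⟨hσ1, hσ2, ?_⟩
      have : (n:ℤ) * (σ₁ + σ₃) = 0 := by linear_combination hsum - (m:ℤ) * hσ2
      rcases mul_eq_zero.mp this with h | h
      · omega
      · exact h
  · rintro ⟨h1, h2, h3⟩
    refine ⟨triDetX n m ^ σ₁.toNat, ?_, ?_⟩
    · intro h0
      have h4 : triEval (triDetX n m ^ σ₁.toNat) (1 : Matrix (Fin n) (Fin n) ℂ) 0 = 1 := by
        have : triEval (triDetX n m ^ σ₁.toNat) (1 : Matrix (Fin n) (Fin n) ℂ) 0
            = triEval (triDetX n m) (1 : Matrix (Fin n) (Fin n) ℂ) 0 ^ σ₁.toNat := map_pow _ _ _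
        rw [this, triEval_triDetX, Matrix.det_one, one_pow]
      rw [h0] at h4
      simp [triEval] at h4
    · intro g₁ g₂ g₃ A B
      have hk : (σ₁.toNat : ℤ) = σ₁ := Int.toNat_of_nonneg h1
      have hpow : ∀ (A' : Matrix (Fin n) (Fin n) ℂ) (B' : Matrix (Fin n) (Fin m) ℂ),
          triEval (triDetX n m ^ σ₁.toNat) A' B' = A'.det ^ σ₁.toNat := by
        intro A' B'
        have : triEval (triDetX n m ^ σ₁.toNat) A' B'
            = triEval (triDetX n m) A' B' ^ σ₁.toNat := map_pow _ _ _
        rw [this, triEval_triDetX]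
      rw [hpow, hpow, Matrix.det_mul, Matrix.det_mul, Matrix.det_nonsing_inv,
        Ring.inverse_eq_inv]
      have e1 : ((g₁ : Matrix (Fin n) (Fin n) ℂ).det) ^ (-σ₁)
          = (((g₁ : Matrix (Fin n) (Fin n) ℂ).det)⁻¹) ^ σ₁.toNat := by
        conv_lhs => rw [← hk]
        rw [_root_.zpow_neg, zpow_natCast, inv_pow]
      have e3 : ((g₃ : Matrix (Fin n) (Fin n) ℂ).det) ^ (-σ₃)
          = ((g₃ : Matrix (Fin n) (Fin n) ℂ).det) ^ σ₁.toNat := by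
        conv_lhs => rw [show -σ₃ = σ₁ by omega, ← hk]
        rw [zpow_natCast]
      rw [e1, e3, h2, neg_zero, zpow_zero, mul_pow, mul_pow]
      ring
end

section
/- Let n, m ≥ 1 with m ≠ n, and consider the quiver 1 → 3 ← 2 with dimension vector (n₁, n₂, n₃) = (m, n, n). A weight σ = (σ₁, σ₂, σ₃) ∈ ℤ³ admits a nonzero semi-invariant polynomial if and only if σ₁ = 0, σ₂ ≥ 0, and σ₂ + σ₃ = 0. -/
section
open Matrix MvPolynomial

namespace TriAux

lemma two_zpow_eq_one {e : ℤ} (h : (2:ℂ) ^ e = 1) : e = 0 := by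
  have : ((2:ℝ) ^ e : ℂ) = ((1:ℝ):ℂ) := by push_cast; simpa using h
  have hr : (2:ℝ) ^ e = 1 := by exact_mod_cast this
  exact zpow_right_injective₀ (by norm_num : (0:ℝ) < 2) (by norm_num : (2:ℝ) ≠ 1)
    (by simpa using hr)

lemma det_unit_ne_zero {k : ℕ} (g : (Matrix (Fin k) (Fin k) ℂ)ˣ) :
    ((g : Matrix (Fin k) (Fin k) ℂ)).det ≠ 0 :=
  ((Matrix.isUnit_iff_isUnit_det _).mp g.isUnit).ne_zero

lemma fixedRel {n₁ n₂ n₃ : ℕ} {σ₁ σ₂ σ₃ : ℤ} {f : MvPolynomial (TriVars n₁ n₂ n₃) ℂ}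
    (hf : IsTriSemiInvariant σ₁ σ₂ σ₃ f)
    {A : Matrix (Fin n₃) (Fin n₁) ℂ} {B : Matrix (Fin n₃) (Fin n₂) ℂ}
    (hAB : triEval f A B ≠ 0)
    (g₁ : (Matrix (Fin n₁) (Fin n₁) ℂ)ˣ) (g₂ : (Matrix (Fin n₂) (Fin n₂) ℂ)ˣ)
    (g₃ : (Matrix (Fin n₃) (Fin n₃) ℂ)ˣ)
    (hA : (g₃ : Matrix (Fin n₃) (Fin n₃) ℂ) * A * (g₁⁻¹ : Matrix (Fin n₁) (Fin n₁) ℂ) = A)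
    (hB : (g₃ : Matrix (Fin n₃) (Fin n₃) ℂ) * B * (g₂⁻¹ : Matrix (Fin n₂) (Fin n₂) ℂ) = B) :
    (g₁ : Matrix (Fin n₁) (Fin n₁) ℂ).det ^ (-σ₁)
      * (g₂ : Matrix (Fin n₂) (Fin n₂) ℂ).det ^ (-σ₂)
      * (g₃ : Matrix (Fin n₃) (Fin n₃) ℂ).det ^ (-σ₃) = 1 := by
  have h := hf g₁ g₂ g₃ A B
  rw [hA, hB] at h
  have h' : (g₁ : Matrix (Fin n₁) (Fin n₁) ℂ).det ^ (-σ₁)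
      * (g₂ : Matrix (Fin n₂) (Fin n₂) ℂ).det ^ (-σ₂)
      * (g₃ : Matrix (Fin n₃) (Fin n₃) ℂ).det ^ (-σ₃) * triEval f A B
      = 1 * triEval f A B := by rw [one_mul]; exact h.symm
  exact mul_right_cancel₀ hAB h'

lemma two_pow_rel {a b c : ℕ} {σ₁ σ₂ σ₃ : ℤ}
    (h : ((2:ℂ)^a) ^ (-σ₁) * ((2:ℂ)^b) ^ (-σ₂) * ((2:ℂ)^c) ^ (-σ₃) = 1) :
    (a:ℤ) * σ₁ + (b:ℤ) * σ₂ + (c:ℤ) * σ₃ = 0 := by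
  rw [← zpow_natCast (2:ℂ) a, ← zpow_natCast (2:ℂ) b, ← zpow_natCast (2:ℂ) c,
    ← _root_.zpow_mul, ← _root_.zpow_mul, ← _root_.zpow_mul, ← zpow_add₀ (two_ne_zero),
    ← zpow_add₀ (two_ne_zero)] at h
  have := two_zpow_eq_one h
  linarith [this]

lemma det_diag_ite_pow {k m : ℕ} (t : ℂ) :
    (Matrix.diagonal (fun i : Fin k => if (i:ℕ) < m then 1 else t)).det
      = t ^ (Finset.univ.filter (fun i : Fin k => ¬ (i:ℕ) < m)).card := by
  rw [Matrix.det_diagonal, Finset.prod_ite]; simp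

lemma det_diag_ite_pow' {k m : ℕ} (t : ℂ) :
    (Matrix.diagonal (fun i : Fin k => if (i:ℕ) < m then t else 1)).det
      = t ^ (Finset.univ.filter (fun i : Fin k => (i:ℕ) < m)).card := by
  rw [Matrix.det_diagonal, Finset.prod_ite]; simp

lemma det_diag_const {k : ℕ} (t : ℂ) :
    (Matrix.diagonal (fun _ : Fin k => t)).det = t ^ k := by
  rw [Matrix.det_diagonal]; simp

lemma diag_isUnit {k : ℕ} {d : Fin k → ℂ} (hd : ∀ i, d i ≠ 0) :
    IsUnit (Matrix.diagonal d) := by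
  rw [Matrix.isUnit_iff_isUnit_det, Matrix.det_diagonal, isUnit_iff_ne_zero]
  exact Finset.prod_ne_zero_iff.mpr fun i _ => hd i

lemma diag_inv {k : ℕ} {d : Fin k → ℂ} (hd : ∀ i, d i ≠ 0) :
    (Matrix.diagonal d)⁻¹ = Matrix.diagonal (fun i => (d i)⁻¹) := by
  apply Matrix.inv_eq_right_inv
  rw [diagonal_mul_diagonal]
  have : (fun i => d i * (d i)⁻¹) = fun _ : Fin k => (1:ℂ) :=
    funext fun i => mul_inv_cancel₀ (hd i)
  rw [this]; exact diagonal_one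

lemma exists_eval_ne_zero {σ : Type*} {p : MvPolynomial σ ℂ} (hp : p ≠ 0) :
    ∃ x : σ → ℂ, eval x p ≠ 0 := by
  by_contra h
  push_neg at h
  exact hp (MvPolynomial.funext fun x => by simp [h x])

lemma triEval_of_point {n₁ n₂ n₃ : ℕ} (f : MvPolynomial (TriVars n₁ n₂ n₃) ℂ)
    (x : TriVars n₁ n₂ n₃ → ℂ) :
    triEval f (Matrix.of fun i j => x (Sum.inl (i,j)))
      (Matrix.of fun i j => x (Sum.inr (i,j))) = eval x f := by
  have hpt : (Sum.elim (fun p : Fin n₃ × Fin n₁ => (Matrix.of fun i j => x (Sum.inl (i,j))) p.1 p.2)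
      (fun p : Fin n₃ × Fin n₂ => (Matrix.of fun i j => x (Sum.inr (i,j))) p.1 p.2)) = x := by
    funext v
    rcases v with ⟨i,j⟩ | ⟨i,j⟩ <;> rfl
  unfold triEval
  rw [hpt]

lemma eval_det {σ' : Type*} {k : ℕ} (x : σ' → ℂ)
    (M : Matrix (Fin k) (Fin k) (MvPolynomial σ' ℂ)) :
    eval x M.det = (Matrix.of fun i j => eval x (M i j)).det := by
  rw [RingHom.map_det]
  have : (eval x).mapMatrix M = Matrix.of fun i j => eval x (M i j) := by
    ext i j
    simp [RingHom.mapMatrix_apply, Matrix.map_apply]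
  rw [this]

lemma det_unit_inv {k : ℕ} (g : (Matrix (Fin k) (Fin k) ℂ)ˣ) :
    ((g : Matrix (Fin k) (Fin k) ℂ)⁻¹).det
      = (((g : Matrix (Fin k) (Fin k) ℂ)).det)⁻¹ := by
  have hu : IsUnit (g : Matrix (Fin k) (Fin k) ℂ).det :=
    (Matrix.isUnit_iff_isUnit_det _).mp g.isUnit
  have h : (g : Matrix (Fin k) (Fin k) ℂ).det
      * ((g : Matrix (Fin k) (Fin k) ℂ)⁻¹).det = 1 := by
    rw [← Matrix.det_mul, Matrix.mul_nonsing_inv _ hu, Matrix.det_one]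
  exact eq_inv_of_mul_eq_one_right h

lemma triEval_detpow {n m : ℕ} (k : ℕ) (A : Matrix (Fin n) (Fin m) ℂ)
    (B : Matrix (Fin n) (Fin n) ℂ) :
    triEval ((Matrix.of fun i j =>
        (X (Sum.inr (i,j)) : MvPolynomial (TriVars m n n) ℂ)).det ^ k) A B
      = B.det ^ k := by
  unfold triEval
  have hmap : (MvPolynomial.eval
      (Sum.elim (fun p : Fin n × Fin m => A p.1 p.2) (fun p : Fin n × Fin n => B p.1 p.2))).mapMatrix
      (Matrix.of fun i j => (X (Sum.inr (i,j)) : MvPolynomial (TriVars m n n) ℂ)) = B := by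
    ext i j
    simp [RingHom.mapMatrix_apply, Matrix.map_apply]
  rw [map_pow, RingHom.map_det, hmap]

lemma backward (n m : ℕ) (σ₂ : ℤ) (h2 : 0 ≤ σ₂) :
    ∃ f : MvPolynomial (TriVars m n n) ℂ, f ≠ 0 ∧ IsTriSemiInvariant 0 σ₂ (-σ₂) f := by
  obtain ⟨k, hk⟩ : ∃ k : ℕ, σ₂ = (k : ℤ) := ⟨σ₂.toNat, (Int.toNat_of_nonneg h2).symm⟩
  refine ⟨(Matrix.of fun i j =>
      (X (Sum.inr (i,j)) : MvPolynomial (TriVars m n n) ℂ)).det ^ k, ?_, ?_⟩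
  · intro h
    have h1 := triEval_detpow (n := n) (m := m) k 0 1
    rw [h] at h1
    simp only [Matrix.det_one, one_pow] at h1
    have : triEval (0 : MvPolynomial (TriVars m n n) ℂ) 0 1 = 0 := by
      unfold triEval; simp
    rw [this] at h1
    exact one_ne_zero h1.symm
  · intro g₁ g₂ g₃ A B
    rw [triEval_detpow, triEval_detpow, Matrix.det_mul, Matrix.det_mul, det_unit_inv]
    rw [hk, neg_zero, zpow_zero, one_mul, neg_neg, _root_.zpow_neg, zpow_natCast, zpow_natCast]
    rw [mul_pow, mul_pow, inv_pow]
    ring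
lemma mat_inv_one {k : ℕ} : (1 : Matrix (Fin k) (Fin k) ℂ)⁻¹ = 1 :=
  Matrix.inv_eq_right_inv (by rw [one_mul])
lemma sigma2_nonneg {n m : ℕ} (hn : 1 ≤ n) {σ₁ σ₂ σ₃ : ℤ}
    {f : MvPolynomial (TriVars m n n) ℂ} (hf0 : f ≠ 0)
    (hf : IsTriSemiInvariant σ₁ σ₂ σ₃ f) : 0 ≤ σ₂ := by
  classical
  obtain ⟨x, hx⟩ := exists_eval_ne_zero hf0
  set A₀ : Matrix (Fin n) (Fin m) ℂ := Matrix.of fun i j => x (Sum.inl (i,j)) with hA₀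
  set B₀ : Matrix (Fin n) (Fin n) ℂ := Matrix.of fun i j => x (Sum.inr (i,j)) with hB₀
  have hfx : triEval f A₀ B₀ ≠ 0 := by rw [hA₀, hB₀, triEval_of_point]; exact hx
  -- scaling identity
  have key : ∀ s : ℂ, s ≠ 0 →
      triEval f A₀ (Matrix.of fun i j => s * B₀ i j) = s ^ ((n:ℤ) * σ₂) * triEval f A₀ B₀ := by
    intro s hs
    have hd : ∀ i : Fin n, (fun _ : Fin n => s⁻¹) i ≠ 0 := fun i => inv_ne_zero hs
    set u : (Matrix (Fin n) (Fin n) ℂ)ˣ := (diag_isUnit hd).unit with hu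
    have hval : (u : Matrix (Fin n) (Fin n) ℂ) = Matrix.diagonal (fun _ => s⁻¹) :=
      (diag_isUnit hd).unit_spec
    have step := hf 1 u 1 A₀ B₀
    rw [hval] at step
    have e0 : ((1 : (Matrix (Fin n) (Fin n) ℂ)ˣ) : Matrix (Fin n) (Fin n) ℂ) = 1 :=
      Units.val_one
    have e0m : ((1 : (Matrix (Fin m) (Fin m) ℂ)ˣ) : Matrix (Fin m) (Fin m) ℂ) = 1 :=
      Units.val_one
    rw [e0, e0m] at step
    rw [mat_inv_one] at step
    simp only [Matrix.one_mul, Matrix.mul_one] at step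
    rw [diag_inv hd] at step
    have eB : B₀ * Matrix.diagonal (fun i : Fin n => ((fun _ : Fin n => s⁻¹) i)⁻¹)
        = Matrix.of fun i j => s * B₀ i j := by
      ext i j
      rw [Matrix.mul_diagonal]
      simp [inv_inv, mul_comm]
    rw [eB] at step
    rw [step, Matrix.det_one, det_diag_const]
    have : ((s⁻¹)^n)^(-σ₂) = s ^ ((n:ℤ) * σ₂) := by
      rw [← zpow_natCast (s⁻¹), _root_.inv_zpow, ← _root_.zpow_neg, ← _root_.zpow_mul]
      ring_nf
    rw [this]
    simp
  -- polynomial in s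
  set g : TriVars m n n → Polynomial ℂ :=
    Sum.elim (fun p => Polynomial.C (A₀ p.1 p.2)) (fun p => Polynomial.C (B₀ p.1 p.2) * Polynomial.X)
    with hg
  set P : Polynomial ℂ := MvPolynomial.eval₂ Polynomial.C g f with hP
  have evalP : ∀ s : ℂ, P.eval s = triEval f A₀ (Matrix.of fun i j => s * B₀ i j) := by
    intro s
    have h1 := MvPolynomial.eval₂_comp_left (Polynomial.evalRingHom s)
      (Polynomial.C : ℂ →+* Polynomial ℂ) g f
    have hcomp : (Polynomial.evalRingHom s).comp (Polynomial.C : ℂ →+* Polynomial ℂ)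
        = RingHom.id ℂ := by ext a; simp
    rw [hcomp, MvPolynomial.eval₂_id] at h1
    have hpt : ((Polynomial.evalRingHom s : Polynomial ℂ →+* ℂ) ∘ g)
        = Sum.elim (fun p : Fin n × Fin m => A₀ p.1 p.2)
            (fun p : Fin n × Fin n => (Matrix.of fun i j => s * B₀ i j) p.1 p.2) := by
      funext v
      rcases v with ⟨i,j⟩ | ⟨i,j⟩
      · show Polynomial.eval s (Polynomial.C (A₀ i j)) = A₀ i j
        rw [Polynomial.eval_C]
      · show Polynomial.eval s (Polynomial.C (B₀ i j) * Polynomial.X) = s * B₀ i j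
        rw [Polynomial.eval_mul, Polynomial.eval_C, Polynomial.eval_X]
        exact mul_comm _ _
    rw [hpt] at h1
    exact h1
  -- conclude
  by_contra hneg
  push_neg at hneg
  set c := triEval f A₀ B₀ with hc
  have hk : ∃ k : ℕ, 1 ≤ k ∧ (n:ℤ) * σ₂ = -(k:ℤ) := by
    have hn' : (0:ℤ) < (n:ℤ) := by exact_mod_cast hn
    have h1 : (n:ℤ) * σ₂ < 0 := mul_neg_of_pos_of_neg hn' hneg
    exact ⟨(-((n:ℤ) * σ₂)).toNat, by omega, by omega⟩
  obtain ⟨k, hk1, hk2⟩ := hk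
  have hQ : ∀ s : ℂ, s ≠ 0 → (Polynomial.X^k * P - Polynomial.C c).eval s = 0 := by
    intro s hs
    have h2 := key s hs
    rw [← evalP] at h2
    rw [hk2] at h2
    simp only [Polynomial.eval_sub, Polynomial.eval_mul, Polynomial.eval_pow,
      Polynomial.eval_X, Polynomial.eval_C]
    rw [h2, _root_.zpow_neg, zpow_natCast]
    field_simp
    ring
  have hQ0 : (Polynomial.X^k * P - Polynomial.C c : Polynomial ℂ) = 0 := by
    apply Polynomial.eq_zero_of_infinite_isRoot
    apply Set.Infinite.mono (s := ({0}ᶜ : Set ℂ))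
    · intro s hs
      exact hQ s hs
    · exact Set.Finite.infinite_compl (Set.finite_singleton 0)
  have : (Polynomial.X^k * P - Polynomial.C c : Polynomial ℂ).eval 0 = -c := by
    simp [zero_pow (by omega : k ≠ 0)]
  rw [hQ0] at this
  simp at this
  exact hfx this
lemma forward_lt {n m : ℕ} (hm : 1 ≤ m) (hlt : m < n) {σ₁ σ₂ σ₃ : ℤ}
    {f : MvPolynomial (TriVars m n n) ℂ} (hf0 : f ≠ 0)
    (hf : IsTriSemiInvariant σ₁ σ₂ σ₃ f) : σ₁ = 0 ∧ σ₂ + σ₃ = 0 := by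
  classical
  set Bm : Matrix (Fin n) (Fin n) (MvPolynomial (TriVars m n n) ℂ) :=
    Matrix.of fun i j => X (Sum.inr (i,j)) with hBm
  set Lm : Matrix (Fin n) (Fin n) (MvPolynomial (TriVars m n n) ℂ) :=
    Matrix.of fun i k => if h : (k:ℕ) < m then X (Sum.inl (i, ⟨(k:ℕ), h⟩))
      else if (i:ℕ) = (k:ℕ) then 1 else 0 with hLm
  have hBm0 : Bm.det ≠ 0 := by
    intro h
    have h2 := eval_det (Sum.elim (fun _ => (0:ℂ))
      (fun p : Fin n × Fin n => if p.1 = p.2 then (1:ℂ) else 0)) Bm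
    rw [h, map_zero] at h2
    have h1 : (Matrix.of fun i j : Fin n =>
        eval (Sum.elim (fun _ => (0:ℂ)) (fun p : Fin n × Fin n => if p.1 = p.2 then (1:ℂ) else 0))
          (Bm i j)) = 1 := by
      ext i j
      simp [hBm, Matrix.one_apply]
    rw [h1, Matrix.det_one] at h2
    exact one_ne_zero h2.symm
  have hLm0 : Lm.det ≠ 0 := by
    intro h
    have h2 := eval_det (Sum.elim
      (fun p : Fin n × Fin m => if (p.1:ℕ) = (p.2:ℕ) then (1:ℂ) else 0) (fun _ => (0:ℂ))) Lm
    rw [h, map_zero] at h2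
    have h1 : (Matrix.of fun i j : Fin n =>
        eval (Sum.elim (fun p : Fin n × Fin m => if (p.1:ℕ) = (p.2:ℕ) then (1:ℂ) else 0)
          (fun _ => (0:ℂ))) (Lm i j)) = 1 := by
      ext i k
      by_cases hkm : (k:ℕ) < m <;> simp [hLm, hkm, Matrix.one_apply, Fin.ext_iff]
    rw [h1, Matrix.det_one] at h2
    exact one_ne_zero h2.symm
  obtain ⟨x, hx⟩ := exists_eval_ne_zero (mul_ne_zero (mul_ne_zero hf0 hBm0) hLm0)
  rw [_root_.map_mul, _root_.map_mul] at hx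
  have hxf : eval x f ≠ 0 := fun h => hx (by rw [h]; ring)
  have hxB : eval x Bm.det ≠ 0 := fun h => hx (by rw [h]; ring)
  have hxL : eval x Lm.det ≠ 0 := fun h => hx (by rw [h]; ring)
  set A₀ : Matrix (Fin n) (Fin m) ℂ := Matrix.of fun i j => x (Sum.inl (i,j)) with hA₀
  set B₀ : Matrix (Fin n) (Fin n) ℂ := Matrix.of fun i j => x (Sum.inr (i,j)) with hB₀
  have hfx : triEval f A₀ B₀ ≠ 0 := by rw [hA₀, hB₀, triEval_of_point]; exact hxf
  set L : Matrix (Fin n) (Fin n) ℂ := Matrix.of fun i k =>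
    if h : (k:ℕ) < m then A₀ i ⟨(k:ℕ), h⟩ else if (i:ℕ) = (k:ℕ) then 1 else 0 with hL
  have hLdet : L.det ≠ 0 := by
    have h2 := eval_det x Lm
    have h1 : (Matrix.of fun i j => eval x (Lm i j)) = L := by
      ext i k
      by_cases hkm : (k:ℕ) < m <;> simp [hLm, hL, hkm, hA₀]
    rw [h1] at h2
    rw [← h2]; exact hxL
  have hBdet : B₀.det ≠ 0 := by
    have h2 := eval_det x Bm
    have h1 : (Matrix.of fun i j => eval x (Bm i j)) = B₀ := by
      ext i j; simp [hBm, hB₀]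
    rw [h1] at h2; rw [← h2]; exact hxB
  have hLu : IsUnit L.det := isUnit_iff_ne_zero.mpr hLdet
  have hBu : IsUnit B₀.det := isUnit_iff_ne_zero.mpr hBdet
  set Ac : Matrix (Fin n) (Fin m) ℂ := Matrix.of fun i j =>
    if (i:ℕ) = (j:ℕ) then 1 else 0 with hAc
  have hLAc : L * Ac = A₀ := by
    ext i j
    rw [Matrix.mul_apply]
    have hterm : ∀ k : Fin n, L i k * Ac k j = if k = Fin.castLE hlt.le j then L i k else 0 := by
      intro k
      by_cases h : k = Fin.castLE hlt.le j
      · subst h; simp [hAc]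
      · have hne : ¬ ((k:ℕ) = (j:ℕ)) := by
          intro hc; exact h (Fin.ext (by simpa using hc))
        simp [hAc, hne, h]
    rw [Finset.sum_congr rfl (fun k _ => hterm k), Finset.sum_ite_eq']
    have : (Fin.castLE hlt.le j : ℕ) < m := by simpa using j.isLt
    simp [hL, this]
  set uL := ((Matrix.isUnit_iff_isUnit_det L).mpr hLu).unit with huL
  set uB := ((Matrix.isUnit_iff_isUnit_det B₀).mpr hBu).unit with huB
  have cLval : (uL : Matrix (Fin n) (Fin n) ℂ) = L :=
    ((Matrix.isUnit_iff_isUnit_det L).mpr hLu).unit_spec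
  have cBval : (uB : Matrix (Fin n) (Fin n) ℂ) = B₀ :=
    ((Matrix.isUnit_iff_isUnit_det B₀).mpr hBu).unit_spec
  have cL : ((uL⁻¹ : (Matrix (Fin n) (Fin n) ℂ)ˣ) : Matrix (Fin n) (Fin n) ℂ) = L⁻¹ := by
    rw [Matrix.coe_units_inv, cLval]
  have cB : ((uL⁻¹ * uB : (Matrix (Fin n) (Fin n) ℂ)ˣ) : Matrix (Fin n) (Fin n) ℂ)
      = L⁻¹ * B₀ := by
    rw [Units.val_mul, cL, cBval]
  have step := hf 1 (uL⁻¹ * uB) (uL⁻¹) A₀ B₀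
  have eA : ((uL⁻¹ : (Matrix (Fin n) (Fin n) ℂ)ˣ) : Matrix (Fin n) (Fin n) ℂ) * A₀
      * (((1 : (Matrix (Fin m) (Fin m) ℂ)ˣ) : Matrix (Fin m) (Fin m) ℂ))⁻¹ = Ac := by
    rw [cL, Units.val_one, mat_inv_one, Matrix.mul_one, ← hLAc, ← Matrix.mul_assoc,
      Matrix.nonsing_inv_mul L hLu, Matrix.one_mul]
  have eB : ((uL⁻¹ : (Matrix (Fin n) (Fin n) ℂ)ˣ) : Matrix (Fin n) (Fin n) ℂ) * B₀
      * (((uL⁻¹ * uB : (Matrix (Fin n) (Fin n) ℂ)ˣ) : Matrix (Fin n) (Fin n) ℂ))⁻¹ = 1 := by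
    rw [cL, cB, Matrix.mul_inv_rev, Matrix.nonsing_inv_nonsing_inv L hLu,
      Matrix.mul_assoc, ← Matrix.mul_assoc B₀, Matrix.mul_nonsing_inv B₀ hBu,
      Matrix.one_mul, Matrix.nonsing_inv_mul L hLu]
  rw [eA, eB] at step
  have hc : triEval f Ac 1 ≠ 0 := by
    rw [step]
    exact mul_ne_zero (mul_ne_zero (mul_ne_zero
      (zpow_ne_zero _ (det_unit_ne_zero (1 : (Matrix (Fin m) (Fin m) ℂ)ˣ)))
      (zpow_ne_zero _ (det_unit_ne_zero (uL⁻¹ * uB))))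
      (zpow_ne_zero _ (det_unit_ne_zero (uL⁻¹)))) hfx
  -- relation 1 : σ₂ + σ₃ = 0
  have hd1 : ∀ i : Fin n, (fun i : Fin n => if (i:ℕ) < m then (1:ℂ) else 2) i ≠ 0 := by
    intro i; by_cases h : (i:ℕ) < m <;> simp [h]
  set u1 := (diag_isUnit hd1).unit with hu1
  have hval1 : (u1 : Matrix (Fin n) (Fin n) ℂ)
      = Matrix.diagonal (fun i : Fin n => if (i:ℕ) < m then (1:ℂ) else 2) :=
    (diag_isUnit hd1).unit_spec
  have fixA1 : (u1 : Matrix (Fin n) (Fin n) ℂ) * Ac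
      * (((1 : (Matrix (Fin m) (Fin m) ℂ)ˣ) : Matrix (Fin m) (Fin m) ℂ))⁻¹ = Ac := by
    rw [hval1, Units.val_one, mat_inv_one, Matrix.mul_one]
    ext i j
    rw [Matrix.diagonal_mul]
    by_cases hij : (i:ℕ) = (j:ℕ)
    · have him : (i:ℕ) < m := by rw [hij]; exact j.isLt
      simp [hAc, hij, him]
    · simp [hAc, hij]
  have fixB1 : (u1 : Matrix (Fin n) (Fin n) ℂ) * (1 : Matrix (Fin n) (Fin n) ℂ)
      * ((u1 : Matrix (Fin n) (Fin n) ℂ))⁻¹ = 1 := by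
    rw [Matrix.mul_one]
    exact Matrix.mul_nonsing_inv _ ((Matrix.isUnit_iff_isUnit_det _).mp u1.isUnit)
  have rel1 := fixedRel hf hc 1 u1 u1 fixA1 fixB1
  rw [Units.val_one, Matrix.det_one, hval1, det_diag_ite_pow] at rel1
  set c1 := (Finset.univ.filter (fun i : Fin n => ¬ (i:ℕ) < m)).card with hc1
  have hc1pos : 0 < c1 := by
    rw [hc1]
    refine Finset.card_pos.mpr ⟨⟨m, hlt⟩, ?_⟩
    simp
  have rel1' : ((2:ℂ)^(0:ℕ))^(-σ₁) * ((2:ℂ)^c1)^(-σ₂) * ((2:ℂ)^c1)^(-σ₃) = 1 := by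
    rw [pow_zero]; exact rel1
  have hsum1 := two_pow_rel rel1'
  have h23 : σ₂ + σ₃ = 0 := by
    have hc1' : (c1:ℤ) ≠ 0 := by exact_mod_cast hc1pos.ne'
    have hprod : (c1:ℤ) * (σ₂ + σ₃) = 0 := by linear_combination hsum1
    rcases mul_eq_zero.mp hprod with h | h
    · exact absurd h hc1'
    · exact h
  -- relation 2 : σ₁ = 0
  have hd2 : ∀ i : Fin n, (fun i : Fin n => if (i:ℕ) < m then (2:ℂ) else 1) i ≠ 0 := by
    intro i; by_cases h : (i:ℕ) < m <;> simp [h]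
  have hdm : ∀ i : Fin m, (fun _ : Fin m => (2:ℂ)) i ≠ 0 := fun _ => two_ne_zero
  set u2 := (diag_isUnit hd2).unit with hu2
  set um := (diag_isUnit hdm).unit with hum
  have hval2 : (u2 : Matrix (Fin n) (Fin n) ℂ)
      = Matrix.diagonal (fun i : Fin n => if (i:ℕ) < m then (2:ℂ) else 1) :=
    (diag_isUnit hd2).unit_spec
  have hvalm : (um : Matrix (Fin m) (Fin m) ℂ)
      = Matrix.diagonal (fun _ : Fin m => (2:ℂ)) :=
    (diag_isUnit hdm).unit_spec
  have fixA2 : (u2 : Matrix (Fin n) (Fin n) ℂ) * Ac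
      * ((um : Matrix (Fin m) (Fin m) ℂ))⁻¹ = Ac := by
    rw [hval2, hvalm, diag_inv hdm]
    ext i j
    rw [Matrix.mul_diagonal, Matrix.diagonal_mul]
    by_cases hij : (i:ℕ) = (j:ℕ)
    · have him : (i:ℕ) < m := by rw [hij]; exact j.isLt
      simp [hAc, hij, him]
    · simp [hAc, hij]
  have fixB2 : (u2 : Matrix (Fin n) (Fin n) ℂ) * (1 : Matrix (Fin n) (Fin n) ℂ)
      * ((u2 : Matrix (Fin n) (Fin n) ℂ))⁻¹ = 1 := by
    rw [Matrix.mul_one]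
    exact Matrix.mul_nonsing_inv _ ((Matrix.isUnit_iff_isUnit_det _).mp u2.isUnit)
  have rel2 := fixedRel hf hc um u2 u2 fixA2 fixB2
  rw [hvalm, hval2, det_diag_const, det_diag_ite_pow'] at rel2
  have hsum2 := two_pow_rel rel2
  have h1 : σ₁ = 0 := by
    have hs3 : σ₃ = -σ₂ := by omega
    rw [hs3] at hsum2
    have hm' : ((m:ℤ)) ≠ 0 := by
      have : 0 < m := hm
      exact_mod_cast this.ne'
    have : (m:ℤ) * σ₁ = 0 := by linear_combination hsum2
    rcases mul_eq_zero.mp this with h | h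
    · exact absurd h hm'
    · exact h
  exact ⟨h1, h23⟩
lemma forward_gt {n m : ℕ} (hn : 1 ≤ n) (hgt : n < m) {σ₁ σ₂ σ₃ : ℤ}
    {f : MvPolynomial (TriVars m n n) ℂ} (hf0 : f ≠ 0)
    (hf : IsTriSemiInvariant σ₁ σ₂ σ₃ f) : σ₁ = 0 ∧ σ₂ + σ₃ = 0 := by
  classical
  set Bm : Matrix (Fin n) (Fin n) (MvPolynomial (TriVars m n n) ℂ) :=
    Matrix.of fun i j => X (Sum.inr (i,j)) with hBm
  set Rm : Matrix (Fin m) (Fin m) (MvPolynomial (TriVars m n n) ℂ) :=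
    Matrix.of fun i j => if h : (i:ℕ) < n then X (Sum.inl (⟨(i:ℕ), h⟩, j))
      else if (i:ℕ) = (j:ℕ) then 1 else 0 with hRm
  have hBm0 : Bm.det ≠ 0 := by
    intro h
    have h2 := eval_det (Sum.elim (fun _ => (0:ℂ))
      (fun p : Fin n × Fin n => if p.1 = p.2 then (1:ℂ) else 0)) Bm
    rw [h, map_zero] at h2
    have h1 : (Matrix.of fun i j : Fin n =>
        eval (Sum.elim (fun _ => (0:ℂ)) (fun p : Fin n × Fin n => if p.1 = p.2 then (1:ℂ) else 0))
          (Bm i j)) = 1 := by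
      ext i j
      simp [hBm, Matrix.one_apply]
    rw [h1, Matrix.det_one] at h2
    exact one_ne_zero h2.symm
  have hRm0 : Rm.det ≠ 0 := by
    intro h
    have h2 := eval_det (Sum.elim
      (fun p : Fin n × Fin m => if (p.1:ℕ) = (p.2:ℕ) then (1:ℂ) else 0) (fun _ => (0:ℂ))) Rm
    rw [h, map_zero] at h2
    have h1 : (Matrix.of fun i j : Fin m =>
        eval (Sum.elim (fun p : Fin n × Fin m => if (p.1:ℕ) = (p.2:ℕ) then (1:ℂ) else 0)
          (fun _ => (0:ℂ))) (Rm i j)) = 1 := by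
      ext i j
      by_cases hin : (i:ℕ) < n <;> simp [hRm, hin, Matrix.one_apply, Fin.ext_iff]
    rw [h1, Matrix.det_one] at h2
    exact one_ne_zero h2.symm
  obtain ⟨x, hx⟩ := exists_eval_ne_zero (mul_ne_zero (mul_ne_zero hf0 hBm0) hRm0)
  rw [_root_.map_mul, _root_.map_mul] at hx
  have hxf : eval x f ≠ 0 := fun h => hx (by rw [h]; ring)
  have hxB : eval x Bm.det ≠ 0 := fun h => hx (by rw [h]; ring)
  have hxR : eval x Rm.det ≠ 0 := fun h => hx (by rw [h]; ring)
  set A₀ : Matrix (Fin n) (Fin m) ℂ := Matrix.of fun i j => x (Sum.inl (i,j)) with hA₀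
  set B₀ : Matrix (Fin n) (Fin n) ℂ := Matrix.of fun i j => x (Sum.inr (i,j)) with hB₀
  have hfx : triEval f A₀ B₀ ≠ 0 := by rw [hA₀, hB₀, triEval_of_point]; exact hxf
  set R : Matrix (Fin m) (Fin m) ℂ := Matrix.of fun i j =>
    if h : (i:ℕ) < n then A₀ ⟨(i:ℕ), h⟩ j else if (i:ℕ) = (j:ℕ) then 1 else 0 with hR
  have hRdet : R.det ≠ 0 := by
    have h2 := eval_det x Rm
    have h1 : (Matrix.of fun i j => eval x (Rm i j)) = R := by
      ext i j
      by_cases hin : (i:ℕ) < n <;> simp [hRm, hR, hin, hA₀]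
    rw [h1] at h2
    rw [← h2]; exact hxR
  have hBdet : B₀.det ≠ 0 := by
    have h2 := eval_det x Bm
    have h1 : (Matrix.of fun i j => eval x (Bm i j)) = B₀ := by
      ext i j; simp [hBm, hB₀]
    rw [h1] at h2; rw [← h2]; exact hxB
  have hRu : IsUnit R.det := isUnit_iff_ne_zero.mpr hRdet
  have hBu : IsUnit B₀.det := isUnit_iff_ne_zero.mpr hBdet
  set Ac : Matrix (Fin n) (Fin m) ℂ := Matrix.of fun i j =>
    if (i:ℕ) = (j:ℕ) then 1 else 0 with hAc
  have hAcR : Ac * R = A₀ := by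
    ext i j
    rw [Matrix.mul_apply]
    have hterm : ∀ k : Fin m, Ac i k * R k j = if k = Fin.castLE hgt.le i then R k j else 0 := by
      intro k
      by_cases h : k = Fin.castLE hgt.le i
      · subst h; simp [hAc]
      · have hne : ¬ ((i:ℕ) = (k:ℕ)) := by
          intro hc; exact h (Fin.ext (by simpa using hc.symm))
        simp [hAc, hne, h]
    rw [Finset.sum_congr rfl (fun k _ => hterm k), Finset.sum_ite_eq']
    have : (Fin.castLE hgt.le i : ℕ) < n := by simpa using i.isLt
    simp [hR, this]
  set uR := ((Matrix.isUnit_iff_isUnit_det R).mpr hRu).unit with huR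
  set uB := ((Matrix.isUnit_iff_isUnit_det B₀).mpr hBu).unit with huB
  have cRval : (uR : Matrix (Fin m) (Fin m) ℂ) = R :=
    ((Matrix.isUnit_iff_isUnit_det R).mpr hRu).unit_spec
  have cBval : (uB : Matrix (Fin n) (Fin n) ℂ) = B₀ :=
    ((Matrix.isUnit_iff_isUnit_det B₀).mpr hBu).unit_spec
  have step := hf uR uB 1 A₀ B₀
  have eA : (((1 : (Matrix (Fin n) (Fin n) ℂ)ˣ)) : Matrix (Fin n) (Fin n) ℂ) * A₀
      * ((uR : Matrix (Fin m) (Fin m) ℂ))⁻¹ = Ac := by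
    rw [Units.val_one, Matrix.one_mul, cRval, ← hAcR, Matrix.mul_assoc,
      Matrix.mul_nonsing_inv R hRu, Matrix.mul_one]
  have eB : (((1 : (Matrix (Fin n) (Fin n) ℂ)ˣ)) : Matrix (Fin n) (Fin n) ℂ) * B₀
      * ((uB : Matrix (Fin n) (Fin n) ℂ))⁻¹ = 1 := by
    rw [Units.val_one, Matrix.one_mul, cBval, Matrix.mul_nonsing_inv B₀ hBu]
  rw [eA, eB] at step
  have hc : triEval f Ac 1 ≠ 0 := by
    rw [step]
    exact mul_ne_zero (mul_ne_zero (mul_ne_zero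
      (zpow_ne_zero _ (det_unit_ne_zero uR))
      (zpow_ne_zero _ (det_unit_ne_zero uB)))
      (zpow_ne_zero _ (det_unit_ne_zero (1 : (Matrix (Fin n) (Fin n) ℂ)ˣ)))) hfx
  -- relation 1 : σ₁ = 0
  have hd1 : ∀ j : Fin m, (fun j : Fin m => if (j:ℕ) < n then (1:ℂ) else 2) j ≠ 0 := by
    intro j; by_cases h : (j:ℕ) < n <;> simp [h]
  set u1 := (diag_isUnit hd1).unit with hu1
  have hval1 : (u1 : Matrix (Fin m) (Fin m) ℂ)
      = Matrix.diagonal (fun j : Fin m => if (j:ℕ) < n then (1:ℂ) else 2) :=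
    (diag_isUnit hd1).unit_spec
  have fixA1 : (((1 : (Matrix (Fin n) (Fin n) ℂ)ˣ)) : Matrix (Fin n) (Fin n) ℂ) * Ac
      * ((u1 : Matrix (Fin m) (Fin m) ℂ))⁻¹ = Ac := by
    rw [Units.val_one, Matrix.one_mul, hval1, diag_inv hd1]
    ext i j
    rw [Matrix.mul_diagonal]
    by_cases hij : (i:ℕ) = (j:ℕ)
    · have hjn : (j:ℕ) < n := by rw [← hij]; exact i.isLt
      simp [hAc, hij, hjn]
    · simp [hAc, hij]
  have fixB1 : (((1 : (Matrix (Fin n) (Fin n) ℂ)ˣ)) : Matrix (Fin n) (Fin n) ℂ)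
      * (1 : Matrix (Fin n) (Fin n) ℂ)
      * (((1 : (Matrix (Fin n) (Fin n) ℂ)ˣ) : Matrix (Fin n) (Fin n) ℂ))⁻¹ = 1 := by
    rw [Units.val_one, mat_inv_one, Matrix.mul_one, Matrix.mul_one]
  have rel1 := fixedRel hf hc u1 1 1 fixA1 fixB1
  rw [Units.val_one, Matrix.det_one, hval1, det_diag_ite_pow] at rel1
  set c1 := (Finset.univ.filter (fun j : Fin m => ¬ (j:ℕ) < n)).card with hc1
  have hc1pos : 0 < c1 := by
    rw [hc1]
    refine Finset.card_pos.mpr ⟨⟨n, hgt⟩, ?_⟩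
    simp
  have rel1' : ((2:ℂ)^c1)^(-σ₁) * ((2:ℂ)^(0:ℕ))^(-σ₂) * ((2:ℂ)^(0:ℕ))^(-σ₃) = 1 := by
    rw [pow_zero]; exact rel1
  have hsum1 := two_pow_rel rel1'
  have h1 : σ₁ = 0 := by
    have hc1' : (c1:ℤ) ≠ 0 := by exact_mod_cast hc1pos.ne'
    have hprod : (c1:ℤ) * σ₁ = 0 := by linear_combination hsum1
    rcases mul_eq_zero.mp hprod with h | h
    · exact absurd h hc1'
    · exact h
  -- relation 2 : σ₂ + σ₃ = 0
  have hdm : ∀ i : Fin m, (fun _ : Fin m => (2:ℂ)) i ≠ 0 := fun _ => two_ne_zero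
  have hdn : ∀ i : Fin n, (fun _ : Fin n => (2:ℂ)) i ≠ 0 := fun _ => two_ne_zero
  set um := (diag_isUnit hdm).unit with hum
  set u2 := (diag_isUnit hdn).unit with hu2
  have hvalm : (um : Matrix (Fin m) (Fin m) ℂ)
      = Matrix.diagonal (fun _ : Fin m => (2:ℂ)) := (diag_isUnit hdm).unit_spec
  have hval2 : (u2 : Matrix (Fin n) (Fin n) ℂ)
      = Matrix.diagonal (fun _ : Fin n => (2:ℂ)) := (diag_isUnit hdn).unit_spec
  have fixA2 : (u2 : Matrix (Fin n) (Fin n) ℂ) * Ac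
      * ((um : Matrix (Fin m) (Fin m) ℂ))⁻¹ = Ac := by
    rw [hval2, hvalm, diag_inv hdm]
    ext i j
    rw [Matrix.mul_diagonal, Matrix.diagonal_mul]
    by_cases hij : (i:ℕ) = (j:ℕ)
    · simp [hAc, hij]
    · simp [hAc, hij]
  have fixB2 : (u2 : Matrix (Fin n) (Fin n) ℂ) * (1 : Matrix (Fin n) (Fin n) ℂ)
      * ((u2 : Matrix (Fin n) (Fin n) ℂ))⁻¹ = 1 := by
    rw [Matrix.mul_one]
    exact Matrix.mul_nonsing_inv _ ((Matrix.isUnit_iff_isUnit_det _).mp u2.isUnit)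
  have rel2 := fixedRel hf hc um u2 u2 fixA2 fixB2
  rw [hvalm, hval2, det_diag_const, det_diag_const] at rel2
  have hsum2 := two_pow_rel rel2
  have h23 : σ₂ + σ₃ = 0 := by
    rw [h1] at hsum2
    have hn' : ((n:ℤ)) ≠ 0 := by
      have : 0 < n := hn
      exact_mod_cast this.ne'
    have hprod : (n:ℤ) * (σ₂ + σ₃) = 0 := by linear_combination hsum2
    rcases mul_eq_zero.mp hprod with h | h
    · exact absurd h hn'
    · exact h
  exact ⟨h1, h23⟩

end TriAux
end

/-- for the quiver `1 → 3 ← 2` with dimension vector `(m, n, n)` where `m ≠ n`,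
a weight `(σ₁, σ₂, σ₃)` admits a nonzero semi-invariant iff `σ₁ = 0`, `σ₂ ≥ 0`, `σ₂ + σ₃ = 0`. -/
theorem tri_semiinvariant_iff_mnn (n m : ℕ) (hn : 1 ≤ n) (hm : 1 ≤ m) (hnm : m ≠ n)
    (σ₁ σ₂ σ₃ : ℤ) :
    (∃ f : MvPolynomial (TriVars m n n) ℂ, f ≠ 0 ∧ IsTriSemiInvariant σ₁ σ₂ σ₃ f)
      ↔ (σ₁ = 0 ∧ 0 ≤ σ₂ ∧ σ₂ + σ₃ = 0) := by
  constructor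
  · rintro ⟨f, hf0, hf⟩
    have h2 : 0 ≤ σ₂ := TriAux.sigma2_nonneg hn hf0 hf
    rcases lt_or_gt_of_ne hnm with hlt | hgt
    · obtain ⟨h1, h23⟩ := TriAux.forward_lt hm hlt hf0 hf
      exact ⟨h1, h2, h23⟩
    · obtain ⟨h1, h23⟩ := TriAux.forward_gt hn hgt hf0 hf
      exact ⟨h1, h2, h23⟩
  · rintro ⟨h1, h2, h23⟩
    have h3 : σ₃ = -σ₂ := by omega
    subst h1; subst h3
    exact TriAux.backward n m σ₂ h2
end

section
/- Let n₁, n₂ ≥ 1 and consider the quiver 1 → 3 ← 2 with dimension vector (n₁, n₂, n₃) where n₃ = n₁ + n₂. A weight σ = (σ₁, σ₂, σ₃) ∈ ℤ³ admits a nonzero semi-invariant polynomial if and only if σ₁ = σ₂ = −σ₃ and σ₁ ≥ 0. -/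
open Matrix MvPolynomial

namespace TriAux

variable {n₁ n₂ : ℕ} {R : Type*} [CommRing R]

def cat (A : Matrix (Fin (n₁+n₂)) (Fin n₁) R) (B : Matrix (Fin (n₁+n₂)) (Fin n₂) R) :
    Matrix (Fin (n₁+n₂)) (Fin (n₁+n₂)) R :=
  Matrix.of fun i => Fin.addCases (fun j₁ => A i j₁) (fun j₂ => B i j₂)

@[simp] lemma cat_castAdd (A : Matrix (Fin (n₁+n₂)) (Fin n₁) R)
    (B : Matrix (Fin (n₁+n₂)) (Fin n₂) R) (i : Fin (n₁+n₂)) (j : Fin n₁) :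
    cat A B i (Fin.castAdd n₂ j) = A i j := by simp [cat]

@[simp] lemma cat_natAdd (A : Matrix (Fin (n₁+n₂)) (Fin n₁) R)
    (B : Matrix (Fin (n₁+n₂)) (Fin n₂) R) (i : Fin (n₁+n₂)) (j : Fin n₂) :
    cat A B i (Fin.natAdd n₁ j) = B i j := by simp [cat]

lemma mul_cat (M : Matrix (Fin (n₁+n₂)) (Fin (n₁+n₂)) R)
    (A : Matrix (Fin (n₁+n₂)) (Fin n₁) R) (B : Matrix (Fin (n₁+n₂)) (Fin n₂) R) :
    M * cat A B = cat (M * A) (M * B) := by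
  ext i j
  induction j using Fin.addCases with
  | left j => simp [Matrix.mul_apply]
  | right j => simp [Matrix.mul_apply]

def blockDiag (h₁ : Matrix (Fin n₁) (Fin n₁) R) (h₂ : Matrix (Fin n₂) (Fin n₂) R) :
    Matrix (Fin (n₁+n₂)) (Fin (n₁+n₂)) R :=
  (Matrix.fromBlocks h₁ 0 0 h₂).submatrix finSumFinEquiv.symm finSumFinEquiv.symm

lemma det_blockDiag (h₁ : Matrix (Fin n₁) (Fin n₁) R) (h₂ : Matrix (Fin n₂) (Fin n₂) R) :
    (blockDiag h₁ h₂).det = h₁.det * h₂.det := by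
  rw [blockDiag, Matrix.det_submatrix_equiv_self, Matrix.det_fromBlocks_zero₂₁]

lemma cat_mul_blockDiag (A : Matrix (Fin (n₁+n₂)) (Fin n₁) R)
    (B : Matrix (Fin (n₁+n₂)) (Fin n₂) R)
    (h₁ : Matrix (Fin n₁) (Fin n₁) R) (h₂ : Matrix (Fin n₂) (Fin n₂) R) :
    cat A B * blockDiag h₁ h₂ = cat (A * h₁) (B * h₂) := by
  ext i j
  induction j using Fin.addCases with
  | left j =>
    simp [Matrix.mul_apply, blockDiag, Fin.sum_univ_add,
      finSumFinEquiv_symm_apply_castAdd, finSumFinEquiv_symm_apply_natAdd]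
  | right j =>
    simp [Matrix.mul_apply, blockDiag, Fin.sum_univ_add,
      finSumFinEquiv_symm_apply_castAdd, finSumFinEquiv_symm_apply_natAdd]


def A0 : Matrix (Fin (n₁+n₂)) (Fin n₁) ℂ :=
  (1 : Matrix (Fin (n₁+n₂)) (Fin (n₁+n₂)) ℂ).submatrix id (Fin.castAdd n₂)

def B0 : Matrix (Fin (n₁+n₂)) (Fin n₂) ℂ :=
  (1 : Matrix (Fin (n₁+n₂)) (Fin (n₁+n₂)) ℂ).submatrix id (Fin.natAdd n₁)

lemma cat_A0_B0 : cat (A0 (n₁ := n₁) (n₂ := n₂)) B0 = 1 := by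
  ext i j
  induction j using Fin.addCases with
  | left j => rw [cat_castAdd]; rfl
  | right j => rw [cat_natAdd]; rfl

lemma mul_A0 (M : Matrix (Fin (n₁+n₂)) (Fin (n₁+n₂)) ℂ) :
    M * A0 (n₁ := n₁) (n₂ := n₂) = M.submatrix id (Fin.castAdd n₂) := by
  have := Matrix.mul_submatrix_one (Equiv.refl (Fin (n₁+n₂))) (Fin.castAdd n₂) M
  simpa [A0] using this

lemma mul_B0 (M : Matrix (Fin (n₁+n₂)) (Fin (n₁+n₂)) ℂ) :
    M * B0 (n₁ := n₁) (n₂ := n₂) = M.submatrix id (Fin.natAdd n₁) := by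
  have := Matrix.mul_submatrix_one (Equiv.refl (Fin (n₁+n₂))) (Fin.natAdd n₁) M
  simpa [B0] using this

lemma cat_mul_A0 (A : Matrix (Fin (n₁+n₂)) (Fin n₁) ℂ) (B : Matrix (Fin (n₁+n₂)) (Fin n₂) ℂ) :
    cat A B * A0 (n₁ := n₁) (n₂ := n₂) = A := by
  rw [mul_A0]; ext i j; simp

lemma cat_mul_B0 (A : Matrix (Fin (n₁+n₂)) (Fin n₁) ℂ) (B : Matrix (Fin (n₁+n₂)) (Fin n₂) ℂ) :
    cat A B * B0 (n₁ := n₁) (n₂ := n₂) = B := by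
  rw [mul_B0]; ext i j; simp

noncomputable def catX (n₁ n₂ : ℕ) :
    Matrix (Fin (n₁+n₂)) (Fin (n₁+n₂)) (MvPolynomial (TriVars n₁ n₂ (n₁+n₂)) ℂ) :=
  cat (Matrix.of fun i j => X (Sum.inl (i, j))) (Matrix.of fun i j => X (Sum.inr (i, j)))

lemma eval_catX_det (A : Matrix (Fin (n₁+n₂)) (Fin n₁) ℂ) (B : Matrix (Fin (n₁+n₂)) (Fin n₂) ℂ) :
    MvPolynomial.eval (Sum.elim (fun p => A p.1 p.2) (fun p => B p.1 p.2)) (catX n₁ n₂).det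
      = (cat A B).det := by
  rw [RingHom.map_det]
  congr 1
  ext i j
  induction j using Fin.addCases with
  | left j => simp [catX]
  | right j => simp [catX]

lemma triEval_catX_det_pow (k : ℕ) (A : Matrix (Fin (n₁+n₂)) (Fin n₁) ℂ)
    (B : Matrix (Fin (n₁+n₂)) (Fin n₂) ℂ) :
    triEval ((catX n₁ n₂).det ^ k) A B = (cat A B).det ^ k := by
  rw [triEval, map_pow, eval_catX_det]

lemma units_inv_coe {n : ℕ} (u : (Matrix (Fin n) (Fin n) ℂ)ˣ)
    (N : Matrix (Fin n) (Fin n) ℂ) (h : (u : Matrix (Fin n) (Fin n) ℂ) * N = 1) :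
    ((u⁻¹ : (Matrix (Fin n) (Fin n) ℂ)ˣ) : Matrix (Fin n) (Fin n) ℂ) = N := by
  rw [Matrix.coe_units_inv, Matrix.inv_eq_right_inv h]

lemma det_units_inv {n : ℕ} (u : (Matrix (Fin n) (Fin n) ℂ)ˣ) :
    ((u⁻¹ : (Matrix (Fin n) (Fin n) ℂ)ˣ) : Matrix (Fin n) (Fin n) ℂ).det
      = (((u : Matrix (Fin n) (Fin n) ℂ)).det)⁻¹ := by
  rw [Matrix.coe_units_inv, Matrix.det_nonsing_inv, Ring.inverse_eq_inv']

lemma det_units_ne_zero {n : ℕ} (u : (Matrix (Fin n) (Fin n) ℂ)ˣ) :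
    ((u : Matrix (Fin n) (Fin n) ℂ)).det ≠ 0 := by
  have : IsUnit ((u : Matrix (Fin n) (Fin n) ℂ)).det :=
    (Matrix.isUnit_iff_isUnit_det _).mp u.isUnit
  exact this.ne_zero


lemma zpow_two_pow_eq_one {n : ℕ} (hn : 1 ≤ n) {z : ℤ} (h : ((2:ℂ) ^ n) ^ z = 1) : z = 0 := by
  have h2 : ((2:ℝ) ^ n) ^ z = ((2:ℝ) ^ n) ^ (0:ℤ) := by
    have h3 := congrArg norm h
    rw [norm_zpow, norm_pow, Complex.norm_two, norm_one] at h3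
    rw [zpow_zero]; exact h3
  exact zpow_right_injective₀ (by positivity) (ne_of_gt (one_lt_pow₀ one_lt_two (by omega))) h2

lemma backward_s4 (n₁ n₂ : ℕ) (σ₁ σ₂ σ₃ : ℤ) (h12 : σ₁ = σ₂) (h23 : σ₂ = -σ₃) (h1 : 0 ≤ σ₁) :
    ∃ f : MvPolynomial (TriVars n₁ n₂ (n₁ + n₂)) ℂ, f ≠ 0 ∧ IsTriSemiInvariant σ₁ σ₂ σ₃ f := by
  set k := σ₁.toNat with hkdef
  have hk1 : (k : ℤ) = σ₁ := Int.toNat_of_nonneg h1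
  refine ⟨(catX n₁ n₂).det ^ k, ?_, ?_⟩
  · intro h0
    have h1' := triEval_catX_det_pow (n₁ := n₁) (n₂ := n₂) k A0 B0
    rw [h0, cat_A0_B0] at h1'
    rw [triEval, map_zero] at h1'
    simp at h1'
  · intro g₁ g₂ g₃ A B
    rw [triEval_catX_det_pow, triEval_catX_det_pow]
    have hcat :
        cat ((g₃ : Matrix (Fin (n₁+n₂)) (Fin (n₁+n₂)) ℂ) * A * (g₁⁻¹ : Matrix (Fin n₁) (Fin n₁) ℂ))
            ((g₃ : Matrix (Fin (n₁+n₂)) (Fin (n₁+n₂)) ℂ) * B * (g₂⁻¹ : Matrix (Fin n₂) (Fin n₂) ℂ))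
          = (g₃ : Matrix (Fin (n₁+n₂)) (Fin (n₁+n₂)) ℂ)
            * (cat A B * blockDiag (g₁⁻¹ : Matrix (Fin n₁) (Fin n₁) ℂ)
                (g₂⁻¹ : Matrix (Fin n₂) (Fin n₂) ℂ)) := by
      rw [cat_mul_blockDiag, mul_cat, ← Matrix.mul_assoc, ← Matrix.mul_assoc]
    rw [hcat, Matrix.det_mul, Matrix.det_mul, det_blockDiag, Matrix.det_nonsing_inv,
      Matrix.det_nonsing_inv, Ring.inverse_eq_inv, Ring.inverse_eq_inv]
    have e1 : ((g₁ : Matrix (Fin n₁) (Fin n₁) ℂ).det) ^ (-σ₁)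
        = (((g₁ : Matrix (Fin n₁) (Fin n₁) ℂ).det)⁻¹) ^ k := by
      rw [← hk1, _root_.zpow_neg, zpow_natCast, inv_pow]
    have e2 : ((g₂ : Matrix (Fin n₂) (Fin n₂) ℂ).det) ^ (-σ₂)
        = (((g₂ : Matrix (Fin n₂) (Fin n₂) ℂ).det)⁻¹) ^ k := by
      rw [← h12, ← hk1, _root_.zpow_neg, zpow_natCast, inv_pow]
    have e3 : ((g₃ : Matrix (Fin (n₁+n₂)) (Fin (n₁+n₂)) ℂ).det) ^ (-σ₃)
        = ((g₃ : Matrix (Fin (n₁+n₂)) (Fin (n₁+n₂)) ℂ).det) ^ k := by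
      have : -σ₃ = (k : ℤ) := by omega
      rw [this, zpow_natCast]
    rw [e1, e2, e3, mul_pow, mul_pow]
    ring

lemma key_eq (n₁ n₂ : ℕ) (σ₁ σ₂ σ₃ : ℤ) (f : MvPolynomial (TriVars n₁ n₂ (n₁ + n₂)) ℂ)
    (hf : IsTriSemiInvariant σ₁ σ₂ σ₃ f) (hc : triEval f (A0 (n₁ := n₁) (n₂ := n₂)) B0 ≠ 0)
    (g₁ : (Matrix (Fin n₁) (Fin n₁) ℂ)ˣ) (g₂ : (Matrix (Fin n₂) (Fin n₂) ℂ)ˣ)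
    (g₃ : (Matrix (Fin (n₁+n₂)) (Fin (n₁+n₂)) ℂ)ˣ)
    (hA : (g₃ : Matrix (Fin (n₁+n₂)) (Fin (n₁+n₂)) ℂ) * A0 (n₁ := n₁) (n₂ := n₂) * (g₁⁻¹ : Matrix (Fin n₁) (Fin n₁) ℂ) = A0)
    (hB : (g₃ : Matrix (Fin (n₁+n₂)) (Fin (n₁+n₂)) ℂ) * B0 (n₁ := n₁) (n₂ := n₂) * (g₂⁻¹ : Matrix (Fin n₂) (Fin n₂) ℂ) = B0) :
    (g₁ : Matrix (Fin n₁) (Fin n₁) ℂ).det ^ (-σ₁)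
      * (g₂ : Matrix (Fin n₂) (Fin n₂) ℂ).det ^ (-σ₂)
      * (g₃ : Matrix (Fin (n₁+n₂)) (Fin (n₁+n₂)) ℂ).det ^ (-σ₃) = 1 := by
  have h := hf g₁ g₂ g₃ A0 B0
  rw [hA, hB] at h
  have h' : (1 : ℂ) * triEval f A0 B0
      = ((g₁ : Matrix (Fin n₁) (Fin n₁) ℂ).det ^ (-σ₁)
        * (g₂ : Matrix (Fin n₂) (Fin n₂) ℂ).det ^ (-σ₂)
        * (g₃ : Matrix (Fin (n₁+n₂)) (Fin (n₁+n₂)) ℂ).det ^ (-σ₃)) * triEval f A0 B0 := by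
    rw [one_mul]; exact h
  exact (mul_right_cancel₀ hc h'.symm)


lemma forward (n₁ n₂ : ℕ) (hn₁ : 1 ≤ n₁) (hn₂ : 1 ≤ n₂) (σ₁ σ₂ σ₃ : ℤ)
    (f : MvPolynomial (TriVars n₁ n₂ (n₁ + n₂)) ℂ) (hf0 : f ≠ 0)
    (hf : IsTriSemiInvariant σ₁ σ₂ σ₃ f) : σ₁ = σ₂ ∧ σ₂ = -σ₃ ∧ 0 ≤ σ₁ := by
  -- orbit relation
  have horb : ∀ (A : Matrix (Fin (n₁+n₂)) (Fin n₁) ℂ) (B : Matrix (Fin (n₁+n₂)) (Fin n₂) ℂ),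
      (cat A B).det ≠ 0 → triEval f A B = (cat A B).det ^ (-σ₃) * triEval f A0 B0 := by
    intro A B hd
    obtain ⟨u, hu⟩ := (Matrix.isUnit_iff_isUnit_det _).mpr (Ne.isUnit hd)
    have h := hf 1 1 u A0 B0
    simp only [Units.val_one, inv_one, Matrix.mul_one, Matrix.det_one, _root_.one_zpow,
      one_mul] at h
    rw [hu, cat_mul_A0, cat_mul_B0] at h
    exact h
  -- nonvanishing at the base point
  have hc : triEval f A0 B0 ≠ 0 := by
    intro hc0
    apply hf0
    have hP : (catX n₁ n₂).det * f = 0 := by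
      apply MvPolynomial.funext
      intro x
      rw [map_zero, _root_.map_mul]
      set A : Matrix (Fin (n₁+n₂)) (Fin n₁) ℂ := Matrix.of fun i j => x (Sum.inl (i, j)) with hA
      set B : Matrix (Fin (n₁+n₂)) (Fin n₂) ℂ := Matrix.of fun i j => x (Sum.inr (i, j)) with hB
      have hx : (Sum.elim (fun p => A p.1 p.2) (fun p => B p.1 p.2) :
          TriVars n₁ n₂ (n₁+n₂) → ℂ) = x := by
        funext v; cases v <;> rfl
      rw [← hx, eval_catX_det]
      by_cases hd : (cat A B).det = 0
      · rw [hd, zero_mul]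
      · have h2 := horb A B hd
        rw [triEval] at h2
        rw [h2, hc0, mul_zero, mul_zero]
    have hX : (catX n₁ n₂).det ≠ 0 := by
      intro h0
      have h3 := eval_catX_det (n₁ := n₁) (n₂ := n₂) A0 B0
      rw [h0, cat_A0_B0, map_zero, Matrix.det_one] at h3
      exact one_ne_zero h3.symm
    rcases mul_eq_zero.mp hP with h | h
    · exact absurd h hX
    · exact h
  -- σ₁ = -σ₃
  have hs1 : σ₁ = -σ₃ := by
    have hdet1 : ((2:ℂ) • (1 : Matrix (Fin n₁) (Fin n₁) ℂ)).det = 2 ^ n₁ := by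
      rw [Matrix.det_smul, Matrix.det_one, mul_one, Fintype.card_fin]
    have hu1 : IsUnit ((2:ℂ) • (1 : Matrix (Fin n₁) (Fin n₁) ℂ)) := by
      rw [Matrix.isUnit_iff_isUnit_det, hdet1]
      exact (isUnit_iff_ne_zero).mpr (pow_ne_zero _ two_ne_zero)
    obtain ⟨u1, hu1⟩ := hu1
    set D1 : Matrix (Fin (n₁+n₂)) (Fin (n₁+n₂)) ℂ :=
      Matrix.diagonal (Fin.addCases (fun _ : Fin n₁ => (2:ℂ)) (fun _ : Fin n₂ => 1)) with hD1
    have hD1det : D1.det = 2 ^ n₁ := by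
      rw [hD1, Matrix.det_diagonal, Fin.prod_univ_add]
      simp
    have hu3 : IsUnit D1 := by
      rw [Matrix.isUnit_iff_isUnit_det, hD1det]
      exact (isUnit_iff_ne_zero).mpr (pow_ne_zero _ two_ne_zero)
    obtain ⟨u3, hu3⟩ := hu3
    have hinv1 : ((u1 : Matrix (Fin n₁) (Fin n₁) ℂ))⁻¹ = (2⁻¹ : ℂ) • 1 := by
      apply Matrix.inv_eq_right_inv
      rw [hu1, Matrix.smul_mul, Matrix.mul_smul, smul_smul, Matrix.mul_one]
      norm_num
    have hDA : D1 * A0 (n₁ := n₁) (n₂ := n₂) = (2:ℂ) • A0 := by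
      ext i j
      rw [hD1, Matrix.diagonal_mul, Matrix.smul_apply, smul_eq_mul]
      rcases eq_or_ne i (Fin.castAdd n₂ j) with h | h
      · subst h; rw [Fin.addCases_left]
      · have h0 : A0 i j = 0 := by simp [A0, Matrix.one_apply, h]
        rw [h0, mul_zero, mul_zero]
    have hDB : D1 * B0 (n₁ := n₁) (n₂ := n₂) = B0 := by
      ext i j
      rw [hD1, Matrix.diagonal_mul]
      rcases eq_or_ne i (Fin.natAdd n₁ j) with h | h
      · subst h; rw [Fin.addCases_right, one_mul]
      · have h0 : B0 i j = 0 := by simp [B0, Matrix.one_apply, h]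
        rw [h0, mul_zero]
    have hA : (u3 : Matrix (Fin (n₁+n₂)) (Fin (n₁+n₂)) ℂ) * A0 (n₁ := n₁) (n₂ := n₂)
        * ((u1 : Matrix (Fin n₁) (Fin n₁) ℂ))⁻¹ = A0 := by
      rw [hu3, hinv1, hDA, Matrix.smul_mul, Matrix.mul_smul, smul_smul, Matrix.mul_one]
      norm_num
    have hB : (u3 : Matrix (Fin (n₁+n₂)) (Fin (n₁+n₂)) ℂ) * B0 (n₁ := n₁) (n₂ := n₂)
        * ((1 : (Matrix (Fin n₂) (Fin n₂) ℂ)ˣ) : Matrix (Fin n₂) (Fin n₂) ℂ)⁻¹ = B0 := by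
      rw [Units.val_one, inv_one, Matrix.mul_one, hu3, hDB]
    have hkey := key_eq n₁ n₂ σ₁ σ₂ σ₃ f hf hc u1 1 u3 hA hB
    rw [hu1, hu3, hdet1, hD1det, Units.val_one, Matrix.det_one, _root_.one_zpow, mul_one] at hkey
    rw [← zpow_add₀ (pow_ne_zero n₁ (two_ne_zero (α := ℂ)))] at hkey
    have := zpow_two_pow_eq_one hn₁ hkey
    omega
  -- σ₂ = -σ₃
  have hs2 : σ₂ = -σ₃ := by
    have hdet1 : ((2:ℂ) • (1 : Matrix (Fin n₂) (Fin n₂) ℂ)).det = 2 ^ n₂ := by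
      rw [Matrix.det_smul, Matrix.det_one, mul_one, Fintype.card_fin]
    have hu1 : IsUnit ((2:ℂ) • (1 : Matrix (Fin n₂) (Fin n₂) ℂ)) := by
      rw [Matrix.isUnit_iff_isUnit_det, hdet1]
      exact (isUnit_iff_ne_zero).mpr (pow_ne_zero _ two_ne_zero)
    obtain ⟨u2, hu2⟩ := hu1
    set D2 : Matrix (Fin (n₁+n₂)) (Fin (n₁+n₂)) ℂ :=
      Matrix.diagonal (Fin.addCases (fun _ : Fin n₁ => (1:ℂ)) (fun _ : Fin n₂ => 2)) with hD2
    have hD2det : D2.det = 2 ^ n₂ := by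
      rw [hD2, Matrix.det_diagonal, Fin.prod_univ_add]
      simp
    have hu3 : IsUnit D2 := by
      rw [Matrix.isUnit_iff_isUnit_det, hD2det]
      exact (isUnit_iff_ne_zero).mpr (pow_ne_zero _ two_ne_zero)
    obtain ⟨u3, hu3⟩ := hu3
    have hinv2 : ((u2 : Matrix (Fin n₂) (Fin n₂) ℂ))⁻¹ = (2⁻¹ : ℂ) • 1 := by
      apply Matrix.inv_eq_right_inv
      rw [hu2, Matrix.smul_mul, Matrix.mul_smul, smul_smul, Matrix.mul_one]
      norm_num
    have hDA : D2 * A0 (n₁ := n₁) (n₂ := n₂) = A0 := by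
      ext i j
      rw [hD2, Matrix.diagonal_mul]
      rcases eq_or_ne i (Fin.castAdd n₂ j) with h | h
      · subst h; rw [Fin.addCases_left, one_mul]
      · have h0 : A0 i j = 0 := by simp [A0, Matrix.one_apply, h]
        rw [h0, mul_zero]
    have hDB : D2 * B0 (n₁ := n₁) (n₂ := n₂) = (2:ℂ) • B0 := by
      ext i j
      rw [hD2, Matrix.diagonal_mul, Matrix.smul_apply, smul_eq_mul]
      rcases eq_or_ne i (Fin.natAdd n₁ j) with h | h
      · subst h; rw [Fin.addCases_right]
      · have h0 : B0 i j = 0 := by simp [B0, Matrix.one_apply, h]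
        rw [h0, mul_zero, mul_zero]
    have hA : (u3 : Matrix (Fin (n₁+n₂)) (Fin (n₁+n₂)) ℂ) * A0 (n₁ := n₁) (n₂ := n₂)
        * ((1 : (Matrix (Fin n₁) (Fin n₁) ℂ)ˣ) : Matrix (Fin n₁) (Fin n₁) ℂ)⁻¹ = A0 := by
      rw [Units.val_one, inv_one, Matrix.mul_one, hu3, hDA]
    have hB : (u3 : Matrix (Fin (n₁+n₂)) (Fin (n₁+n₂)) ℂ) * B0 (n₁ := n₁) (n₂ := n₂)
        * ((u2 : Matrix (Fin n₂) (Fin n₂) ℂ))⁻¹ = B0 := by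
      rw [hu3, hinv2, hDB, Matrix.smul_mul, Matrix.mul_smul, smul_smul, Matrix.mul_one]
      norm_num
    have hkey := key_eq n₁ n₂ σ₁ σ₂ σ₃ f hf hc 1 u2 u3 hA hB
    rw [hu2, hu3, hdet1, hD2det, Units.val_one, Matrix.det_one, _root_.one_zpow, one_mul] at hkey
    rw [← zpow_add₀ (pow_ne_zero n₂ (two_ne_zero (α := ℂ)))] at hkey
    have := zpow_two_pow_eq_one hn₂ hkey
    omega
  refine ⟨by omega, hs2, ?_⟩
  -- nonnegativity via a polynomial-in-t argument
  by_contra hneg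
  push_neg at hneg
  set φ0 : TriVars n₁ n₂ (n₁+n₂) → ℂ :=
    Sum.elim (fun p => A0 (n₁ := n₁) (n₂ := n₂) p.1 p.2) (fun p => B0 p.1 p.2) with hφ0
  set q : Polynomial ℂ :=
    MvPolynomial.eval₂ Polynomial.C (fun v => Polynomial.C (φ0 v) * Polynomial.X) f with hqdef
  have hq : ∀ t : ℂ, Polynomial.eval t q = MvPolynomial.eval (fun v => φ0 v * t) f := by
    intro t
    rw [hqdef]
    have h1 := MvPolynomial.eval₂_comp_left (Polynomial.evalRingHom t) Polynomial.C
      (fun v => Polynomial.C (φ0 v) * Polynomial.X) f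
    have h2 : (Polynomial.evalRingHom t).comp (Polynomial.C) = RingHom.id ℂ := by
      ext a; simp
    have h3 : ((Polynomial.evalRingHom t) ∘ fun v => Polynomial.C (φ0 v) * Polynomial.X)
        = fun v => φ0 v * t := by
      funext v; simp
    rw [show Polynomial.eval t (MvPolynomial.eval₂ Polynomial.C
        (fun v => Polynomial.C (φ0 v) * Polynomial.X) f)
      = (Polynomial.evalRingHom t) (MvPolynomial.eval₂ Polynomial.C
        (fun v => Polynomial.C (φ0 v) * Polynomial.X) f) from rfl, h1, h2, h3,
        MvPolynomial.eval₂_id]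
  set m : ℕ := (((n₁ + n₂ : ℕ) : ℤ) * (-σ₁)).toNat with hmdef
  have hmz : (m : ℤ) = ((n₁ + n₂ : ℕ) : ℤ) * (-σ₁) := by
    rw [hmdef]
    apply Int.toNat_of_nonneg
    exact mul_nonneg (by positivity) (by omega)
  have hm0 : 0 < m := by
    have h1 : (1:ℤ) ≤ ((n₁ + n₂ : ℕ) : ℤ) := by exact_mod_cast Nat.one_le_iff_ne_zero.mpr (by omega)
    have h2 : (1:ℤ) ≤ -σ₁ := by omega
    have h3 : (1:ℤ) ≤ ((n₁ + n₂ : ℕ) : ℤ) * (-σ₁) := by nlinarith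
    omega
  have hval : ∀ t : ℂ, t ≠ 0 →
      Polynomial.eval t (Polynomial.X ^ m * q - Polynomial.C (triEval f A0 B0)) = 0 := by
    intro t ht
    have hut : IsUnit (t • (1 : Matrix (Fin (n₁+n₂)) (Fin (n₁+n₂)) ℂ)) := by
      rw [Matrix.isUnit_iff_isUnit_det, Matrix.det_smul, Matrix.det_one, mul_one,
        Fintype.card_fin]
      exact (isUnit_iff_ne_zero).mpr (pow_ne_zero _ ht)
    obtain ⟨ut, hut⟩ := hut
    have h := hf 1 1 ut A0 B0
    simp only [Units.val_one, inv_one, Matrix.mul_one, Matrix.det_one, _root_.one_zpow,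
      one_mul] at h
    rw [hut, Matrix.smul_mul, Matrix.smul_mul, Matrix.one_mul, Matrix.one_mul,
      Matrix.det_smul, Matrix.det_one, mul_one, Fintype.card_fin] at h
    have hpt : (Sum.elim (fun p => (t • A0 (n₁ := n₁) (n₂ := n₂)) p.1 p.2)
        (fun p => (t • B0 (n₁ := n₁) (n₂ := n₂)) p.1 p.2) : TriVars n₁ n₂ (n₁+n₂) → ℂ)
        = fun v => φ0 v * t := by
      funext v
      cases v with
      | inl p => simp [hφ0, Matrix.smul_apply, mul_comm]
      | inr p => simp [hφ0, Matrix.smul_apply, mul_comm]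
    rw [triEval, hpt] at h
    rw [Polynomial.eval_sub, Polynomial.eval_mul, Polynomial.eval_pow, Polynomial.eval_X,
      Polynomial.eval_C, hq, h, sub_eq_zero]
    have hms : -σ₃ = σ₁ := by omega
    rw [hms, ← zpow_natCast t (n₁ + n₂), ← _root_.zpow_mul, ← zpow_natCast t m, ← mul_assoc,
      ← zpow_add₀ ht]
    have : (m : ℤ) + ((n₁ + n₂ : ℕ) : ℤ) * σ₁ = 0 := by rw [hmz]; ring
    rw [this, zpow_zero, one_mul]
  have hPzero : Polynomial.X ^ m * q - Polynomial.C (triEval f A0 B0) = 0 := by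
    apply Polynomial.eq_zero_of_infinite_isRoot
    apply Set.Infinite.mono (s := {x : ℂ | x ≠ 0})
    · intro x hx
      exact hval x hx
    · exact Set.Finite.infinite_compl (Set.finite_singleton 0)
  have := congrArg (Polynomial.eval 0) hPzero
  rw [Polynomial.eval_sub, Polynomial.eval_mul, Polynomial.eval_pow, Polynomial.eval_X,
    Polynomial.eval_C, Polynomial.eval_zero, zero_pow hm0.ne',
    zero_mul, zero_sub, neg_eq_zero] at this
  exact hc this

end TriAux

/-- for the quiver `1 → 3 ← 2` with dimension vector `(n₁, n₂, n₁ + n₂)`,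
a weight `(σ₁, σ₂, σ₃)` admits a nonzero semi-invariant iff `σ₁ = σ₂ = -σ₃` and `σ₁ ≥ 0`. -/
theorem tri_semiinvariant_iff_sum (n₁ n₂ : ℕ) (hn₁ : 1 ≤ n₁) (hn₂ : 1 ≤ n₂)
    (σ₁ σ₂ σ₃ : ℤ) :
    (∃ f : MvPolynomial (TriVars n₁ n₂ (n₁ + n₂)) ℂ, f ≠ 0 ∧ IsTriSemiInvariant σ₁ σ₂ σ₃ f)
      ↔ (σ₁ = σ₂ ∧ σ₂ = -σ₃ ∧ 0 ≤ σ₁) := by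
  constructor
  · rintro ⟨f, hf0, hf⟩
    exact TriAux.forward n₁ n₂ hn₁ hn₂ σ₁ σ₂ σ₃ f hf0 hf
  · rintro ⟨h12, h23, h1⟩
    exact TriAux.backward_s4 n₁ n₂ σ₁ σ₂ σ₃ h12 h23 h1
end

section
/- Let n₁, n₂, n₃ ≥ 1 with n₁ ≠ n₃, n₂ ≠ n₃, and n₁ + n₂ ≠ n₃, and consider the quiver 1 → 3 ← 2 with dimension vector (n₁, n₂, n₃). Then the only weight σ ∈ ℤ³ admitting a nonzero semi-invariant polynomial is σ = (0, 0, 0). -/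
namespace TriAux

open MvPolynomial Matrix

/-! ### Generic helpers -/

lemma eval_aeval' {τ σ : Type*} (v : τ → ℂ) (g : σ → MvPolynomial τ ℂ)
    (p : MvPolynomial σ ℂ) :
    eval v (aeval g p) = eval (fun s => eval v (g s)) p := by
  rw [aeval_def, eval_eval₂]
  have h : (eval v).comp (algebraMap ℂ (MvPolynomial τ ℂ)) = RingHom.id ℂ := by
    ext c; simp [MvPolynomial.algebraMap_eq]
  rw [h, eval₂_id]

lemma promote_aux {V : Type*} (p q d : MvPolynomial V ℂ) (hd : d ≠ 0)
    (h : ∀ v : V → ℂ, eval v d ≠ 0 → eval v p = eval v q) : p = q := by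
  have h0 : (p - q) * d = 0 := by
    apply MvPolynomial.funext (q := 0)
    intro x
    by_cases hx : eval x d = 0
    · simp [hx]
    · simp [h x hx, hx]
  rcases mul_eq_zero.mp h0 with h1 | h1
  · exact sub_eq_zero.mp h1
  · exact absurd h1 hd

lemma triEval_eq_eval {n₁ n₂ n₃ : ℕ} (f : MvPolynomial (TriVars n₁ n₂ n₃) ℂ)
    (v : TriVars n₁ n₂ n₃ → ℂ) :
    eval v f = triEval f (fun i j => v (Sum.inl (i, j))) (fun i j => v (Sum.inr (i, j))) := by
  have hv : v = Sum.elim (fun p : Fin n₃ × Fin n₁ => v (Sum.inl (p.1, p.2)))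
      (fun p : Fin n₃ × Fin n₂ => v (Sum.inr (p.1, p.2))) := by
    funext s; cases s <;> rfl
  conv_lhs => rw [hv]
  rfl

lemma exists_triEval_ne_zero {n₁ n₂ n₃ : ℕ} {f : MvPolynomial (TriVars n₁ n₂ n₃) ℂ}
    (hf : f ≠ 0) : ∃ A B, triEval f A B ≠ 0 := by
  by_contra h
  push_neg at h
  apply hf
  apply MvPolynomial.funext (q := 0)
  intro v
  rw [map_zero, triEval_eq_eval]
  exact h _ _

lemma zpow_toNat_shuffle {d : ℂ} (hd : d ≠ 0) (z : ℤ) {s t : ℂ} (h : s = d ^ z * t) :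
    s * d ^ (-z).toNat = d ^ z.toNat * t := by
  subst h
  rw [← zpow_natCast d ((-z).toNat), ← zpow_natCast d z.toNat, mul_right_comm,
    ← zpow_add₀ hd]
  congr 2
  omega

/-! ### Invertible-case semi-invariance consequences -/

variable {n₁ n₂ n₃ : ℕ} {σ₁ σ₂ σ₃ : ℤ} {f : MvPolynomial (TriVars n₁ n₂ n₃) ℂ}

lemma inv_step1 (hf : IsTriSemiInvariant σ₁ σ₂ σ₃ f) (u : (Matrix (Fin n₁) (Fin n₁) ℂ)ˣ)
    (A : Matrix (Fin n₃) (Fin n₁) ℂ) (B : Matrix (Fin n₃) (Fin n₂) ℂ) :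
    triEval f (A * (u : Matrix (Fin n₁) (Fin n₁) ℂ)) B
      = (u : Matrix (Fin n₁) (Fin n₁) ℂ).det ^ σ₁ * triEval f A B := by
  have hd : (u : Matrix (Fin n₁) (Fin n₁) ℂ).det ≠ 0 :=
    ((Matrix.isUnit_iff_isUnit_det _).mp u.isUnit).ne_zero
  have h := hf u 1 1 (A * (u : Matrix (Fin n₁) (Fin n₁) ℂ)) B
  simp only [inv_one, Units.val_one, Matrix.one_mul, Matrix.mul_one, Matrix.det_one,
    _root_.one_zpow, mul_one, one_mul] at h
  rw [Matrix.mul_assoc, Matrix.mul_nonsing_inv _ ((Matrix.isUnit_iff_isUnit_det _).mp u.isUnit),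
    Matrix.mul_one] at h
  rw [h, ← mul_assoc, ← zpow_add₀ hd, add_neg_cancel, zpow_zero, one_mul]

lemma inv_step2 (hf : IsTriSemiInvariant σ₁ σ₂ σ₃ f) (u : (Matrix (Fin n₂) (Fin n₂) ℂ)ˣ)
    (A : Matrix (Fin n₃) (Fin n₁) ℂ) (B : Matrix (Fin n₃) (Fin n₂) ℂ) :
    triEval f A (B * (u : Matrix (Fin n₂) (Fin n₂) ℂ))
      = (u : Matrix (Fin n₂) (Fin n₂) ℂ).det ^ σ₂ * triEval f A B := by
  have hd : (u : Matrix (Fin n₂) (Fin n₂) ℂ).det ≠ 0 :=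
    ((Matrix.isUnit_iff_isUnit_det _).mp u.isUnit).ne_zero
  have h := hf 1 u 1 A (B * (u : Matrix (Fin n₂) (Fin n₂) ℂ))
  simp only [inv_one, Units.val_one, Matrix.one_mul, Matrix.mul_one, Matrix.det_one,
    _root_.one_zpow, mul_one, one_mul] at h
  rw [Matrix.mul_assoc, Matrix.mul_nonsing_inv _ ((Matrix.isUnit_iff_isUnit_det _).mp u.isUnit),
    Matrix.mul_one] at h
  rw [h, ← mul_assoc, ← zpow_add₀ hd, add_neg_cancel, zpow_zero, one_mul]

lemma inv_step3 (hf : IsTriSemiInvariant σ₁ σ₂ σ₃ f) (u : (Matrix (Fin n₃) (Fin n₃) ℂ)ˣ)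
    (A : Matrix (Fin n₃) (Fin n₁) ℂ) (B : Matrix (Fin n₃) (Fin n₂) ℂ) :
    triEval f ((u : Matrix (Fin n₃) (Fin n₃) ℂ) * A) ((u : Matrix (Fin n₃) (Fin n₃) ℂ) * B)
      = (u : Matrix (Fin n₃) (Fin n₃) ℂ).det ^ (-σ₃) * triEval f A B := by
  have h := hf 1 1 u A B
  simpa only [inv_one, Units.val_one, Matrix.one_mul, Matrix.mul_one, Matrix.det_one,
    _root_.one_zpow, mul_one, one_mul] using h

/-! ### Promoted polynomial identities -/

lemma key1 (hf : IsTriSemiInvariant σ₁ σ₂ σ₃ f) (X : Matrix (Fin n₁) (Fin n₁) ℂ)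
    (A : Matrix (Fin n₃) (Fin n₁) ℂ) (B : Matrix (Fin n₃) (Fin n₂) ℂ) :
    triEval f (A * X) B * X.det ^ (-σ₁).toNat = X.det ^ σ₁.toNat * triEval f A B := by
  classical
  let V : Type := (Fin n₁ × Fin n₁) ⊕ TriVars n₁ n₂ n₃
  let Xp : Matrix (Fin n₁) (Fin n₁) (MvPolynomial V ℂ) := fun i j => MvPolynomial.X (Sum.inl (i, j))
  let Ap : Matrix (Fin n₃) (Fin n₁) (MvPolynomial V ℂ) := fun i j => MvPolynomial.X (Sum.inr (Sum.inl (i, j)))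
  let Bp : Matrix (Fin n₃) (Fin n₂) (MvPolynomial V ℂ) := fun i j => MvPolynomial.X (Sum.inr (Sum.inr (i, j)))
  let sub : TriVars n₁ n₂ n₃ → MvPolynomial V ℂ :=
    Sum.elim (fun p => (Ap * Xp) p.1 p.2) (fun p => Bp p.1 p.2)
  let emb : TriVars n₁ n₂ n₃ → MvPolynomial V ℂ := fun t => MvPolynomial.X (Sum.inr t)
  let Xv : (V → ℂ) → Matrix (Fin n₁) (Fin n₁) ℂ := fun v i j => v (Sum.inl (i, j))
  let Av : (V → ℂ) → Matrix (Fin n₃) (Fin n₁) ℂ := fun v i j => v (Sum.inr (Sum.inl (i, j)))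
  let Bv : (V → ℂ) → Matrix (Fin n₃) (Fin n₂) ℂ := fun v i j => v (Sum.inr (Sum.inr (i, j)))
  have e_det : ∀ v : V → ℂ, eval v Xp.det = (Xv v).det := by
    intro v
    rw [RingHom.map_det, RingHom.mapMatrix_apply]
    congr 1
    ext i j
    rw [Matrix.map_apply]; simp [Xp, Xv]
  have e_sub : ∀ v : V → ℂ, eval v (aeval sub f) = triEval f (Av v * Xv v) (Bv v) := by
    intro v
    rw [eval_aeval']
    have h : (fun s => eval v (sub s))
        = Sum.elim (fun p : Fin n₃ × Fin n₁ => (Av v * Xv v) p.1 p.2)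
            (fun p : Fin n₃ × Fin n₂ => Bv v p.1 p.2) := by
      funext s
      cases s with
      | inl p =>
        simp only [sub, Sum.elim_inl]; rw [Matrix.mul_apply, Matrix.mul_apply]; simp [Ap, Xp, Av, Xv, map_sum]
      | inr p => simp [sub, Bp, Bv]
    rw [h]; rfl
  have e_emb : ∀ v : V → ℂ, eval v (aeval emb f) = triEval f (Av v) (Bv v) := by
    intro v
    rw [eval_aeval']
    have h : (fun s => eval v (emb s)) = fun s : TriVars n₁ n₂ n₃ => v (Sum.inr s) := by
      funext s; simp [emb]
    rw [h]
    exact triEval_eq_eval f _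
  have hdet_ne : Xp.det ≠ 0 := by
    intro hc
    have h1 := congrArg (eval (Sum.elim (fun p : Fin n₁ × Fin n₁ => if p.1 = p.2 then (1:ℂ) else 0)
      (fun _ => 0))) hc
    rw [e_det, map_zero] at h1
    have h2 : Xv (Sum.elim (fun p : Fin n₁ × Fin n₁ => if p.1 = p.2 then (1:ℂ) else 0)
        (fun _ => 0)) = 1 := by
      ext i j; simp [Xv, Matrix.one_apply]
    rw [h2, Matrix.det_one] at h1
    exact one_ne_zero h1
  have main : aeval sub f * Xp.det ^ (-σ₁).toNat = Xp.det ^ σ₁.toNat * aeval emb f := by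
    apply promote_aux _ _ Xp.det hdet_ne
    intro v hv
    rw [_root_.map_mul, _root_.map_mul, map_pow, map_pow, e_det, e_sub, e_emb]
    have hXv : (Xv v).det ≠ 0 := by rwa [e_det] at hv
    obtain ⟨u, hu⟩ := (Matrix.isUnit_iff_isUnit_det _).mpr (isUnit_iff_ne_zero.mpr hXv)
    exact zpow_toNat_shuffle hXv σ₁ (by rw [← hu]; exact inv_step1 hf u (Av v) (Bv v))
  have fin := congrArg (eval (Sum.elim (fun p : Fin n₁ × Fin n₁ => X p.1 p.2)
    (Sum.elim (fun p : Fin n₃ × Fin n₁ => A p.1 p.2) (fun p : Fin n₃ × Fin n₂ => B p.1 p.2)))) main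
  rw [_root_.map_mul, _root_.map_mul, map_pow, map_pow, e_det, e_sub, e_emb] at fin
  exact fin

lemma key2 (hf : IsTriSemiInvariant σ₁ σ₂ σ₃ f) (Y : Matrix (Fin n₂) (Fin n₂) ℂ)
    (A : Matrix (Fin n₃) (Fin n₁) ℂ) (B : Matrix (Fin n₃) (Fin n₂) ℂ) :
    triEval f A (B * Y) * Y.det ^ (-σ₂).toNat = Y.det ^ σ₂.toNat * triEval f A B := by
  classical
  let V : Type := (Fin n₂ × Fin n₂) ⊕ TriVars n₁ n₂ n₃
  let Yp : Matrix (Fin n₂) (Fin n₂) (MvPolynomial V ℂ) := fun i j => MvPolynomial.X (Sum.inl (i, j))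
  let Ap : Matrix (Fin n₃) (Fin n₁) (MvPolynomial V ℂ) := fun i j => MvPolynomial.X (Sum.inr (Sum.inl (i, j)))
  let Bp : Matrix (Fin n₃) (Fin n₂) (MvPolynomial V ℂ) := fun i j => MvPolynomial.X (Sum.inr (Sum.inr (i, j)))
  let sub : TriVars n₁ n₂ n₃ → MvPolynomial V ℂ :=
    Sum.elim (fun p => Ap p.1 p.2) (fun p => (Bp * Yp) p.1 p.2)
  let emb : TriVars n₁ n₂ n₃ → MvPolynomial V ℂ := fun t => MvPolynomial.X (Sum.inr t)
  let Yv : (V → ℂ) → Matrix (Fin n₂) (Fin n₂) ℂ := fun v i j => v (Sum.inl (i, j))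
  let Av : (V → ℂ) → Matrix (Fin n₃) (Fin n₁) ℂ := fun v i j => v (Sum.inr (Sum.inl (i, j)))
  let Bv : (V → ℂ) → Matrix (Fin n₃) (Fin n₂) ℂ := fun v i j => v (Sum.inr (Sum.inr (i, j)))
  have e_det : ∀ v : V → ℂ, eval v Yp.det = (Yv v).det := by
    intro v
    rw [RingHom.map_det, RingHom.mapMatrix_apply]
    congr 1
    ext i j
    rw [Matrix.map_apply]; simp [Yp, Yv]
  have e_sub : ∀ v : V → ℂ, eval v (aeval sub f) = triEval f (Av v) (Bv v * Yv v) := by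
    intro v
    rw [eval_aeval']
    have h : (fun s => eval v (sub s))
        = Sum.elim (fun p : Fin n₃ × Fin n₁ => Av v p.1 p.2)
            (fun p : Fin n₃ × Fin n₂ => (Bv v * Yv v) p.1 p.2) := by
      funext s
      cases s with
      | inl p => simp [sub, Ap, Av]
      | inr p => simp only [sub, Sum.elim_inr]; rw [Matrix.mul_apply, Matrix.mul_apply]; simp [Bp, Yp, Bv, Yv, map_sum]
    rw [h]; rfl
  have e_emb : ∀ v : V → ℂ, eval v (aeval emb f) = triEval f (Av v) (Bv v) := by
    intro v
    rw [eval_aeval']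
    have h : (fun s => eval v (emb s)) = fun s : TriVars n₁ n₂ n₃ => v (Sum.inr s) := by
      funext s; simp [emb]
    rw [h]
    exact triEval_eq_eval f _
  have hdet_ne : Yp.det ≠ 0 := by
    intro hc
    have h1 := congrArg (eval (Sum.elim (fun p : Fin n₂ × Fin n₂ => if p.1 = p.2 then (1:ℂ) else 0)
      (fun _ => 0))) hc
    rw [e_det, map_zero] at h1
    have h2 : Yv (Sum.elim (fun p : Fin n₂ × Fin n₂ => if p.1 = p.2 then (1:ℂ) else 0)
        (fun _ => 0)) = 1 := by
      ext i j; simp [Yv, Matrix.one_apply]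
    rw [h2, Matrix.det_one] at h1
    exact one_ne_zero h1
  have main : aeval sub f * Yp.det ^ (-σ₂).toNat = Yp.det ^ σ₂.toNat * aeval emb f := by
    apply promote_aux _ _ Yp.det hdet_ne
    intro v hv
    rw [_root_.map_mul, _root_.map_mul, map_pow, map_pow, e_det, e_sub, e_emb]
    have hYv : (Yv v).det ≠ 0 := by rwa [e_det] at hv
    obtain ⟨u, hu⟩ := (Matrix.isUnit_iff_isUnit_det _).mpr (isUnit_iff_ne_zero.mpr hYv)
    exact zpow_toNat_shuffle hYv σ₂ (by rw [← hu]; exact inv_step2 hf u (Av v) (Bv v))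
  have fin := congrArg (eval (Sum.elim (fun p : Fin n₂ × Fin n₂ => Y p.1 p.2)
    (Sum.elim (fun p : Fin n₃ × Fin n₁ => A p.1 p.2) (fun p : Fin n₃ × Fin n₂ => B p.1 p.2)))) main
  rw [_root_.map_mul, _root_.map_mul, map_pow, map_pow, e_det, e_sub, e_emb] at fin
  exact fin

lemma key3 (hf : IsTriSemiInvariant σ₁ σ₂ σ₃ f) (Z : Matrix (Fin n₃) (Fin n₃) ℂ)
    (A : Matrix (Fin n₃) (Fin n₁) ℂ) (B : Matrix (Fin n₃) (Fin n₂) ℂ) :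
    triEval f (Z * A) (Z * B) * Z.det ^ σ₃.toNat = Z.det ^ (-σ₃).toNat * triEval f A B := by
  classical
  let V : Type := (Fin n₃ × Fin n₃) ⊕ TriVars n₁ n₂ n₃
  let Zp : Matrix (Fin n₃) (Fin n₃) (MvPolynomial V ℂ) := fun i j => MvPolynomial.X (Sum.inl (i, j))
  let Ap : Matrix (Fin n₃) (Fin n₁) (MvPolynomial V ℂ) := fun i j => MvPolynomial.X (Sum.inr (Sum.inl (i, j)))
  let Bp : Matrix (Fin n₃) (Fin n₂) (MvPolynomial V ℂ) := fun i j => MvPolynomial.X (Sum.inr (Sum.inr (i, j)))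
  let sub : TriVars n₁ n₂ n₃ → MvPolynomial V ℂ :=
    Sum.elim (fun p => (Zp * Ap) p.1 p.2) (fun p => (Zp * Bp) p.1 p.2)
  let emb : TriVars n₁ n₂ n₃ → MvPolynomial V ℂ := fun t => MvPolynomial.X (Sum.inr t)
  let Zv : (V → ℂ) → Matrix (Fin n₃) (Fin n₃) ℂ := fun v i j => v (Sum.inl (i, j))
  let Av : (V → ℂ) → Matrix (Fin n₃) (Fin n₁) ℂ := fun v i j => v (Sum.inr (Sum.inl (i, j)))
  let Bv : (V → ℂ) → Matrix (Fin n₃) (Fin n₂) ℂ := fun v i j => v (Sum.inr (Sum.inr (i, j)))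
  have e_det : ∀ v : V → ℂ, eval v Zp.det = (Zv v).det := by
    intro v
    rw [RingHom.map_det, RingHom.mapMatrix_apply]
    congr 1
    ext i j
    rw [Matrix.map_apply]; simp [Zp, Zv]
  have e_sub : ∀ v : V → ℂ, eval v (aeval sub f) = triEval f (Zv v * Av v) (Zv v * Bv v) := by
    intro v
    rw [eval_aeval']
    have h : (fun s => eval v (sub s))
        = Sum.elim (fun p : Fin n₃ × Fin n₁ => (Zv v * Av v) p.1 p.2)
            (fun p : Fin n₃ × Fin n₂ => (Zv v * Bv v) p.1 p.2) := by
      funext s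
      cases s with
      | inl p => simp only [sub, Sum.elim_inl]; rw [Matrix.mul_apply, Matrix.mul_apply]; simp [Zp, Ap, Zv, Av, map_sum]
      | inr p => simp only [sub, Sum.elim_inr]; rw [Matrix.mul_apply, Matrix.mul_apply]; simp [Zp, Bp, Zv, Bv, map_sum]
    rw [h]; rfl
  have e_emb : ∀ v : V → ℂ, eval v (aeval emb f) = triEval f (Av v) (Bv v) := by
    intro v
    rw [eval_aeval']
    have h : (fun s => eval v (emb s)) = fun s : TriVars n₁ n₂ n₃ => v (Sum.inr s) := by
      funext s; simp [emb]
    rw [h]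
    exact triEval_eq_eval f _
  have hdet_ne : Zp.det ≠ 0 := by
    intro hc
    have h1 := congrArg (eval (Sum.elim (fun p : Fin n₃ × Fin n₃ => if p.1 = p.2 then (1:ℂ) else 0)
      (fun _ => 0))) hc
    rw [e_det, map_zero] at h1
    have h2 : Zv (Sum.elim (fun p : Fin n₃ × Fin n₃ => if p.1 = p.2 then (1:ℂ) else 0)
        (fun _ => 0)) = 1 := by
      ext i j; simp [Zv, Matrix.one_apply]
    rw [h2, Matrix.det_one] at h1
    exact one_ne_zero h1
  have main : aeval sub f * Zp.det ^ σ₃.toNat = Zp.det ^ (-σ₃).toNat * aeval emb f := by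
    apply promote_aux _ _ Zp.det hdet_ne
    intro v hv
    rw [_root_.map_mul, _root_.map_mul, map_pow, map_pow, e_det, e_sub, e_emb]
    have hZv : (Zv v).det ≠ 0 := by rwa [e_det] at hv
    obtain ⟨u, hu⟩ := (Matrix.isUnit_iff_isUnit_det _).mpr (isUnit_iff_ne_zero.mpr hZv)
    simpa [neg_neg] using zpow_toNat_shuffle hZv (-σ₃)
      (by rw [← hu]; exact inv_step3 hf u (Av v) (Bv v))
  have fin := congrArg (eval (Sum.elim (fun p : Fin n₃ × Fin n₃ => Z p.1 p.2)
    (Sum.elim (fun p : Fin n₃ × Fin n₁ => A p.1 p.2) (fun p : Fin n₃ × Fin n₂ => B p.1 p.2)))) main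
  rw [_root_.map_mul, _root_.map_mul, map_pow, map_pow, e_det, e_sub, e_emb] at fin
  exact fin

variable {R : Type*} [CommRing R] {a k b : ℕ}

/-- canonical A₀ : columns e₀..e_{a+k-1} -/
def cA0 : Matrix (Fin (a+k+b)) (Fin (a+k)) R :=
  fun i j => if (i : ℕ) = (j : ℕ) then 1 else 0

/-- canonical B₀ : columns e_a..e_{a+k+b-1} -/
def cB0 : Matrix (Fin (a+k+b)) (Fin (k+b)) R :=
  fun i j => if (i : ℕ) = (j : ℕ) + a then 1 else 0

/-- the square matrix [A | B-last-b-columns] -/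
def Ztil (A : Matrix (Fin (a+k+b)) (Fin (a+k)) R) (B : Matrix (Fin (a+k+b)) (Fin (k+b)) R) :
    Matrix (Fin (a+k+b)) (Fin (a+k+b)) R :=
  fun i l => Sum.elim (fun j => A i j) (fun j : Fin b => B i (finSumFinEquiv (Sum.inr j)))
    ((finSumFinEquiv (m := a+k) (n := b)).symm l)

def CC (A : Matrix (Fin (a+k+b)) (Fin (a+k)) R) (B : Matrix (Fin (a+k+b)) (Fin (k+b)) R) :
    Matrix (Fin (a+k+b)) (Fin (k+b)) R :=
  (Ztil A B).adjugate * B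

def Pmat (A : Matrix (Fin (a+k+b)) (Fin (a+k)) R) (B : Matrix (Fin (a+k+b)) (Fin (k+b)) R) :
    Matrix (Fin (a+k)) (Fin k) R :=
  fun i j => CC A B (finSumFinEquiv (Sum.inl i)) (finSumFinEquiv (Sum.inl j))

def Ymat (A : Matrix (Fin (a+k+b)) (Fin (a+k)) R) (B : Matrix (Fin (a+k+b)) (Fin (k+b)) R) :
    Matrix (Fin b) (Fin k) R :=
  fun i j => CC A B (finSumFinEquiv (Sum.inr i)) (finSumFinEquiv (Sum.inl j))

def Qmat (A : Matrix (Fin (a+k+b)) (Fin (a+k)) R) (B : Matrix (Fin (a+k+b)) (Fin (k+b)) R) :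
    Matrix (Fin (k+b)) (Fin k) R :=
  fun l j => Sum.elim (fun l₁ : Fin k => if l₁ = j then (Ztil A B).det else 0)
    (fun l₂ : Fin b => -(Ymat A B l₂ j)) ((finSumFinEquiv (m := k) (n := b)).symm l)

def Mmat (A : Matrix (Fin (a+k+b)) (Fin (a+k)) R) (B : Matrix (Fin (a+k+b)) (Fin (k+b)) R) :
    Matrix (Fin (a+k)) (Fin (a+k)) R :=
  fun i l => Sum.elim (fun l₁ : Fin a => if (i : ℕ) = (l₁ : ℕ) then 1 else 0)
    (fun l₂ : Fin k => Pmat A B i l₂) ((finSumFinEquiv (m := a) (n := k)).symm l)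

def Nmat (A : Matrix (Fin (a+k+b)) (Fin (a+k)) R) (B : Matrix (Fin (a+k+b)) (Fin (k+b)) R) :
    Matrix (Fin (k+b)) (Fin (k+b)) R :=
  fun i l => Sum.elim (fun l₁ : Fin k => Qmat A B i l₁)
    (fun l₂ : Fin b => if (i : ℕ) = (l₂ : ℕ) + k then 1 else 0)
    ((finSumFinEquiv (m := k) (n := b)).symm l)

def Zbig (A : Matrix (Fin (a+k+b)) (Fin (a+k)) R) (B : Matrix (Fin (a+k+b)) (Fin (k+b)) R) :
    Matrix (Fin (a+k+b)) (Fin (a+k+b)) R :=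
  fun i l => Sum.elim (fun l₁ : Fin (a+k) => (A * Mmat A B) i l₁)
    (fun l₂ : Fin b => B i (finSumFinEquiv (Sum.inr l₂)))
    ((finSumFinEquiv (m := a+k) (n := b)).symm l)

lemma AP_BQ (A : Matrix (Fin (a+k+b)) (Fin (a+k)) R) (B : Matrix (Fin (a+k+b)) (Fin (k+b)) R) :
    A * Pmat A B = B * Qmat A B := by
  classical
  have master : Ztil A B * ((Ztil A B).adjugate * B) = (Ztil A B).det • B := by
    rw [← Matrix.mul_assoc, Matrix.mul_adjugate, Matrix.smul_mul, Matrix.one_mul]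
  ext i j
  have hm := congrFun (congrFun master i) (finSumFinEquiv (Sum.inl j))
  rw [Matrix.mul_apply] at hm
  rw [Matrix.smul_apply, smul_eq_mul] at hm
  rw [← Equiv.sum_comp (finSumFinEquiv (m := a+k) (n := b))
    (fun l => Ztil A B i l * ((Ztil A B).adjugate * B) l (finSumFinEquiv (Sum.inl j)))] at hm
  rw [Fintype.sum_sum_type] at hm
  simp only [Ztil, Equiv.symm_apply_apply, Sum.elim_inl, Sum.elim_inr] at hm
  rw [Matrix.mul_apply, Matrix.mul_apply]
  rw [← Equiv.sum_comp (finSumFinEquiv (m := k) (n := b))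
    (fun l => B i l * Qmat A B l j)]
  rw [Fintype.sum_sum_type]
  simp only [Qmat, Pmat, Ymat, CC, Equiv.symm_apply_apply, Sum.elim_inl, Sum.elim_inr,
    mul_ite, mul_zero, mul_neg, Finset.sum_ite_eq', Finset.mem_univ, if_true, Finset.sum_neg_distrib]
  linear_combination hm

namespace K
variable (A : Matrix (Fin (a+k+b)) (Fin (a+k)) R) (B : Matrix (Fin (a+k+b)) (Fin (k+b)) R)

lemma Zbig_A0 : Zbig A B * (cA0 : Matrix (Fin (a+k+b)) (Fin (a+k)) R) = A * Mmat A B := by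
  classical
  ext i j
  rw [Matrix.mul_apply]
  rw [Finset.sum_eq_single (Fin.castAdd b j)]
  · have h1 : cA0 (R := R) (Fin.castAdd b j) j = 1 := by simp [cA0]
    rw [h1, mul_one]
    simp only [Zbig, finSumFinEquiv_symm_apply_castAdd, Sum.elim_inl]
  · intro l _ hl
    have h0 : cA0 (R := R) l j = 0 := by
      simp only [cA0]
      rw [if_neg]
      intro hc
      exact hl (Fin.ext (by simpa using hc))
    rw [h0, mul_zero]
  · intro h; exact absurd (Finset.mem_univ _) h

lemma Zbig_B0 : Zbig A B * (cB0 : Matrix (Fin (a+k+b)) (Fin (k+b)) R) = B * Nmat A B := by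
  classical
  ext i j
  have hjlt : (j : ℕ) + a < a + k + b := by have := j.isLt; omega
  have hL : (Zbig A B * cB0 (R := R) (a := a) (k := k) (b := b)) i j = Zbig A B i ⟨(j : ℕ) + a, hjlt⟩ := by
    rw [Matrix.mul_apply]
    rw [Finset.sum_eq_single (⟨(j : ℕ) + a, hjlt⟩ : Fin (a+k+b))]
    · have h1 : cB0 (R := R) ⟨(j : ℕ) + a, hjlt⟩ j = 1 := by simp [cB0]
      rw [h1, mul_one]
    · intro l _ hl
      have h0 : cB0 (R := R) l j = 0 := by
        simp only [cB0]
        rw [if_neg]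
        intro hc
        exact hl (Fin.ext (by simpa using hc))
      rw [h0, mul_zero]
    · intro h; exact absurd (Finset.mem_univ _) h
  rw [hL]
  rcases h : (finSumFinEquiv (m := k) (n := b)).symm j with j₁ | j₂
  · have hj : j = finSumFinEquiv (Sum.inl j₁) := by rw [← h, Equiv.apply_symm_apply]
    have hjv : (j : ℕ) = (j₁ : ℕ) := by rw [hj]; simp
    have hmlt : (j₁ : ℕ) + a < a + k := by have := j₁.isLt; omega
    have hlj2 : (⟨(j : ℕ) + a, hjlt⟩ : Fin (a+k+b)) = Fin.castAdd b ⟨(j₁ : ℕ) + a, hmlt⟩ :=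
      Fin.ext (by simp [hjv])
    have hz : Zbig A B i ⟨(j : ℕ) + a, hjlt⟩ = (A * Mmat A B) i ⟨(j₁ : ℕ) + a, hmlt⟩ := by
      rw [hlj2]
      simp only [Zbig, finSumFinEquiv_symm_apply_castAdd, Sum.elim_inl]
    rw [hz]
    have hcol : ∀ i', Mmat A B i' ⟨(j₁ : ℕ) + a, hmlt⟩ = Pmat A B i' j₁ := by
      intro i'
      have hnat : (⟨(j₁ : ℕ) + a, hmlt⟩ : Fin (a+k)) = Fin.natAdd a j₁ :=
        Fin.ext (by simp [Fin.coe_natAdd]; omega)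
      simp only [Mmat, hnat, finSumFinEquiv_symm_apply_natAdd, Sum.elim_inr]
    have hAM : (A * Mmat A B) i ⟨(j₁ : ℕ) + a, hmlt⟩ = (A * Pmat A B) i j₁ := by
      rw [Matrix.mul_apply, Matrix.mul_apply]
      exact Finset.sum_congr rfl (fun l _ => by rw [hcol l])
    have hN : ∀ l, Nmat A B l j = Qmat A B l j₁ := by
      intro l
      simp only [Nmat, h, Sum.elim_inl]
    have hBN : (B * Nmat A B) i j = (B * Qmat A B) i j₁ := by
      rw [Matrix.mul_apply, Matrix.mul_apply]
      exact Finset.sum_congr rfl (fun l _ => by rw [hN l])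
    rw [hAM, hBN, AP_BQ]
  · have hj : j = finSumFinEquiv (Sum.inr j₂) := by rw [← h, Equiv.apply_symm_apply]
    have hjv : (j : ℕ) = k + (j₂ : ℕ) := by rw [hj]; simp
    have hlj2 : (⟨(j : ℕ) + a, hjlt⟩ : Fin (a+k+b)) = Fin.natAdd (a+k) j₂ :=
      Fin.ext (by simp [Fin.coe_natAdd]; omega)
    have hz : Zbig A B i ⟨(j : ℕ) + a, hjlt⟩ = B i (finSumFinEquiv (Sum.inr j₂)) := by
      rw [hlj2]
      simp only [Zbig, finSumFinEquiv_symm_apply_natAdd, Sum.elim_inr]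
    rw [hz, ← hj]
    rw [Matrix.mul_apply]
    rw [Finset.sum_eq_single j]
    · have h1 : Nmat A B j j = 1 := by
        simp only [Nmat, h, Sum.elim_inr]
        rw [if_pos]
        omega
      rw [h1, mul_one]
    · intro l _ hl
      have h0 : Nmat A B l j = 0 := by
        simp only [Nmat, h, Sum.elim_inr]
        rw [if_neg]
        intro hc
        exact hl (Fin.ext (by omega))
      rw [h0, mul_zero]
    · intro h'; exact absurd (Finset.mem_univ _) h'

end K

section Canon
variable {R : Type*} [CommRing R] {a k b : ℕ}

lemma Ztil0 : Ztil (cA0 : Matrix (Fin (a+k+b)) (Fin (a+k)) R) cB0 = 1 := by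
  ext i l
  rcases h : (finSumFinEquiv (m := a+k) (n := b)).symm l with j | j''
  · have hl : l = finSumFinEquiv (Sum.inl j) := by rw [← h, Equiv.apply_symm_apply]
    have hlv : (l : ℕ) = (j : ℕ) := by rw [hl]; simp
    simp only [Ztil, h, Sum.elim_inl, cA0, Matrix.one_apply]
    have hiff : ((i : ℕ) = (j : ℕ)) ↔ (i = l) := by rw [Fin.ext_iff]; omega
    rw [if_congr hiff rfl rfl]
  · have hl : l = finSumFinEquiv (Sum.inr j'') := by rw [← h, Equiv.apply_symm_apply]
    have hlv : (l : ℕ) = (a+k) + (j'' : ℕ) := by rw [hl]; simp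
    have hv : ((finSumFinEquiv (Sum.inr j'') : Fin (k+b)) : ℕ) = k + (j'' : ℕ) := by simp
    simp only [Ztil, h, Sum.elim_inr, cB0, Matrix.one_apply]
    have hiff : ((i : ℕ) = ((finSumFinEquiv (Sum.inr j'') : Fin (k+b)) : ℕ) + a) ↔ (i = l) := by
      rw [Fin.ext_iff, hv]; omega
    rw [if_congr hiff rfl rfl]

lemma CC0 : CC (cA0 : Matrix (Fin (a+k+b)) (Fin (a+k)) R) cB0 = cB0 := by
  rw [CC, Ztil0, Matrix.adjugate_one, Matrix.one_mul]

lemma detZtil0 : (Ztil (cA0 : Matrix (Fin (a+k+b)) (Fin (a+k)) R) cB0).det = 1 := by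
  rw [Ztil0, Matrix.det_one]

lemma Mmat0 : Mmat (cA0 : Matrix (Fin (a+k+b)) (Fin (a+k)) R) cB0 = 1 := by
  ext i l
  rcases h : (finSumFinEquiv (m := a) (n := k)).symm l with l₁ | l₂
  · have hl : l = finSumFinEquiv (Sum.inl l₁) := by rw [← h, Equiv.apply_symm_apply]
    have hlv : (l : ℕ) = (l₁ : ℕ) := by rw [hl]; simp
    simp only [Mmat, h, Sum.elim_inl, Matrix.one_apply]
    have hiff : ((i : ℕ) = (l₁ : ℕ)) ↔ (i = l) := by rw [Fin.ext_iff]; omega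
    rw [if_congr hiff rfl rfl]
  · have hl : l = finSumFinEquiv (Sum.inr l₂) := by rw [← h, Equiv.apply_symm_apply]
    have hlv : (l : ℕ) = a + (l₂ : ℕ) := by rw [hl]; simp
    simp only [Mmat, h, Sum.elim_inr, Pmat, CC0, cB0, Matrix.one_apply]
    have hiff : (((finSumFinEquiv (Sum.inl i) : Fin (a+k+b)) : ℕ)
        = ((finSumFinEquiv (Sum.inl l₂) : Fin (k+b)) : ℕ) + a) ↔ (i = l) := by
      rw [Fin.ext_iff]; simp; omega
    rw [if_congr hiff rfl rfl]

lemma Nmat0 : Nmat (cA0 : Matrix (Fin (a+k+b)) (Fin (a+k)) R) cB0 = 1 := by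
  ext i l
  rcases h : (finSumFinEquiv (m := k) (n := b)).symm l with l₁ | l₂
  · have hl : l = finSumFinEquiv (Sum.inl l₁) := by rw [← h, Equiv.apply_symm_apply]
    have hlv : (l : ℕ) = (l₁ : ℕ) := by rw [hl]; simp
    rcases h2 : (finSumFinEquiv (m := k) (n := b)).symm i with i₁ | i₂
    · have hi : i = finSumFinEquiv (Sum.inl i₁) := by rw [← h2, Equiv.apply_symm_apply]
      have hiv : (i : ℕ) = (i₁ : ℕ) := by rw [hi]; simp
      simp only [Nmat, h, Sum.elim_inl, Qmat, h2, detZtil0, Matrix.one_apply]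
      have hiff : (i₁ = l₁) ↔ (i = l) := by rw [Fin.ext_iff, Fin.ext_iff]; omega
      rw [if_congr hiff rfl rfl]
    · have hi : i = finSumFinEquiv (Sum.inr i₂) := by rw [← h2, Equiv.apply_symm_apply]
      have hiv : (i : ℕ) = k + (i₂ : ℕ) := by rw [hi]; simp
      simp only [Nmat, h, Sum.elim_inl, Qmat, h2, Sum.elim_inr, Ymat, CC0, cB0,
        Matrix.one_apply]
      rw [if_neg (by simp; omega), if_neg (by rw [Fin.ext_iff]; omega)]
      simp
  · have hl : l = finSumFinEquiv (Sum.inr l₂) := by rw [← h, Equiv.apply_symm_apply]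
    have hlv : (l : ℕ) = k + (l₂ : ℕ) := by rw [hl]; simp
    simp only [Nmat, h, Sum.elim_inr, Matrix.one_apply]
    have hiff : ((i : ℕ) = (l₂ : ℕ) + k) ↔ (i = l) := by rw [Fin.ext_iff]; omega
    rw [if_congr hiff rfl rfl]

end Canon

section Maps
variable {R S : Type*} [CommRing R] [CommRing S] {a k b : ℕ} (φ : R →+* S)
variable (A : Matrix (Fin (a+k+b)) (Fin (a+k)) R) (B : Matrix (Fin (a+k+b)) (Fin (k+b)) R)

lemma map_Ztil : (Ztil A B).map φ = Ztil (A.map φ) (B.map φ) := by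
  ext i l
  rcases h : (finSumFinEquiv (m := a+k) (n := b)).symm l with j | j'' <;>
    simp [Ztil, h, Matrix.map_apply]

lemma map_CC : (CC A B).map φ = CC (A.map φ) (B.map φ) := by
  have h1 : (Ztil A B).adjugate.map φ = (Ztil (A.map φ) (B.map φ)).adjugate := by
    have h2 := RingHom.map_adjugate φ (Ztil A B)
    rw [RingHom.mapMatrix_apply, RingHom.mapMatrix_apply] at h2
    rw [h2, map_Ztil]
  rw [CC, CC, Matrix.map_mul, h1]

lemma map_detZ : φ (Ztil A B).det = (Ztil (A.map φ) (B.map φ)).det := by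
  rw [RingHom.map_det, RingHom.mapMatrix_apply, map_Ztil]

lemma map_Mmat : (Mmat A B).map φ = Mmat (A.map φ) (B.map φ) := by
  ext i l
  rcases h : (finSumFinEquiv (m := a) (n := k)).symm l with l₁ | l₂
  · simp [Mmat, h, Matrix.map_apply, apply_ite φ]
  · simp only [Matrix.map_apply, Mmat, h, Sum.elim_inr, Pmat]
    rw [← Matrix.map_apply (f := φ), map_CC]

lemma map_Qmat : (Qmat A B).map φ = Qmat (A.map φ) (B.map φ) := by
  ext i l
  rcases h : (finSumFinEquiv (m := k) (n := b)).symm i with i₁ | i₂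
  · simp only [Matrix.map_apply, Qmat, h, Sum.elim_inl, apply_ite φ, map_zero, map_detZ]
  · simp only [Matrix.map_apply, Qmat, h, Sum.elim_inr, map_neg, Ymat]
    rw [← Matrix.map_apply (f := φ), map_CC]

lemma map_Nmat : (Nmat A B).map φ = Nmat (A.map φ) (B.map φ) := by
  ext i l
  rcases h : (finSumFinEquiv (m := k) (n := b)).symm l with l₁ | l₂
  · simp only [Matrix.map_apply, Nmat, h, Sum.elim_inl]
    rw [← Matrix.map_apply (f := φ), map_Qmat]
  · simp [Nmat, h, Matrix.map_apply, apply_ite φ]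

lemma map_detM : φ (Mmat A B).det = (Mmat (A.map φ) (B.map φ)).det := by
  rw [RingHom.map_det, RingHom.mapMatrix_apply, map_Mmat]

lemma map_detN : φ (Nmat A B).det = (Nmat (A.map φ) (B.map φ)).det := by
  rw [RingHom.map_det, RingHom.mapMatrix_apply, map_Nmat]

end Maps


open MvPolynomial Matrix

/-! ### Singular matrices fixing small column spans -/

lemma exists_det_zero_fix {m : ℕ} {ι : Type*} [Fintype ι] (hcard : Fintype.card ι < m)
    (g : ι → (Fin m → ℂ)) :
    ∃ Z : Matrix (Fin m) (Fin m) ℂ, Z.det = 0 ∧ ∀ i, Z.mulVec (g i) = g i := by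
  classical
  set V : Submodule ℂ (Fin m → ℂ) := Submodule.span ℂ (Set.range g) with hV
  have hVne : V ≠ ⊤ := by
    intro htop
    have h1 : Module.finrank ℂ V ≤ Fintype.card ι := finrank_range_le_card g
    have h2 : Module.finrank ℂ (Fin m → ℂ) = m := by
      simp [Module.finrank_fintype_fun_eq_card]
    have h3 : Module.finrank ℂ V = m := by
      rw [htop, finrank_top, h2]
    omega
  obtain ⟨W, hW⟩ := Submodule.exists_isCompl V
  have hWne : W ≠ ⊥ := by
    intro hbot
    apply hVne
    have := hW.codisjoint
    rw [codisjoint_iff, hbot, sup_bot_eq] at this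
    exact this
  obtain ⟨w, hwW, hw0⟩ := Submodule.exists_mem_ne_zero_of_ne_bot hWne
  let e : (Fin m → ℂ) →ₗ[ℂ] (Fin m → ℂ) :=
    V.subtype.comp (V.projectionOnto W hW)
  refine ⟨LinearMap.toMatrix' e, ?_, ?_⟩
  · by_contra hdet
    obtain ⟨u, hu⟩ := (Matrix.isUnit_iff_isUnit_det _).mpr (isUnit_iff_ne_zero.mpr hdet)
    have hEw : (LinearMap.toMatrix' e).mulVec w = 0 := by
      rw [← Matrix.toLin'_apply, Matrix.toLin'_toMatrix']
      simp only [e, LinearMap.comp_apply]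
      rw [Submodule.linearProjOfIsCompl_apply_right hW ⟨w, hwW⟩]
      simp
    apply hw0
    calc w = Matrix.mulVec 1 w := (Matrix.one_mulVec w).symm
    _ = ((u⁻¹ : (Matrix (Fin m) (Fin m) ℂ)ˣ) : Matrix (Fin m) (Fin m) ℂ).mulVec
          ((LinearMap.toMatrix' e).mulVec w) := by
        rw [Matrix.mulVec_mulVec, ← hu, ← Units.val_mul, inv_mul_cancel, Units.val_one]
    _ = 0 := by rw [hEw, Matrix.mulVec_zero]
  · intro i
    rw [← Matrix.toLin'_apply, Matrix.toLin'_toMatrix']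
    have hgi : g i ∈ V := Submodule.subset_span (Set.mem_range_self i)
    simp only [e, LinearMap.comp_apply]
    rw [Submodule.linearProjOfIsCompl_apply_left hW ⟨g i, hgi⟩]
    simp

lemma mul_eq_self_of_cols {m n : ℕ} (Z : Matrix (Fin m) (Fin m) ℂ) (M : Matrix (Fin m) (Fin n) ℂ)
    (h : ∀ j, Z.mulVec (fun i => M i j) = fun i => M i j) : Z * M = M := by
  ext i j
  have := congrFun (h j) i
  simpa [Matrix.mulVec, Matrix.mul_apply, dotProduct] using this

/-! ### Counting products -/

lemma prod_range_ite_lt (n t : ℕ) (x : ℂ) :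
    (∏ i ∈ Finset.range n, if i < t then x else 1) = x ^ (min t n) := by
  induction n with
  | zero => simp
  | succ n ih =>
    rw [Finset.prod_range_succ, ih]
    by_cases hc : n < t
    · rw [if_pos hc]
      have h1 : min t n = n := by omega
      have h2 : min t (n+1) = n+1 := by omega
      rw [h1, h2, pow_succ]
    · rw [if_neg hc, mul_one]
      have h1 : min t (n+1) = min t n := by omega
      rw [h1]

lemma prod_ite_lt (n t : ℕ) (ht : t ≤ n) (x : ℂ) :
    (∏ i : Fin n, if (i : ℕ) < t then x else 1) = x ^ t := by
  rw [Fin.prod_univ_eq_prod_range (fun i => if i < t then x else 1) n, prod_range_ite_lt,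
    min_eq_left ht]

lemma prod_range_ite_le (n t : ℕ) (x : ℂ) :
    (∏ i ∈ Finset.range n, if t ≤ i then x else 1) = x ^ (n - t) := by
  induction n with
  | zero => simp
  | succ n ih =>
    rw [Finset.prod_range_succ, ih]
    by_cases hc : t ≤ n
    · rw [if_pos hc]
      have h1 : n + 1 - t = (n - t) + 1 := by omega
      rw [h1, pow_succ]
    · rw [if_neg hc, mul_one]
      have h1 : n + 1 - t = n - t := by omega
      rw [h1]

lemma prod_ite_le (n t : ℕ) (x : ℂ) :
    (∏ i : Fin n, if t ≤ (i : ℕ) then x else 1) = x ^ (n - t) := by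
  rw [Fin.prod_univ_eq_prod_range (fun i => if t ≤ i then x else 1) n, prod_range_ite_le]

lemma two_pow_inj {m n : ℕ} (h : (2:ℂ) ^ m = (2:ℂ) ^ n) : m = n := by
  have h2 : ((2 ^ m : ℕ) : ℂ) = ((2 ^ n : ℕ) : ℂ) := by push_cast; exact h
  exact Nat.pow_right_injective (le_refl 2) (Nat.cast_injective h2)

/-! ### Diagonal stabilizer computations -/

variable {a k b : ℕ}

lemma diag_A0_left (d : Fin (a+k+b) → ℂ) (e : Fin (a+k) → ℂ)
    (hde : ∀ (i : Fin (a+k+b)) (j : Fin (a+k)), (i : ℕ) = (j : ℕ) → d i = e j) :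
    Matrix.diagonal d * (cA0 : Matrix (Fin (a+k+b)) (Fin (a+k)) ℂ) = (cA0 : Matrix (Fin (a+k+b)) (Fin (a+k)) ℂ) * Matrix.diagonal e := by
  ext i j
  rw [Matrix.diagonal_mul, Matrix.mul_diagonal]
  simp only [cA0]
  by_cases hc : (i : ℕ) = (j : ℕ)
  · rw [if_pos hc, mul_one, one_mul]; exact hde i j hc
  · rw [if_neg hc, mul_zero, zero_mul]

lemma diag_B0_left (d : Fin (a+k+b) → ℂ) (e : Fin (k+b) → ℂ)
    (hde : ∀ (i : Fin (a+k+b)) (j : Fin (k+b)), (i : ℕ) = (j : ℕ) + a → d i = e j) :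
    Matrix.diagonal d * (cB0 : Matrix (Fin (a+k+b)) (Fin (k+b)) ℂ) = (cB0 : Matrix (Fin (a+k+b)) (Fin (k+b)) ℂ) * Matrix.diagonal e := by
  ext i j
  rw [Matrix.diagonal_mul, Matrix.mul_diagonal]
  simp only [cB0]
  by_cases hc : (i : ℕ) = (j : ℕ) + a
  · rw [if_pos hc, mul_one, one_mul]; exact hde i j hc
  · rw [if_neg hc, mul_zero, zero_mul]

/-! ### Main lemma of the balanced case -/

lemma case2_pqr (ha : 0 < a) (hk : 0 < k) (hb : 0 < b)
    {f : MvPolynomial (TriVars (a+k) (k+b) (a+k+b)) ℂ} (hf0 : f ≠ 0)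
    (p q r : ℕ)
    (F1 : ∀ (X : Matrix (Fin (a+k)) (Fin (a+k)) ℂ) A B,
        triEval f (A * X) B = X.det ^ p * triEval f A B)
    (F2 : ∀ (Y : Matrix (Fin (k+b)) (Fin (k+b)) ℂ) A B,
        triEval f A (B * Y) = Y.det ^ q * triEval f A B)
    (F3 : ∀ (Z : Matrix (Fin (a+k+b)) (Fin (a+k+b)) ℂ) A B,
        triEval f (Z * A) (Z * B) = Z.det ^ r * triEval f A B) :
    p = r ∧ q = r := by
  classical
  have hne : triEval f (cA0 : Matrix (Fin (a+k+b)) (Fin (a+k)) ℂ) cB0 ≠ 0 := by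
    intro h0
    have hv : ∀ A B, (Mmat A B).det ^ p * ((Nmat A B).det ^ q * triEval f A B) = 0 := by
      intro A B
      have e1 := F3 (Zbig A B) cA0 cB0
      rw [K.Zbig_A0, K.Zbig_B0, h0, mul_zero] at e1
      calc (Mmat A B).det ^ p * ((Nmat A B).det ^ q * triEval f A B)
          = (Mmat A B).det ^ p * triEval f A (B * Nmat A B) := by rw [F2]
        _ = triEval f (A * Mmat A B) (B * Nmat A B) := by rw [F1]
        _ = 0 := e1
    let Ap : Matrix (Fin (a+k+b)) (Fin (a+k)) (MvPolynomial (TriVars (a+k) (k+b) (a+k+b)) ℂ) :=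
      fun i j => MvPolynomial.X (Sum.inl (i, j))
    let Bp : Matrix (Fin (a+k+b)) (Fin (k+b)) (MvPolynomial (TriVars (a+k) (k+b) (a+k+b)) ℂ) :=
      fun i j => MvPolynomial.X (Sum.inr (i, j))
    have hmapA : ∀ v : TriVars (a+k) (k+b) (a+k+b) → ℂ,
        Ap.map (eval v) = fun i j => v (Sum.inl (i, j)) := by
      intro v; ext i j; rw [Matrix.map_apply]; simp [Ap]
    have hmapB : ∀ v : TriVars (a+k) (k+b) (a+k+b) → ℂ,
        Bp.map (eval v) = fun i j => v (Sum.inr (i, j)) := by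
      intro v; ext i j; rw [Matrix.map_apply]; simp [Bp]
    have hg : (Mmat Ap Bp).det ^ p * ((Nmat Ap Bp).det ^ q * f) = 0 := by
      apply MvPolynomial.funext (q := 0)
      intro v
      rw [map_zero, _root_.map_mul, _root_.map_mul, map_pow, map_pow,
        map_detM (eval v) Ap Bp, map_detN (eval v) Ap Bp, hmapA v, hmapB v,
        triEval_eq_eval f v]
      exact hv _ _
    set v₀ : TriVars (a+k) (k+b) (a+k+b) → ℂ :=
      Sum.elim (fun p' : Fin (a+k+b) × Fin (a+k) => cA0 (R := ℂ) p'.1 p'.2)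
        (fun p' : Fin (a+k+b) × Fin (k+b) => cB0 (R := ℂ) p'.1 p'.2) with hv₀
    have hA0 : Ap.map (eval v₀) = cA0 := by
      ext i j; rw [Matrix.map_apply]; simp [Ap, hv₀]
    have hB0 : Bp.map (eval v₀) = cB0 := by
      ext i j; rw [Matrix.map_apply]; simp [Bp, hv₀]
    have hDM : (Mmat Ap Bp).det ≠ 0 := by
      intro hc
      have h1 := congrArg (eval v₀) hc
      rw [map_zero, map_detM (eval v₀) Ap Bp, hA0, hB0, Mmat0, Matrix.det_one] at h1
      exact one_ne_zero h1
    have hDN : (Nmat Ap Bp).det ≠ 0 := by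
      intro hc
      have h1 := congrArg (eval v₀) hc
      rw [map_zero, map_detN (eval v₀) Ap Bp, hA0, hB0, Nmat0, Matrix.det_one] at h1
      exact one_ne_zero h1
    apply hf0
    rcases mul_eq_zero.mp hg with h1 | h1
    · exact absurd h1 (pow_ne_zero _ hDM)
    rcases mul_eq_zero.mp h1 with h2 | h2
    · exact absurd h2 (pow_ne_zero _ hDN)
    · exact h2
  constructor
  · -- p = r via the first diagonal
    have hD := F3 (Matrix.diagonal (fun i : Fin (a+k+b) => if (i : ℕ) < a then (2:ℂ) else 1))
      cA0 cB0
    have hDA : Matrix.diagonal (fun i : Fin (a+k+b) => if (i : ℕ) < a then (2:ℂ) else 1) * (cA0 : Matrix (Fin (a+k+b)) (Fin (a+k)) ℂ)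
        = (cA0 : Matrix (Fin (a+k+b)) (Fin (a+k)) ℂ) * Matrix.diagonal (fun i : Fin (a+k) => if (i : ℕ) < a then (2:ℂ) else 1) :=
      diag_A0_left _ _ (by intro i j hij; simp [hij])
    have hDB : Matrix.diagonal (fun i : Fin (a+k+b) => if (i : ℕ) < a then (2:ℂ) else 1) * (cB0 : Matrix (Fin (a+k+b)) (Fin (k+b)) ℂ)
        = cB0 := by
      have h1 := diag_B0_left (a := a) (k := k) (b := b)
        (fun i => if (i : ℕ) < a then (2:ℂ) else 1) (fun _ => 1)
        (by intro i j hij; simp [show ¬ ((i : ℕ) < a) by omega])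
      rw [h1, Matrix.diagonal_one, Matrix.mul_one]
    rw [hDA, hDB, F1] at hD
    rw [Matrix.det_diagonal, Matrix.det_diagonal, prod_ite_lt (a+k) a (by omega),
      prod_ite_lt (a+k+b) a (by omega), ← pow_mul, ← pow_mul] at hD
    have h2 := mul_right_cancel₀ hne hD
    exact Nat.eq_of_mul_eq_mul_left ha (two_pow_inj h2)
  · -- q = r via the second diagonal
    have hD := F3 (Matrix.diagonal (fun i : Fin (a+k+b) => if a + k ≤ (i : ℕ) then (2:ℂ) else 1))
      cA0 cB0
    have hDA : Matrix.diagonal (fun i : Fin (a+k+b) => if a + k ≤ (i : ℕ) then (2:ℂ) else 1) * (cA0 : Matrix (Fin (a+k+b)) (Fin (a+k)) ℂ)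
        = cA0 := by
      have h1 := diag_A0_left (a := a) (k := k) (b := b)
        (fun i => if a + k ≤ (i : ℕ) then (2:ℂ) else 1) (fun _ => 1)
        (by intro i j hij; simp [show ¬ (a + k ≤ (i : ℕ)) by have := j.isLt; omega])
      rw [h1, Matrix.diagonal_one, Matrix.mul_one]
    have hDB : Matrix.diagonal (fun i : Fin (a+k+b) => if a + k ≤ (i : ℕ) then (2:ℂ) else 1) * (cB0 : Matrix (Fin (a+k+b)) (Fin (k+b)) ℂ)
        = (cB0 : Matrix (Fin (a+k+b)) (Fin (k+b)) ℂ) * Matrix.diagonal (fun j : Fin (k+b) => if k ≤ (j : ℕ) then (2:ℂ) else 1) :=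
      diag_B0_left _ _ (by
        intro i j hij
        by_cases hc : k ≤ (j : ℕ)
        · simp [hc, show a + k ≤ (i : ℕ) by omega]
        · simp [hc, show ¬ (a + k ≤ (i : ℕ)) by omega])
    rw [hDA, hDB, F2] at hD
    rw [Matrix.det_diagonal, Matrix.det_diagonal, prod_ite_le (k+b) k,
      prod_ite_le (a+k+b) (a+k), ← pow_mul, ← pow_mul] at hD
    have hexp1 : k + b - k = b := by omega
    have hexp2 : a + k + b - (a + k) = b := by omega
    rw [hexp1, hexp2] at hD
    have h2 := mul_right_cancel₀ hne hD
    exact Nat.eq_of_mul_eq_mul_left hb (two_pow_inj h2)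



end TriAux

/-- for the quiver `1 → 3 ← 2` with dimension vector `(n₁, n₂, n₃)` where
`n₁ ≠ n₃`, `n₂ ≠ n₃`, and `n₁ + n₂ ≠ n₃`, the only weight admitting a nonzero semi-invariant
is `(0, 0, 0)`. -/
theorem tri_semiinvariant_iff_generic (n₁ n₂ n₃ : ℕ)
    (hn₁ : 1 ≤ n₁) (hn₂ : 1 ≤ n₂) (hn₃ : 1 ≤ n₃)
    (h₁₃ : n₁ ≠ n₃) (h₂₃ : n₂ ≠ n₃) (h₁₂₃ : n₁ + n₂ ≠ n₃)
    (σ₁ σ₂ σ₃ : ℤ) :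
    (∃ f : MvPolynomial (TriVars n₁ n₂ n₃) ℂ, f ≠ 0 ∧ IsTriSemiInvariant σ₁ σ₂ σ₃ f)
      ↔ (σ₁ = 0 ∧ σ₂ = 0 ∧ σ₃ = 0) := by
  constructor
  · rintro ⟨f, hf0, hf⟩
    obtain ⟨A', B', hAB⟩ := TriAux.exists_triEval_ne_zero hf0
    have hne1 : Nonempty (Fin n₁) := ⟨⟨0, hn₁⟩⟩
    have hne2 : Nonempty (Fin n₂) := ⟨⟨0, hn₂⟩⟩
    have hne3 : Nonempty (Fin n₃) := ⟨⟨0, hn₃⟩⟩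
    have hσ₁ : 0 ≤ σ₁ := by
      by_contra hneg
      push_neg at hneg
      have h := TriAux.key1 hf 0 A' B'
      rw [Matrix.det_zero, zero_pow (by omega : (-σ₁).toNat ≠ 0), mul_zero,
        show σ₁.toNat = 0 by omega, pow_zero, one_mul] at h
      exact hAB h.symm
    have hσ₂ : 0 ≤ σ₂ := by
      by_contra hneg
      push_neg at hneg
      have h := TriAux.key2 hf 0 A' B'
      rw [Matrix.det_zero, zero_pow (by omega : (-σ₂).toNat ≠ 0), mul_zero,
        show σ₂.toNat = 0 by omega, pow_zero, one_mul] at h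
      exact hAB h.symm
    have hσ₃ : σ₃ ≤ 0 := by
      by_contra hneg
      push_neg at hneg
      have h := TriAux.key3 hf 0 A' B'
      rw [Matrix.det_zero, zero_pow (by omega : σ₃.toNat ≠ 0), mul_zero,
        show (-σ₃).toNat = 0 by omega, pow_zero, one_mul] at h
      exact hAB h.symm
    have F1 : ∀ (X : Matrix (Fin n₁) (Fin n₁) ℂ) A B,
        triEval f (A * X) B = X.det ^ σ₁.toNat * triEval f A B := by
      intro X A B
      have h := TriAux.key1 hf X A B
      rwa [show (-σ₁).toNat = 0 by omega, pow_zero, mul_one] at h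
    have F2 : ∀ (Y : Matrix (Fin n₂) (Fin n₂) ℂ) A B,
        triEval f A (B * Y) = Y.det ^ σ₂.toNat * triEval f A B := by
      intro Y A B
      have h := TriAux.key2 hf Y A B
      rwa [show (-σ₂).toNat = 0 by omega, pow_zero, mul_one] at h
    have F3 : ∀ (Z : Matrix (Fin n₃) (Fin n₃) ℂ) A B,
        triEval f (Z * A) (Z * B) = Z.det ^ (-σ₃).toNat * triEval f A B := by
      intro Z A B
      have h := TriAux.key3 hf Z A B
      rwa [show σ₃.toNat = 0 by omega, pow_zero, mul_one] at h
    have hdet2 : ∀ (m : ℕ), ((2:ℂ) • (1 : Matrix (Fin m) (Fin m) ℂ)).det = 2 ^ m := by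
      intro m
      rw [Matrix.det_smul, Matrix.det_one, mul_one, Fintype.card_fin]
    have hscale : n₁ * σ₁.toNat + n₂ * σ₂.toNat = n₃ * (-σ₃).toNat := by
      have h1 := F3 ((2:ℂ) • (1 : Matrix (Fin n₃) (Fin n₃) ℂ)) A' B'
      rw [Matrix.smul_mul, Matrix.one_mul, Matrix.smul_mul, Matrix.one_mul, hdet2] at h1
      have h2 := F1 ((2:ℂ) • (1 : Matrix (Fin n₁) (Fin n₁) ℂ)) A' ((2:ℂ) • B')
      rw [Matrix.mul_smul, Matrix.mul_one, hdet2] at h2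
      have h3 := F2 ((2:ℂ) • (1 : Matrix (Fin n₂) (Fin n₂) ℂ)) A' B'
      rw [Matrix.mul_smul, Matrix.mul_one, hdet2] at h3
      rw [h2, h3, ← mul_assoc] at h1
      have h4 := mul_right_cancel₀ hAB h1
      rw [← pow_mul, ← pow_mul, ← pow_mul, ← pow_add] at h4
      exact TriAux.two_pow_inj h4
    have killp : n₃ < n₁ → σ₁.toNat = 0 := by
      intro hlt
      by_contra hp0
      have hall : ∀ A B, triEval f A B = 0 := by
        intro A B
        obtain ⟨Z, hZdet, hZfix⟩ := TriAux.exists_det_zero_fix (m := n₁)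
          (by rw [Fintype.card_fin]; omega) (fun (j : Fin n₃) (i : Fin n₁) => A j i)
        have hZA : Z * A.transpose = A.transpose := TriAux.mul_eq_self_of_cols Z A.transpose (fun j => hZfix j)
        have hAZ : A * Z.transpose = A := by
          have h := congrArg Matrix.transpose hZA
          rwa [Matrix.transpose_mul, Matrix.transpose_transpose] at h
        have h := F1 Z.transpose A B
        rwa [hAZ, Matrix.det_transpose, hZdet, zero_pow hp0, zero_mul] at h
      exact absurd (hall _ _) hAB
    have killq : n₃ < n₂ → σ₂.toNat = 0 := by
      intro hlt
      by_contra hq0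
      have hall : ∀ A B, triEval f A B = 0 := by
        intro A B
        obtain ⟨Z, hZdet, hZfix⟩ := TriAux.exists_det_zero_fix (m := n₂)
          (by rw [Fintype.card_fin]; omega) (fun (j : Fin n₃) (i : Fin n₂) => B j i)
        have hZB : Z * B.transpose = B.transpose := TriAux.mul_eq_self_of_cols Z B.transpose (fun j => hZfix j)
        have hBZ : B * Z.transpose = B := by
          have h := congrArg Matrix.transpose hZB
          rwa [Matrix.transpose_mul, Matrix.transpose_transpose] at h
        have h := F2 Z.transpose A B
        rwa [hBZ, Matrix.det_transpose, hZdet, zero_pow hq0, zero_mul] at h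
      exact absurd (hall _ _) hAB
    rcases lt_or_gt_of_ne h₁₃ with h13 | h13
    · rcases lt_or_gt_of_ne h₂₃ with h23 | h23
      · rcases lt_or_gt_of_ne h₁₂₃ with h123 | h123
        · -- n₁ + n₂ < n₃
          have hr : (-σ₃).toNat = 0 := by
            by_contra hr0
            have hall : ∀ A B, triEval f A B = 0 := by
              intro A B
              obtain ⟨Z, hZdet, hZfix⟩ := TriAux.exists_det_zero_fix (m := n₃)
                (ι := Fin n₁ ⊕ Fin n₂) (by simp [Fintype.card_sum]; omega)
                (Sum.elim (fun j i => A i j) (fun j i => B i j))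
              have hZA : Z * A = A :=
                TriAux.mul_eq_self_of_cols Z A (fun j => hZfix (Sum.inl j))
              have hZB : Z * B = B :=
                TriAux.mul_eq_self_of_cols Z B (fun j => hZfix (Sum.inr j))
              have h := F3 Z A B
              rwa [hZA, hZB, hZdet, zero_pow hr0, zero_mul] at h
            exact absurd (hall _ _) hAB
          have h0 : n₁ * σ₁.toNat + n₂ * σ₂.toNat = 0 := by
            rw [hscale, hr, Nat.mul_zero]
          have hp : σ₁.toNat = 0 := by
            rcases Nat.mul_eq_zero.mp (Nat.eq_zero_of_add_eq_zero_right h0) with h | h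
            · omega
            · exact h
          have hq : σ₂.toNat = 0 := by
            rcases Nat.mul_eq_zero.mp (Nat.eq_zero_of_add_eq_zero_left h0) with h | h
            · omega
            · exact h
          exact ⟨by omega, by omega, by omega⟩
        · -- n₁, n₂ < n₃ < n₁ + n₂ : balanced case
          obtain ⟨a, kk, bb, ha, hk, hb, e1, e2, e3⟩ : ∃ a k b : ℕ, 0 < a ∧ 0 < k ∧ 0 < b ∧
              n₁ = a + k ∧ n₂ = k + b ∧ n₃ = a + k + b :=
            ⟨n₃ - n₂, n₁ + n₂ - n₃, n₃ - n₁, by omega, by omega, by omega, by omega,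
              by omega, by omega⟩
          subst e1
          subst e2
          subst e3
          obtain ⟨hpr, hqr⟩ := TriAux.case2_pqr ha hk hb hf0 _ _ _ F1 F2 F3
          have hr : (-σ₃).toNat = 0 := by
            rw [hpr, hqr] at hscale
            have h2 : ((a+kk) + (kk+bb)) * (-σ₃).toNat = (a+kk+bb) * (-σ₃).toNat := by
              rw [add_mul]; exact hscale
            rcases Nat.eq_zero_or_pos ((-σ₃).toNat) with h | h
            · exact h
            · have := Nat.eq_of_mul_eq_mul_right h h2
              omega
          have hp : σ₁.toNat = 0 := by rw [hpr, hr]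
          have hq : σ₂.toNat = 0 := by rw [hqr, hr]
          exact ⟨by omega, by omega, by omega⟩
      · -- n₁ < n₃ < n₂
        have hq := killq h23
        have hB0 : ∀ A B, triEval f A B = triEval f A 0 := by
          intro A B
          have h := F2 0 A B
          rw [Matrix.mul_zero, hq, pow_zero, one_mul] at h
          exact h.symm
        have hr : (-σ₃).toNat = 0 := by
          by_contra hr0
          have hall : ∀ A B, triEval f A B = 0 := by
            intro A B
            rw [hB0]
            obtain ⟨Z, hZdet, hZfix⟩ := TriAux.exists_det_zero_fix (m := n₃) (ι := Fin n₁)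
              (by rw [Fintype.card_fin]; omega) (fun j i => A i j)
            have hZA : Z * A = A := TriAux.mul_eq_self_of_cols Z A hZfix
            have h := F3 Z A 0
            rwa [hZA, Matrix.mul_zero, hZdet, zero_pow hr0, zero_mul] at h
          exact absurd (hall _ _) hAB
        have hp : σ₁.toNat = 0 := by
          rw [hq, hr, Nat.mul_zero, Nat.mul_zero, Nat.add_zero] at hscale
          rcases Nat.mul_eq_zero.mp hscale with h | h
          · omega
          · exact h
        exact ⟨by omega, by omega, by omega⟩
    · rcases lt_or_gt_of_ne h₂₃ with h23 | h23
      · -- n₂ < n₃ < n₁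
        have hp := killp h13
        have hA0 : ∀ A B, triEval f A B = triEval f 0 B := by
          intro A B
          have h := F1 0 A B
          rw [Matrix.mul_zero, hp, pow_zero, one_mul] at h
          exact h.symm
        have hr : (-σ₃).toNat = 0 := by
          by_contra hr0
          have hall : ∀ A B, triEval f A B = 0 := by
            intro A B
            rw [hA0]
            obtain ⟨Z, hZdet, hZfix⟩ := TriAux.exists_det_zero_fix (m := n₃) (ι := Fin n₂)
              (by rw [Fintype.card_fin]; omega) (fun j i => B i j)
            have hZB : Z * B = B := TriAux.mul_eq_self_of_cols Z B hZfix
            have h := F3 Z 0 B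
            rwa [hZB, Matrix.mul_zero, hZdet, zero_pow hr0, zero_mul] at h
          exact absurd (hall _ _) hAB
        have hq : σ₂.toNat = 0 := by
          rw [hp, hr, Nat.mul_zero, Nat.mul_zero, Nat.zero_add] at hscale
          rcases Nat.mul_eq_zero.mp hscale with h | h
          · omega
          · exact h
        exact ⟨by omega, by omega, by omega⟩
      · -- n₃ < n₁ and n₃ < n₂
        have hp := killp h13
        have hq := killq h23
        have hr : (-σ₃).toNat = 0 := by
          rw [hp, hq, Nat.mul_zero, Nat.mul_zero, Nat.add_zero] at hscale
          rcases Nat.mul_eq_zero.mp hscale.symm with h | h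
          · omega
          · exact h
        exact ⟨by omega, by omega, by omega⟩
  · rintro ⟨rfl, rfl, rfl⟩
    refine ⟨1, one_ne_zero, ?_⟩
    intro g₁ g₂ g₃ A B
    simp [triEval]
end

section
/- Let n ≥ 1 and consider the square quiver with dimension vector (n₁, n₂, n₃, n₄) = (n, n, n, n). A weight σ = (σ₁, σ₂, σ₃, σ₄) ∈ ℤ⁴ admits a nonzero semi-invariant polynomial if and only if σ₁ ≥ 0, σ₁ + σ₂ ≥ 0, σ₁ + σ₃ ≥ 0, σ₁ + σ₂ + σ₃ ≥ 0, and σ₁ + σ₂ + σ₃ + σ₄ = 0. -/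
/-- Variables: entries of the four matrices attached to the arrows
`1 → 2`, `1 → 3`, `2 → 4`, `3 → 4` of the square quiver. -/
abbrev SqVars (n₁ n₂ n₃ n₄ : ℕ) :=
  (Fin n₂ × Fin n₁) ⊕ (Fin n₃ × Fin n₁) ⊕ (Fin n₄ × Fin n₂) ⊕ (Fin n₄ × Fin n₃)

/-- Evaluate a polynomial in the matrix entries at a representation `(v₁, v₂, v₃, v₄)`. -/
noncomputable def sqEval {n₁ n₂ n₃ n₄ : ℕ} (f : MvPolynomial (SqVars n₁ n₂ n₃ n₄) ℂ)
    (v₁ : Matrix (Fin n₂) (Fin n₁) ℂ) (v₂ : Matrix (Fin n₃) (Fin n₁) ℂ)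
    (v₃ : Matrix (Fin n₄) (Fin n₂) ℂ) (v₄ : Matrix (Fin n₄) (Fin n₃) ℂ) : ℂ :=
  MvPolynomial.eval
    (Sum.elim (fun p => v₁ p.1 p.2) <| Sum.elim (fun p => v₂ p.1 p.2) <|
      Sum.elim (fun p => v₃ p.1 p.2) (fun p => v₄ p.1 p.2)) f

/-- `f` is a semi-invariant of weight `(σ₁, σ₂, σ₃, σ₄)` for the square quiver. -/
def IsSqSemiInvariant {n₁ n₂ n₃ n₄ : ℕ} (σ₁ σ₂ σ₃ σ₄ : ℤ)
    (f : MvPolynomial (SqVars n₁ n₂ n₃ n₄) ℂ) : Prop :=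
  ∀ (g₁ : (Matrix (Fin n₁) (Fin n₁) ℂ)ˣ) (g₂ : (Matrix (Fin n₂) (Fin n₂) ℂ)ˣ)
    (g₃ : (Matrix (Fin n₃) (Fin n₃) ℂ)ˣ) (g₄ : (Matrix (Fin n₄) (Fin n₄) ℂ)ˣ)
    (v₁ : Matrix (Fin n₂) (Fin n₁) ℂ) (v₂ : Matrix (Fin n₃) (Fin n₁) ℂ)
    (v₃ : Matrix (Fin n₄) (Fin n₂) ℂ) (v₄ : Matrix (Fin n₄) (Fin n₃) ℂ),
    sqEval f
        ((g₂ : Matrix (Fin n₂) (Fin n₂) ℂ) * v₁ * (g₁⁻¹ : Matrix (Fin n₁) (Fin n₁) ℂ))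
        ((g₃ : Matrix (Fin n₃) (Fin n₃) ℂ) * v₂ * (g₁⁻¹ : Matrix (Fin n₁) (Fin n₁) ℂ))
        ((g₄ : Matrix (Fin n₄) (Fin n₄) ℂ) * v₃ * (g₂⁻¹ : Matrix (Fin n₂) (Fin n₂) ℂ))
        ((g₄ : Matrix (Fin n₄) (Fin n₄) ℂ) * v₄ * (g₃⁻¹ : Matrix (Fin n₃) (Fin n₃) ℂ))
      = (g₁ : Matrix (Fin n₁) (Fin n₁) ℂ).det ^ (-σ₁)
        * (g₂ : Matrix (Fin n₂) (Fin n₂) ℂ).det ^ (-σ₂)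
        * (g₃ : Matrix (Fin n₃) (Fin n₃) ℂ).det ^ (-σ₃)
        * (g₄ : Matrix (Fin n₄) (Fin n₄) ℂ).det ^ (-σ₄)
        * sqEval f v₁ v₂ v₃ v₄

lemma sq_aux_no_neg {V : Type*} (f : MvPolynomial V ℂ) (w : V → ℂ) (e : V → ℕ) (c : ℂ)
    (hc : c ≠ 0) (m : ℕ) (hm : 0 < m)
    (h : ∀ s : ℂ, s ≠ 0 → s ^ m * MvPolynomial.eval (fun u => w u * s ^ e u) f = c) :
    False := by
  set P : Polynomial ℂ :=
    MvPolynomial.eval₂ Polynomial.C (fun u => Polynomial.C (w u) * Polynomial.X ^ e u) f with hPdef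
  have hP : ∀ s : ℂ, P.eval s = MvPolynomial.eval (fun u => w u * s ^ e u) f := by
    intro s
    have h1 := MvPolynomial.eval₂_comp_left (Polynomial.evalRingHom s) Polynomial.C
      (fun u => Polynomial.C (w u) * Polynomial.X ^ e u) f
    simp only [Polynomial.coe_evalRingHom] at h1
    rw [hPdef, h1]
    have h2 : (Polynomial.evalRingHom s).comp Polynomial.C = RingHom.id ℂ := by
      ext r; simp
    have h3 : (Polynomial.eval s ∘ fun u => Polynomial.C (w u) * Polynomial.X ^ e u)
        = fun u => w u * s ^ e u := by funext u; simp
    rw [h2, h3, MvPolynomial.eval₂_id]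
  set Q : Polynomial ℂ := Polynomial.X ^ m * P - Polynomial.C c with hQdef
  have hQ0 : Q = 0 := by
    apply Polynomial.eq_zero_of_infinite_isRoot
    apply Set.Infinite.mono (s := {x : ℂ | x ≠ 0})
    · intro s hs
      simp only [Set.mem_setOf_eq, Polynomial.IsRoot, hQdef, Polynomial.eval_sub,
        Polynomial.eval_mul, Polynomial.eval_pow, Polynomial.eval_X, Polynomial.eval_C, hP]
      rw [h s hs]; ring
    · have : ({0}ᶜ : Set ℂ) = {x : ℂ | x ≠ 0} := by ext x; simp
      rw [← this]
      exact Set.Finite.infinite_compl (Set.finite_singleton 0)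
  have := congrArg (Polynomial.eval 0) hQ0
  simp only [hQdef, Polynomial.eval_sub, Polynomial.eval_mul, Polynomial.eval_pow,
    Polynomial.eval_X, Polynomial.eval_C, Polynomial.eval_zero, zero_pow hm.ne', zero_mul,
    zero_sub, neg_eq_zero] at this
  exact hc this

lemma sq_key {V : Type*} (f : MvPolynomial V ℂ) (w : V → ℂ) (e : V → ℕ) (c : ℂ)
    (hc : c ≠ 0) (n : ℕ) (hn : 1 ≤ n) (t : ℤ) (ht : t < 0)
    (h : ∀ s : ℂ, s ≠ 0 →
      MvPolynomial.eval (fun u => w u * s ^ e u) f = s ^ ((n:ℤ) * t) * c) : False := by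
  apply sq_aux_no_neg f w e c hc (n * (-t).toNat) (Nat.mul_pos hn (by omega))
  intro s hs
  rw [h s hs, ← mul_assoc]
  have h2 : (s:ℂ) ^ (n * (-t).toNat) * s ^ ((n:ℤ) * t) = 1 := by
    rw [← zpow_natCast s (n * (-t).toNat), ← zpow_add₀ hs]
    have h3 : ((n * (-t).toNat : ℕ) : ℤ) + (n:ℤ) * t = 0 := by
      push_cast
      have : ((-t).toNat : ℤ) = -t := Int.toNat_of_nonneg (by omega)
      rw [this]; ring
    rw [h3, zpow_zero]
  rw [h2, one_mul]

lemma sq_zpow_helper (s : ℂ) (n : ℕ) (t : ℤ) :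
    ((s⁻¹) ^ n) ^ (-t) = s ^ ((n:ℤ) * t) := by
  rw [inv_pow, ← zpow_natCast s n, ← zpow_neg, ← zpow_mul]
  ring_nf

lemma sq_zpow_helper2 (s : ℂ) (n : ℕ) (t : ℤ) :
    ((s) ^ n) ^ (-t) = s ^ ((n:ℤ) * (-t)) := by
  rw [← zpow_natCast s n, ← zpow_mul]

noncomputable def scUnit (n : ℕ) (s : ℂ) (hs : s ≠ 0) : (Matrix (Fin n) (Fin n) ℂ)ˣ :=
  ⟨s • 1, s⁻¹ • 1,
    by rw [smul_mul_assoc, one_mul, smul_smul, mul_inv_cancel₀ hs, one_smul],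
    by rw [smul_mul_assoc, one_mul, smul_smul, inv_mul_cancel₀ hs, one_smul]⟩

lemma scUnit_det (n : ℕ) (s : ℂ) (hs : s ≠ 0) :
    ((scUnit n s hs : Matrix (Fin n) (Fin n) ℂ)).det = s ^ n := by
  show (s • (1 : Matrix (Fin n) (Fin n) ℂ)).det = s ^ n
  rw [Matrix.det_smul, Matrix.det_one, Fintype.card_fin, mul_one]

lemma scUnit_inv_coe (n : ℕ) (s : ℂ) (hs : s ≠ 0) :
    (((scUnit n s hs)⁻¹ : (Matrix (Fin n) (Fin n) ℂ)ˣ) : Matrix (Fin n) (Fin n) ℂ)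
      = s⁻¹ • 1 := rfl

lemma scUnit_coe (n : ℕ) (s : ℂ) (hs : s ≠ 0) :
    ((scUnit n s hs : Matrix (Fin n) (Fin n) ℂ)) = s • 1 := rfl

lemma scUnit_minv (n : ℕ) (s : ℂ) (hs : s ≠ 0) :
    ((scUnit n s hs : Matrix (Fin n) (Fin n) ℂ))⁻¹ = s⁻¹ • 1 := by
  rw [← Matrix.coe_units_inv]; rfl

lemma sq_forward (n : ℕ) (hn : 1 ≤ n) (σ₁ σ₂ σ₃ σ₄ : ℤ)
    (f : MvPolynomial (SqVars n n n n) ℂ) (hf : f ≠ 0)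
    (hsi : IsSqSemiInvariant σ₁ σ₂ σ₃ σ₄ f) :
    (0 ≤ σ₁ ∧ 0 ≤ σ₁ + σ₂ ∧ 0 ≤ σ₁ + σ₃ ∧ 0 ≤ σ₁ + σ₂ + σ₃ ∧
          σ₁ + σ₂ + σ₃ + σ₄ = 0) := by
  -- a point where f does not vanish
  have hex : ∃ x : SqVars n n n n → ℂ, MvPolynomial.eval x f ≠ 0 := by
    by_contra hno
    push_neg at hno
    exact hf (MvPolynomial.funext (q := 0) (fun x => by simp [hno x]))
  obtain ⟨x, hx⟩ := hex
  set v₁ : Matrix (Fin n) (Fin n) ℂ := Matrix.of fun i j => x (Sum.inl (i, j)) with hv₁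
  set v₂ : Matrix (Fin n) (Fin n) ℂ := Matrix.of fun i j => x (Sum.inr (Sum.inl (i, j))) with hv₂
  set v₃ : Matrix (Fin n) (Fin n) ℂ :=
    Matrix.of fun i j => x (Sum.inr (Sum.inr (Sum.inl (i, j)))) with hv₃
  set v₄ : Matrix (Fin n) (Fin n) ℂ :=
    Matrix.of fun i j => x (Sum.inr (Sum.inr (Sum.inr (i, j)))) with hv₄
  have hxe : sqEval f v₁ v₂ v₃ v₄ = MvPolynomial.eval x f := by
    unfold sqEval
    refine congrArg (fun env => MvPolynomial.eval env f) (funext fun u => ?_)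
    rcases u with p | p | p | p <;> rfl
  set c : ℂ := MvPolynomial.eval x f with hcdef
  -- generic scaled evaluation identities
  have hscale : ∀ (s : ℂ) (e₁ e₂ e₃ e₄ : ℕ),
      sqEval f (s ^ e₁ • v₁) (s ^ e₂ • v₂) (s ^ e₃ • v₃) (s ^ e₄ • v₄)
        = MvPolynomial.eval (fun u => x u *
            s ^ (Sum.elim (fun _ => e₁) (Sum.elim (fun _ => e₂)
              (Sum.elim (fun _ => e₃) (fun _ => e₄))) u)) f := by
    intro s e₁ e₂ e₃ e₄
    unfold sqEval
    refine congrArg (fun env => MvPolynomial.eval env f) (funext fun u => ?_)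
    rcases u with p | p | p | p <;>
      · simp only [Sum.elim_inl, Sum.elim_inr, Matrix.smul_apply, smul_eq_mul]
        exact mul_comm _ _
  have hcomb : ∀ (s : ℂ), s ≠ 0 → ∀ a b : ℤ, s ^ a * s ^ b = s ^ (a + b) :=
    fun s hs a b => (zpow_add₀ hs a b).symm
  -- σ₁ ≥ 0
  have c1 : 0 ≤ σ₁ := by
    by_contra hcon
    push_neg at hcon
    refine sq_key f x (Sum.elim (fun _ => (1:ℕ))
      (Sum.elim (fun _ => 1) (Sum.elim (fun _ => 0) fun _ => 0))) c hx n hn σ₁ hcon ?_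
    intro s hs
    rw [← hscale s 1 1 0 0]
    simp only [pow_one, pow_zero, one_smul]
    have hs' : s⁻¹ ≠ 0 := inv_ne_zero hs
    have H := hsi (scUnit n s⁻¹ hs') 1 1 1 v₁ v₂ v₃ v₄
    simp only [scUnit_det n s⁻¹ hs', scUnit_minv n s⁻¹ hs', inv_inv] at H
    simp only [inv_one, Units.val_one, Matrix.det_one, one_zpow, one_mul, mul_one,
      mul_smul_comm] at H
    rw [sq_zpow_helper, hxe] at H
    exact H
  have c2 : 0 ≤ σ₁ + σ₂ := by
    by_contra hcon
    push_neg at hcon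
    refine sq_key f x (Sum.elim (fun _ => (0:ℕ))
      (Sum.elim (fun _ => 1) (Sum.elim (fun _ => 1) fun _ => 0))) c hx n hn (σ₁ + σ₂) hcon ?_
    intro s hs
    rw [← hscale s 0 1 1 0]
    simp only [pow_one, pow_zero, one_smul]
    have hs' : s⁻¹ ≠ 0 := inv_ne_zero hs
    have H := hsi (scUnit n s⁻¹ hs') (scUnit n s⁻¹ hs') 1 1 v₁ v₂ v₃ v₄
    simp only [scUnit_det n s⁻¹ hs', scUnit_minv n s⁻¹ hs', inv_inv] at H
    simp only [scUnit_coe n s⁻¹ hs', inv_one, Units.val_one, Matrix.det_one, one_zpow,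
      one_mul, mul_one, mul_smul_comm, smul_mul_assoc, smul_smul,
      inv_mul_cancel₀ hs, mul_inv_cancel₀ hs, one_smul] at H
    rw [sq_zpow_helper, sq_zpow_helper, hxe, hcomb s hs, show (n:ℤ)*σ₁ + (n:ℤ)*σ₂
      = (n:ℤ)*(σ₁+σ₂) by ring] at H
    exact H
  have c3 : 0 ≤ σ₁ + σ₃ := by
    by_contra hcon
    push_neg at hcon
    refine sq_key f x (Sum.elim (fun _ => (1:ℕ))
      (Sum.elim (fun _ => 0) (Sum.elim (fun _ => 0) fun _ => 1))) c hx n hn (σ₁ + σ₃) hcon ?_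
    intro s hs
    rw [← hscale s 1 0 0 1]
    simp only [pow_one, pow_zero, one_smul]
    have hs' : s⁻¹ ≠ 0 := inv_ne_zero hs
    have H := hsi (scUnit n s⁻¹ hs') 1 (scUnit n s⁻¹ hs') 1 v₁ v₂ v₃ v₄
    simp only [scUnit_det n s⁻¹ hs', scUnit_minv n s⁻¹ hs', inv_inv] at H
    simp only [scUnit_coe n s⁻¹ hs', inv_one, Units.val_one, Matrix.det_one, one_zpow,
      one_mul, mul_one, mul_smul_comm, smul_mul_assoc, smul_smul,
      inv_mul_cancel₀ hs, mul_inv_cancel₀ hs, one_smul] at H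
    rw [sq_zpow_helper, sq_zpow_helper, hxe, hcomb s hs, show (n:ℤ)*σ₁ + (n:ℤ)*σ₃
      = (n:ℤ)*(σ₁+σ₃) by ring] at H
    exact H
  have c4 : 0 ≤ σ₁ + σ₂ + σ₃ := by
    by_contra hcon
    push_neg at hcon
    refine sq_key f x (Sum.elim (fun _ => (0:ℕ))
      (Sum.elim (fun _ => 0) (Sum.elim (fun _ => 1) fun _ => 1))) c hx n hn (σ₁ + σ₂ + σ₃) hcon ?_
    intro s hs
    rw [← hscale s 0 0 1 1]
    simp only [pow_one, pow_zero, one_smul]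
    have hs' : s⁻¹ ≠ 0 := inv_ne_zero hs
    have H := hsi (scUnit n s⁻¹ hs') (scUnit n s⁻¹ hs') (scUnit n s⁻¹ hs') 1 v₁ v₂ v₃ v₄
    simp only [scUnit_det n s⁻¹ hs', scUnit_minv n s⁻¹ hs', inv_inv] at H
    simp only [scUnit_coe n s⁻¹ hs', inv_one, Units.val_one, Matrix.det_one, one_zpow,
      one_mul, mul_one, mul_smul_comm, smul_mul_assoc, smul_smul,
      inv_mul_cancel₀ hs, mul_inv_cancel₀ hs, one_smul] at H
    rw [sq_zpow_helper, sq_zpow_helper, sq_zpow_helper, hxe, hcomb s hs, hcomb s hs,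
      show (n:ℤ)*σ₁ + (n:ℤ)*σ₂ + (n:ℤ)*σ₃ = (n:ℤ)*(σ₁+σ₂+σ₃) by ring] at H
    exact H
  have c5a : ¬ (σ₁ + σ₂ + σ₃ + σ₄ < 0) := by
    intro hcon
    refine sq_key f x (Sum.elim (fun _ => (0:ℕ))
      (Sum.elim (fun _ => 0) (Sum.elim (fun _ => 0) fun _ => 0))) c hx n hn
      (σ₁ + σ₂ + σ₃ + σ₄) hcon ?_
    intro s hs
    rw [← hscale s 0 0 0 0]
    simp only [pow_zero, one_smul]
    have hs' : s⁻¹ ≠ 0 := inv_ne_zero hs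
    have H := hsi (scUnit n s⁻¹ hs') (scUnit n s⁻¹ hs') (scUnit n s⁻¹ hs')
      (scUnit n s⁻¹ hs') v₁ v₂ v₃ v₄
    simp only [scUnit_det n s⁻¹ hs', scUnit_minv n s⁻¹ hs', inv_inv] at H
    simp only [scUnit_coe n s⁻¹ hs', inv_one, Units.val_one, Matrix.det_one, one_zpow,
      one_mul, mul_one, mul_smul_comm, smul_mul_assoc, smul_smul,
      inv_mul_cancel₀ hs, mul_inv_cancel₀ hs, one_smul] at H
    rw [sq_zpow_helper, sq_zpow_helper, sq_zpow_helper, sq_zpow_helper, hxe,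
      hcomb s hs, hcomb s hs, hcomb s hs,
      show (n:ℤ)*σ₁ + (n:ℤ)*σ₂ + (n:ℤ)*σ₃ + (n:ℤ)*σ₄ = (n:ℤ)*(σ₁+σ₂+σ₃+σ₄) by ring] at H
    exact hxe.trans H
  have c5b : ¬ (0 < σ₁ + σ₂ + σ₃ + σ₄) := by
    intro hcon
    refine sq_key f x (Sum.elim (fun _ => (0:ℕ))
      (Sum.elim (fun _ => 0) (Sum.elim (fun _ => 0) fun _ => 0))) c hx n hn
      (-(σ₁ + σ₂ + σ₃ + σ₄)) (by omega) ?_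
    intro s hs
    rw [← hscale s 0 0 0 0]
    simp only [pow_zero, one_smul]
    have H := hsi (scUnit n s hs) (scUnit n s hs) (scUnit n s hs) (scUnit n s hs) v₁ v₂ v₃ v₄
    simp only [scUnit_det n s hs, scUnit_minv n s hs] at H
    simp only [scUnit_coe n s hs, inv_one, Units.val_one, Matrix.det_one, one_zpow,
      one_mul, mul_one, mul_smul_comm, smul_mul_assoc, smul_smul,
      inv_mul_cancel₀ hs, mul_inv_cancel₀ hs, one_smul] at H
    rw [sq_zpow_helper2, sq_zpow_helper2, sq_zpow_helper2, sq_zpow_helper2, hxe,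
      hcomb s hs, hcomb s hs, hcomb s hs,
      show (n:ℤ)*(-σ₁) + (n:ℤ)*(-σ₂) + (n:ℤ)*(-σ₃) + (n:ℤ)*(-σ₄)
        = (n:ℤ)*(-(σ₁+σ₂+σ₃+σ₄)) by ring] at H
    exact hxe.trans H
  exact ⟨c1, c2, c3, c4, by omega⟩

noncomputable def sqEnv {n₁ n₂ n₃ n₄ : ℕ}
    (v₁ : Matrix (Fin n₂) (Fin n₁) ℂ) (v₂ : Matrix (Fin n₃) (Fin n₁) ℂ)
    (v₃ : Matrix (Fin n₄) (Fin n₂) ℂ) (v₄ : Matrix (Fin n₄) (Fin n₃) ℂ) :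
    SqVars n₁ n₂ n₃ n₄ → ℂ :=
  Sum.elim (fun p => v₁ p.1 p.2) <| Sum.elim (fun p => v₂ p.1 p.2) <|
      Sum.elim (fun p => v₃ p.1 p.2) (fun p => v₄ p.1 p.2)

lemma sqEval_eq {n₁ n₂ n₃ n₄ : ℕ} (f : MvPolynomial (SqVars n₁ n₂ n₃ n₄) ℂ)
    (v₁ : Matrix (Fin n₂) (Fin n₁) ℂ) (v₂ : Matrix (Fin n₃) (Fin n₁) ℂ)
    (v₃ : Matrix (Fin n₄) (Fin n₂) ℂ) (v₄ : Matrix (Fin n₄) (Fin n₃) ℂ) :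
    sqEval f v₁ v₂ v₃ v₄ = MvPolynomial.eval (sqEnv v₁ v₂ v₃ v₄) f := rfl

noncomputable def sqD1 (n : ℕ) : MvPolynomial (SqVars n n n n) ℂ :=
  (Matrix.of fun i j : Fin n => MvPolynomial.X (Sum.inl (i, j))).det
noncomputable def sqD2 (n : ℕ) : MvPolynomial (SqVars n n n n) ℂ :=
  (Matrix.of fun i j : Fin n => MvPolynomial.X (Sum.inr (Sum.inl (i, j)))).det
noncomputable def sqD3 (n : ℕ) : MvPolynomial (SqVars n n n n) ℂ :=
  (Matrix.of fun i j : Fin n => MvPolynomial.X (Sum.inr (Sum.inr (Sum.inl (i, j))))).det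
noncomputable def sqD4 (n : ℕ) : MvPolynomial (SqVars n n n n) ℂ :=
  (Matrix.of fun i j : Fin n => MvPolynomial.X (Sum.inr (Sum.inr (Sum.inr (i, j))))).det

lemma sqD_eval (n : ℕ) (v₁ v₂ v₃ v₄ : Matrix (Fin n) (Fin n) ℂ) :
    MvPolynomial.eval (sqEnv v₁ v₂ v₃ v₄) (sqD1 n) = v₁.det ∧
    MvPolynomial.eval (sqEnv v₁ v₂ v₃ v₄) (sqD2 n) = v₂.det ∧
    MvPolynomial.eval (sqEnv v₁ v₂ v₃ v₄) (sqD3 n) = v₃.det ∧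
    MvPolynomial.eval (sqEnv v₁ v₂ v₃ v₄) (sqD4 n) = v₄.det := by
  refine ⟨?_, ?_, ?_, ?_⟩ <;>
  · simp only [sqD1, sqD2, sqD3, sqD4, RingHom.map_det]
    congr 1
    ext i j
    simp [sqEnv]

lemma sq_weight_calc (d₁ d₂ d₃ d₄ w₁ w₂ w₃ w₄ : ℂ) (h₁ : d₁ ≠ 0) (h₂ : d₂ ≠ 0)
    (h₃ : d₃ ≠ 0) (h₄ : d₄ ≠ 0) (α β γ δ : ℕ) (σ₁ σ₂ σ₃ σ₄ : ℤ)
    (e1 : (α:ℤ) + β = σ₁) (e2 : (γ:ℤ) - α = σ₂) (e3 : (δ:ℤ) - β = σ₃)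
    (e4 : -(γ:ℤ) - δ = σ₄) :
    (d₂ * w₁ * d₁⁻¹) ^ α * (d₃ * w₂ * d₁⁻¹) ^ β * (d₄ * w₃ * d₂⁻¹) ^ γ
        * (d₄ * w₄ * d₃⁻¹) ^ δ
      = d₁ ^ (-σ₁) * d₂ ^ (-σ₂) * d₃ ^ (-σ₃) * d₄ ^ (-σ₄)
        * (w₁ ^ α * w₂ ^ β * w₃ ^ γ * w₄ ^ δ) := by
  subst e1 e2 e3 e4
  rw [show -((α:ℤ) + β) = -(((α + β : ℕ)):ℤ) by push_cast; ring,
    show -((γ:ℤ) - α) = (α:ℤ) - γ by ring,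
    show -((δ:ℤ) - β) = (β:ℤ) - δ by ring,
    show -(-(γ:ℤ) - δ) = (((γ + δ : ℕ)):ℤ) by push_cast; ring,
    zpow_neg, zpow_natCast, zpow_sub₀ h₂, zpow_sub₀ h₃, zpow_natCast,
    zpow_natCast, zpow_natCast, zpow_natCast, zpow_natCast]
  simp only [mul_pow, inv_pow, pow_add]
  field_simp

lemma sq_reverse (n : ℕ) (σ₁ σ₂ σ₃ σ₄ : ℤ)
    (h1 : 0 ≤ σ₁) (h2 : 0 ≤ σ₁ + σ₂) (h3 : 0 ≤ σ₁ + σ₃) (h4 : 0 ≤ σ₁ + σ₂ + σ₃)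
    (h5 : σ₁ + σ₂ + σ₃ + σ₄ = 0) :
    ∃ f : MvPolynomial (SqVars n n n n) ℂ, f ≠ 0 ∧ IsSqSemiInvariant σ₁ σ₂ σ₃ σ₄ f := by
  set α : ℕ := (-σ₂).toNat with hα
  set β : ℕ := (σ₁ - (α:ℤ)).toNat with hβ
  set γ : ℕ := (σ₂ + (α:ℤ)).toNat with hγ
  set δ : ℕ := (σ₃ + (β:ℤ)).toNat with hδ
  have e1 : (α:ℤ) + β = σ₁ := by omega
  have e2 : (γ:ℤ) - α = σ₂ := by omega
  have e3 : (δ:ℤ) - β = σ₃ := by omega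
  have e4 : -(γ:ℤ) - δ = σ₄ := by omega
  refine ⟨sqD1 n ^ α * sqD2 n ^ β * sqD3 n ^ γ * sqD4 n ^ δ, ?_, ?_⟩
  · intro hzero
    have h0 := congrArg (MvPolynomial.eval
      (sqEnv (1 : Matrix (Fin n) (Fin n) ℂ) 1 1 1)) hzero
    obtain ⟨q1, q2, q3, q4⟩ := sqD_eval n (1 : Matrix (Fin n) (Fin n) ℂ) 1 1 1
    rw [map_mul, map_mul, map_mul, map_pow, map_pow, map_pow, map_pow,
      q1, q2, q3, q4, Matrix.det_one] at h0
    simp at h0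
  · intro g₁ g₂ g₃ g₄ v₁ v₂ v₃ v₄
    have expand : ∀ (w₁ w₂ w₃ w₄ : Matrix (Fin n) (Fin n) ℂ),
        sqEval (sqD1 n ^ α * sqD2 n ^ β * sqD3 n ^ γ * sqD4 n ^ δ) w₁ w₂ w₃ w₄
          = w₁.det ^ α * w₂.det ^ β * w₃.det ^ γ * w₄.det ^ δ := by
      intro w₁ w₂ w₃ w₄
      obtain ⟨q1, q2, q3, q4⟩ := sqD_eval n w₁ w₂ w₃ w₄
      rw [sqEval_eq, map_mul, map_mul, map_mul, map_pow, map_pow, map_pow, map_pow,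
        q1, q2, q3, q4]
    rw [expand, expand]
    have hd₁ : ((g₁ : Matrix (Fin n) (Fin n) ℂ)).det ≠ 0 :=
      ((Matrix.isUnit_iff_isUnit_det _).mp g₁.isUnit).ne_zero
    have hd₂ : ((g₂ : Matrix (Fin n) (Fin n) ℂ)).det ≠ 0 :=
      ((Matrix.isUnit_iff_isUnit_det _).mp g₂.isUnit).ne_zero
    have hd₃ : ((g₃ : Matrix (Fin n) (Fin n) ℂ)).det ≠ 0 :=
      ((Matrix.isUnit_iff_isUnit_det _).mp g₃.isUnit).ne_zero
    have hd₄ : ((g₄ : Matrix (Fin n) (Fin n) ℂ)).det ≠ 0 :=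
      ((Matrix.isUnit_iff_isUnit_det _).mp g₄.isUnit).ne_zero
    have hinv : ∀ g : (Matrix (Fin n) (Fin n) ℂ)ˣ,
        (((g : Matrix (Fin n) (Fin n) ℂ))⁻¹).det = ((g : Matrix (Fin n) (Fin n) ℂ)).det⁻¹ := by
      intro g
      rw [Matrix.det_nonsing_inv, Ring.inverse_eq_inv']
    simp only [Matrix.det_mul, hinv]
    exact sq_weight_calc _ _ _ _ _ _ _ _ hd₁ hd₂ hd₃ hd₄ α β γ δ σ₁ σ₂ σ₃ σ₄ e1 e2 e3 e4


/-- for the square quiver with dimension vector `(n, n, n, n)`, a weight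
`(σ₁, σ₂, σ₃, σ₄)` admits a nonzero semi-invariant iff `σ₁ ≥ 0`, `σ₁ + σ₂ ≥ 0`,
`σ₁ + σ₃ ≥ 0`, `σ₁ + σ₂ + σ₃ ≥ 0`, and `σ₁ + σ₂ + σ₃ + σ₄ = 0`. -/
theorem sq_semiinvariant_iff_nnnn (n : ℕ) (hn : 1 ≤ n) (σ₁ σ₂ σ₃ σ₄ : ℤ) :
    (∃ f : MvPolynomial (SqVars n n n n) ℂ, f ≠ 0 ∧ IsSqSemiInvariant σ₁ σ₂ σ₃ σ₄ f)
      ↔ (0 ≤ σ₁ ∧ 0 ≤ σ₁ + σ₂ ∧ 0 ≤ σ₁ + σ₃ ∧ 0 ≤ σ₁ + σ₂ + σ₃ ∧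
          σ₁ + σ₂ + σ₃ + σ₄ = 0) := by
  constructor
  · rintro ⟨f, hf, hsi⟩
    exact sq_forward n hn σ₁ σ₂ σ₃ σ₄ f hf hsi
  · rintro ⟨h1, h2, h3, h4, h5⟩
    exact sq_reverse n σ₁ σ₂ σ₃ σ₄ h1 h2 h3 h4 h5
end
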